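/- arXiv:2208.11104 — 9 statements merged into one kernel-verified Lean document; each statement's English description precedes it below -/
import Mathlib

section
/- Let 0 < α < 1 and let a < b < c be real numbers. Then the integral ∫_a^b (c − s)^{−α} (s − (a+b)/2) ds is strictly positive. -/
open intervalIntegral

/-- For `0 < α < 1` and `a < b < c`, the integral
`∫_a^b (c - s)^{-α} (s - (a+b)/2) ds` is strictly positive. -/
theorem stmt3 (α a b c : ℝ) (hα0 : 0 < α) (hα1 : α < 1) (hab : a < b) (hbc : b < c) :
    0 < ∫ s in a..b, (c - s) ^ (-α) * (s - (a + b) / 2) := by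
  set m : ℝ := (a + b) / 2 with hm
  have ham : a < m := by rw [hm]; linarith
  have hmb : m < b := by rw [hm]; linarith
  set K : ℝ := (c - m) ^ (-α) with hK
  -- continuity of the shifted integrand on any interval inside (-∞, b]
  have hcont : ∀ x y : ℝ, x ≤ b → y ≤ b →
      ContinuousOn (fun s : ℝ => ((c - s) ^ (-α) - K) * (s - m)) (Set.uIcc x y) := by
    intro x y hx hy
    have h1 : ContinuousOn (fun s : ℝ => (c - s) ^ (-α)) (Set.uIcc x y) := by
      apply ContinuousOn.rpow_const
      · exact (continuous_const.sub continuous_id).continuousOn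
      · intro s hs
        left
        have : s ≤ b := by
          rcases Set.mem_uIcc.1 hs with h | h
          · exact le_trans h.2 (by simpa using hy)
          · exact le_trans h.2 (by simpa using hx)
        intro h0; nlinarith
    exact ((h1.sub continuousOn_const).mul ((continuous_id.sub continuous_const).continuousOn))
  have hint : ∀ x y : ℝ, x ≤ b → y ≤ b →
      IntervalIntegrable (fun s : ℝ => ((c - s) ^ (-α) - K) * (s - m)) MeasureTheory.volume x y :=
    fun x y hx hy => (hcont x y hx hy).intervalIntegrable
  -- the integral of K * (s - m) vanishes
  have hzero : (∫ s in a..b, K * (s - m)) = 0 := by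
    rw [intervalIntegral.integral_const_mul]
    have : (∫ s in a..b, (s - m)) = (∫ s in a..b, s) - (∫ _ in a..b, m) := by
      apply intervalIntegral.integral_sub
      · exact (continuous_id.intervalIntegrable _ _)
      · exact intervalIntegrable_const
    rw [this, integral_id, intervalIntegral.integral_const, hm, smul_eq_mul]
    ring
  -- rewrite the goal
  have hsplit : (∫ s in a..b, (c - s) ^ (-α) * (s - m))
      = ∫ s in a..b, ((c - s) ^ (-α) - K) * (s - m) := by
    have : (∫ s in a..b, ((c - s) ^ (-α) - K) * (s - m))
        = (∫ s in a..b, (c - s) ^ (-α) * (s - m)) - ∫ s in a..b, K * (s - m) := by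
      rw [← intervalIntegral.integral_sub]
      · congr 1; ext s; ring
      · have := hint a b hab.le le_rfl
        have hc : ContinuousOn (fun s : ℝ => (c - s) ^ (-α) * (s - m)) (Set.uIcc a b) := by
          have := hcont a b hab.le le_rfl
          have h2 : (fun s : ℝ => (c - s) ^ (-α) * (s - m))
              = fun s => ((c - s) ^ (-α) - K) * (s - m) + K * (s - m) := by ext s; ring
          rw [h2]
          exact this.add (continuousOn_const.mul ((continuous_id.sub continuous_const).continuousOn))
        exact hc.intervalIntegrable
      · exact (continuous_const.mul (continuous_id.sub continuous_const)).intervalIntegrable _ _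
    rw [this, hzero, sub_zero]
  rw [hsplit]
  -- split at m
  have hsum : (∫ s in a..b, ((c - s) ^ (-α) - K) * (s - m))
      = (∫ s in a..m, ((c - s) ^ (-α) - K) * (s - m))
        + ∫ s in m..b, ((c - s) ^ (-α) - K) * (s - m) :=
    (intervalIntegral.integral_add_adjacent_intervals
      (hint a m hab.le hmb.le) (hint m b hmb.le le_rfl)).symm
  rw [hsum]
  have hmc : 0 < c - m := by linarith
  have h1 : 0 ≤ ∫ s in a..m, ((c - s) ^ (-α) - K) * (s - m) := by
    apply intervalIntegral.integral_nonneg ham.le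
    intro s hs
    have hs1 : a ≤ s := hs.1
    have hs2 : s ≤ m := hs.2
    have hle : (c - s) ^ (-α) ≤ K := by
      rw [hK]
      exact Real.rpow_le_rpow_of_nonpos hmc (by linarith) (by linarith)
    nlinarith
  have h2 : 0 < ∫ s in m..b, ((c - s) ^ (-α) - K) * (s - m) := by
    apply intervalIntegral.intervalIntegral_pos_of_pos_on (hint m b hmb.le le_rfl) _ hmb
    intro s hs
    have hs1 : m < s := hs.1
    have hs2 : s < b := hs.2
    have hlt : K < (c - s) ^ (-α) := by
      rw [hK]
      exact Real.rpow_lt_rpow_of_neg (by linarith) (by linarith) (by linarith)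
    nlinarith
  linarith
end

section
/- For the L2-1_σ weights on the graded mesh with σ = 1 − α/2, one has for every n with 2 ≤ n ≤ N the upper bound c_{n,n} ≤ τ_n^{−α} [ (1−σ)^{1−α}/Γ(2−α) + (α/(6Γ(1−α))) (1−σ)^{−(1+α)} ]. -/
open MeasureTheory

/-- The graded temporal mesh `t_n = T (n/N)^r` on `[0,T]`. -/
noncomputable def meshT (T r : ℝ) (N : ℕ) (n : ℕ) : ℝ := T * ((n : ℝ) / (N : ℝ)) ^ r

/-- The time steps `τ_n = t_n - t_{n-1}`. -/
noncomputable def meshTau (T r : ℝ) (N : ℕ) (n : ℕ) : ℝ := meshT T r N n - meshT T r N (n - 1)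

/-- The intermediate points `t_{n-σ} = (1-σ) t_n + σ t_{n-1}`. -/
noncomputable def meshTSig (T r σ : ℝ) (N : ℕ) (n : ℕ) : ℝ :=
  (1 - σ) * meshT T r N n + σ * meshT T r N (n - 1)

/-- The coefficients `a_{n,j}` of the L2-1_σ scheme:
`a_{n,j} = (1/Γ(1-α)) ∫_{t_{j-1}}^{t_j} (t_{n-σ}-s)^{-α} ds` for `j ≤ n-1`, and
`a_{n,n} = (1/Γ(1-α)) ∫_{t_{n-1}}^{t_{n-σ}} (t_{n-σ}-s)^{-α} ds`. -/
noncomputable def wA (T r α σ : ℝ) (N : ℕ) (n j : ℕ) : ℝ :=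
  if j = n then
    (1 / Real.Gamma (1 - α)) *
      ∫ s in (meshT T r N (n - 1))..(meshTSig T r σ N n), (meshTSig T r σ N n - s) ^ (-α)
  else
    (1 / Real.Gamma (1 - α)) *
      ∫ s in (meshT T r N (j - 1))..(meshT T r N j), (meshTSig T r σ N n - s) ^ (-α)

/-- The coefficients `b_{n,j}` of the L2-1_σ scheme:
`b_{n,j} = (2/(t_{j+1}-t_{j-1})) (1/Γ(1-α)) ∫_{t_{j-1}}^{t_j} (t_{n-σ}-s)^{-α}
(s - (t_{j-1}+t_j)/2) ds`. -/
noncomputable def wB (T r α σ : ℝ) (N : ℕ) (n j : ℕ) : ℝ :=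
  (2 / (meshT T r N (j + 1) - meshT T r N (j - 1))) * (1 / Real.Gamma (1 - α)) *
    ∫ s in (meshT T r N (j - 1))..(meshT T r N j),
      (meshTSig T r σ N n - s) ^ (-α) * (s - (meshT T r N (j - 1) + meshT T r N j) / 2)

/-- The L2-1_σ weights `c_{n,j}`: `c_{1,1} = τ_1^{-1} a_{1,1}`, and for `n ≥ 2`:
`c_{n,1} = τ_1^{-1}(a_{n,1} - b_{n,1})`,
`c_{n,j} = τ_j^{-1}(a_{n,j} - b_{n,j} + b_{n,j-1})` for `2 ≤ j ≤ n-1`, and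
`c_{n,n} = τ_n^{-1}(a_{n,n} + b_{n,n-1})`. -/
noncomputable def wC (T r α σ : ℝ) (N : ℕ) (n j : ℕ) : ℝ :=
  if n = 1 then (meshTau T r N 1)⁻¹ * wA T r α σ N 1 1
  else if j = n then (meshTau T r N n)⁻¹ * (wA T r α σ N n n + wB T r α σ N n (n - 1))
  else if j = 1 then (meshTau T r N 1)⁻¹ * (wA T r α σ N n 1 - wB T r α σ N n 1)
  else (meshTau T r N j)⁻¹ * (wA T r α σ N n j - wB T r α σ N n j + wB T r α σ N n (j - 1))

/-! ### Auxiliary lemmas -/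

/-- Exact value of the `a_{n,n}` integral. -/
lemma aux_integral_a (t1 δ α : ℝ) (hα1 : α < 1) :
    ∫ s in t1..(t1 + δ), (t1 + δ - s) ^ (-α) = δ ^ (1 - α) / (1 - α) := by
  have h := intervalIntegral.integral_comp_sub_left (a := t1) (b := t1 + δ)
    (fun x => x ^ (-α)) (t1 + δ)
  rw [h]
  have h2 : t1 + δ - t1 = δ := by ring
  have h3 : t1 + δ - (t1 + δ) = 0 := by ring
  rw [h2, h3, integral_rpow (Or.inl (by linarith))]
  rw [Real.zero_rpow (by linarith)]
  ring_nf

/-- Lipschitz bound for `x ↦ x^{-α}` on `[δ, ∞)`. -/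
lemma aux_lip (δ α x y : ℝ) (hδ : 0 < δ) (hα0 : 0 < α) (hx : δ ≤ x) (hy : δ ≤ y) :
    |x ^ (-α) - y ^ (-α)| ≤ α * δ ^ (-α - 1) * |x - y| := by
  have key := Convex.norm_image_sub_le_of_norm_deriv_le (f := fun x : ℝ => x ^ (-α))
    (s := Set.Ici δ) (C := α * δ ^ (-α - 1)) (x := y) (y := x)
    (fun z hz => by
      have hz0 : z ≠ 0 := (lt_of_lt_of_le hδ hz).ne'
      exact (Real.hasDerivAt_rpow_const (Or.inl hz0)).differentiableAt)
    (fun z hz => by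
      have hz0 : 0 < z := lt_of_lt_of_le hδ hz
      rw [(Real.hasDerivAt_rpow_const (p := -α) (Or.inl hz0.ne')).deriv]
      rw [Real.norm_eq_abs, abs_mul, abs_neg, abs_of_pos hα0,
        abs_of_nonneg (Real.rpow_nonneg hz0.le _)]
      exact mul_le_mul_of_nonneg_left
        (Real.rpow_le_rpow_of_nonpos hδ hz (by linarith)) hα0.le)
    (convex_Ici δ) hy hx
  simpa [Real.norm_eq_abs] using key

/-- Bound on the `b_{n,n-1}` integral. -/
lemma aux_integral_b (t2 t1 c δ α : ℝ) (h21 : t2 ≤ t1) (hδ : 0 < δ) (hc : δ ≤ c - t1)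
    (hα0 : 0 < α) :
    ∫ s in t2..t1, (c - s) ^ (-α) * (s - (t2 + t1) / 2) ≤
      α * δ ^ (-α - 1) * (t1 - t2) ^ 3 / 12 := by
  have lipB : ∀ x y : ℝ, δ ≤ x → δ ≤ y →
      |x ^ (-α) - y ^ (-α)| ≤ α * δ ^ (-α - 1) * |x - y| :=
    fun x y hx hy => aux_lip δ α x y hδ hα0 hx hy
  set m : ℝ := (t2 + t1) / 2 with hm
  set L : ℝ := α * δ ^ (-α - 1) with hL
  have hmem : ∀ s ∈ Set.Icc t2 t1, δ ≤ c - s := fun s hs => by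
    have := hs.2; linarith
  have hmm : m ∈ Set.Icc t2 t1 := by constructor <;> (simp only [hm]; linarith)
  have hgc : ContinuousOn (fun s => (c - s) ^ (-α)) (Set.Icc t2 t1) := by
    apply ContinuousOn.rpow_const ((continuous_const.sub continuous_id).continuousOn)
    intro s hs
    exact Or.inl (lt_of_lt_of_le hδ (hmem s hs)).ne'
  have huIcc : Set.uIcc t2 t1 = Set.Icc t2 t1 := Set.uIcc_of_le h21
  have h1 : IntervalIntegrable (fun s => (c - s) ^ (-α) * (s - m)) volume t2 t1 := by
    apply ContinuousOn.intervalIntegrable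
    rw [huIcc]
    exact hgc.mul ((continuous_id.sub continuous_const).continuousOn)
  have h2 : IntervalIntegrable (fun s => ((c - s) ^ (-α) - (c - m) ^ (-α)) * (s - m))
      volume t2 t1 := by
    apply ContinuousOn.intervalIntegrable
    rw [huIcc]
    exact (hgc.sub continuousOn_const).mul ((continuous_id.sub continuous_const).continuousOn)
  have h3 : IntervalIntegrable (fun s => L * (s - m) ^ 2) volume t2 t1 := by
    apply Continuous.intervalIntegrable; continuity
  have hzero : (∫ s in t2..t1, (s - m)) = 0 := by
    rw [intervalIntegral.integral_comp_sub_right (fun x => x) m, integral_id, hm]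
    ring
  have hsq : (∫ s in t2..t1, (s - m) ^ 2) = (t1 - t2) ^ 3 / 12 := by
    rw [intervalIntegral.integral_comp_sub_right (fun x => x ^ 2) m, integral_pow, hm]
    push_cast
    ring
  have hsplit : (∫ s in t2..t1, (c - s) ^ (-α) * (s - m)) =
      ∫ s in t2..t1, ((c - s) ^ (-α) - (c - m) ^ (-α)) * (s - m) := by
    have : (∫ s in t2..t1, ((c - s) ^ (-α) - (c - m) ^ (-α)) * (s - m)) =
        (∫ s in t2..t1, (c - s) ^ (-α) * (s - m)) -
          (c - m) ^ (-α) * ∫ s in t2..t1, (s - m) := by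
      rw [← intervalIntegral.integral_const_mul, ← intervalIntegral.integral_sub h1]
      · apply intervalIntegral.integral_congr; intro s _; ring
      · apply Continuous.intervalIntegrable; continuity
    rw [this, hzero]; ring
  have hmono : (∫ s in t2..t1, ((c - s) ^ (-α) - (c - m) ^ (-α)) * (s - m)) ≤
      ∫ s in t2..t1, L * (s - m) ^ 2 := by
    apply intervalIntegral.integral_mono_on h21 h2 h3
    intro s hs
    have hb := lipB (c - s) (c - m) (hmem s hs) (hmem m hmm)
    calc ((c - s) ^ (-α) - (c - m) ^ (-α)) * (s - m)
        ≤ |((c - s) ^ (-α) - (c - m) ^ (-α)) * (s - m)| := le_abs_self _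
      _ = |(c - s) ^ (-α) - (c - m) ^ (-α)| * |s - m| := abs_mul _ _
      _ ≤ (L * |c - s - (c - m)|) * |s - m| := by
          apply mul_le_mul_of_nonneg_right hb (abs_nonneg _)
      _ = L * (s - m) ^ 2 := by
          rw [show c - s - (c - m) = -(s - m) by ring, abs_neg, ← sq_abs]
          ring
  calc (∫ s in t2..t1, (c - s) ^ (-α) * (s - m)) ≤ ∫ s in t2..t1, L * (s - m) ^ 2 := by
        rw [hsplit]; exact hmono
    _ = L * (t1 - t2) ^ 3 / 12 := by
        rw [intervalIntegral.integral_const_mul, hsq]; ring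

lemma aux_first (τ α σ G : ℝ) (hτ : 0 < τ) (hα0 : 0 < α) (hα1 : α < 1)
    (h1σ : 0 < 1 - σ) (hG : 0 < G) :
    τ⁻¹ * (1 / G * (((1 - σ) * τ) ^ ((1:ℝ) - α) / (1 - α))) =
      τ ^ (-α) * ((1 - σ) ^ ((1:ℝ) - α) / ((1 - α) * G)) := by
  have hmul : τ ^ ((1:ℝ) - α) = τ ^ (-α) * τ := by
    rw [show ((1:ℝ) - α) = -α + 1 by ring, Real.rpow_add hτ, Real.rpow_one]
  have h1α : (1:ℝ) - α ≠ 0 := by intro h; linarith [h]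
  rw [Real.mul_rpow h1σ.le hτ.le, hmul]
  field_simp

lemma aux_final (τ τ' α σ G : ℝ) (hτ : 0 < τ) (hτ' : 0 ≤ τ') (hstep : τ' ≤ τ)
    (hα0 : 0 < α) (h1σ : 0 < 1 - σ) (hG : 0 < G) :
    τ⁻¹ * (2 / (τ + τ') * (1 / G) * (α * ((1 - σ) * τ) ^ (-α - 1) * τ' ^ 3 / 12)) ≤
      τ ^ (-α) * (α / (6 * G) * (1 - σ) ^ (-(1 + α))) := by
  have hδexp : ((1 - σ) * τ) ^ (-α - 1) = (1 - σ) ^ (-(1 + α)) * (τ ^ (-α) * τ⁻¹) := by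
    rw [Real.mul_rpow h1σ.le hτ.le, show (-α - 1 : ℝ) = -(1 + α) by ring]
    congr 1
    rw [show (-(1 + α) : ℝ) = (-α) + (-1) by ring, Real.rpow_add hτ, Real.rpow_neg_one]
  rw [hδexp]
  have hττ' : (0:ℝ) < τ + τ' := by linarith
  have hτ0 : τ ≠ 0 := hτ.ne'
  have hττ'0 : τ + τ' ≠ 0 := hττ'.ne'
  have hG0 : G ≠ 0 := hG.ne'
  have hkey : τ' ^ 3 ≤ τ ^ 2 * (τ + τ') := by
    nlinarith [mul_nonneg (mul_nonneg hτ' (sub_nonneg.mpr hstep))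
      (by linarith : (0:ℝ) ≤ τ + τ')]
  have hτΓ : (0:ℝ) < τ ^ (-α) := Real.rpow_pos_of_pos hτ _
  have h1σp : (0:ℝ) < (1 - σ) ^ (-(1 + α)) := Real.rpow_pos_of_pos h1σ _
  rw [show τ⁻¹ * (2 / (τ + τ') * (1 / G) *
        (α * ((1 - σ) ^ (-(1 + α)) * (τ ^ (-α) * τ⁻¹)) * τ' ^ 3 / 12)) =
      (τ ^ (-α) * ((1 - σ) ^ (-(1 + α)) * (α / G))) *
        (τ' ^ 3 / (6 * (τ ^ 2 * (τ + τ')))) from by field_simp; ring]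
  rw [show τ ^ (-α) * (α / (6 * G) * (1 - σ) ^ (-(1 + α))) =
      (τ ^ (-α) * ((1 - σ) ^ (-(1 + α)) * (α / G))) * (1 / 6) from by field_simp]
  apply mul_le_mul_of_nonneg_left _ (by positivity)
  rw [div_le_div_iff₀ (by positivity) (by norm_num)]
  nlinarith

lemma meshT_mono (T r : ℝ) (N : ℕ) (hT : 0 < T) (hr0 : 0 < r) (hN : 0 < (N:ℝ))
    {i j : ℕ} (hij : i ≤ j) : meshT T r N i ≤ meshT T r N j := by
  unfold meshT
  apply mul_le_mul_of_nonneg_left _ hT.le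
  apply Real.rpow_le_rpow (by positivity) _ hr0.le
  gcongr

lemma meshT_lt (T r : ℝ) (N : ℕ) (hT : 0 < T) (hr0 : 0 < r) (hN : 0 < (N:ℝ))
    {i j : ℕ} (hij : i < j) : meshT T r N i < meshT T r N j := by
  unfold meshT
  apply mul_lt_mul_of_pos_left _ hT
  apply Real.rpow_lt_rpow (by positivity) _ hr0
  apply div_lt_div_of_pos_right ?_ hN
  exact_mod_cast hij

lemma meshT_step_mono (T r : ℝ) (N : ℕ) (hT : 0 < T) (hr : 1 ≤ r) (hN : 0 < (N:ℝ))
    {n : ℕ} (hn : 2 ≤ n) :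
    meshT T r N (n-1) - meshT T r N (n-2) ≤ meshT T r N n - meshT T r N (n-1) := by
  have hc1 : ((n - 1 : ℕ) : ℝ) = (n : ℝ) - 1 := by
    rw [Nat.cast_sub (by omega), Nat.cast_one]
  have hc2 : ((n - 2 : ℕ) : ℝ) = (n : ℝ) - 2 := by
    rw [Nat.cast_sub (by omega)]; norm_num
  have hn2 : (2:ℝ) ≤ (n:ℝ) := by exact_mod_cast hn
  set a : ℝ := ((n:ℝ) - 2) / N with ha
  set b : ℝ := (n:ℝ) / N with hb
  have hmem_a : a ∈ Set.Ici (0:ℝ) := Set.mem_Ici.mpr (div_nonneg (by linarith) hN.le)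
  have hmem_b : b ∈ Set.Ici (0:ℝ) := Set.mem_Ici.mpr (div_nonneg (by linarith) hN.le)
  have hconv := (convexOn_rpow hr).2 hmem_a hmem_b (by norm_num : (0:ℝ) ≤ 1/2)
    (by norm_num : (0:ℝ) ≤ 1/2) (by norm_num)
  simp only [smul_eq_mul] at hconv
  have hmid : (1/2 : ℝ) * a + (1/2 : ℝ) * b = ((n:ℝ) - 1) / N := by
    rw [ha, hb]; ring
  rw [hmid] at hconv
  unfold meshT
  rw [hc1, hc2]
  nlinarith [mul_nonneg hT.le
    (by linarith : (0:ℝ) ≤ (1/2)*a^r + (1/2)*b^r - (((n:ℝ)-1)/N)^r)]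

/-- Upper bound for the diagonal L2-1_σ weight on the graded mesh with `σ = 1 - α/2`:
for every `2 ≤ n ≤ N`,
`c_{n,n} ≤ τ_n^{-α} [ (1-σ)^{1-α}/Γ(2-α) + (α/(6Γ(1-α))) (1-σ)^{-(1+α)} ]`. -/
theorem stmt5 (T r α σ : ℝ) (hT : 0 < T) (hr : 1 ≤ r) (hα0 : 0 < α) (hα1 : α < 1)
    (hσ : σ = 1 - α / 2) (N : ℕ) (hN : 2 ≤ N) :
    ∀ n : ℕ, 2 ≤ n → n ≤ N →
      wC T r α σ N n n ≤ (meshTau T r N n) ^ (-α) *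
        ((1 - σ) ^ (1 - α) / Real.Gamma (2 - α) +
          α / (6 * Real.Gamma (1 - α)) * (1 - σ) ^ (-(1 + α))) := by
  intro n hn2 hnN
  have hr0 : (0:ℝ) < r := lt_of_lt_of_le one_pos hr
  have hNR : (0:ℝ) < (N:ℝ) := by exact_mod_cast (by omega : 0 < N)
  have hΓ : 0 < Real.Gamma (1 - α) := Real.Gamma_pos_of_pos (by linarith)
  have h1σ : 0 < 1 - σ := by rw [hσ]; linarith
  set tn := meshT T r N n with htn
  set t1 := meshT T r N (n - 1) with ht1
  set t2 := meshT T r N (n - 2) with ht2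
  have hτ : 0 < tn - t1 :=
    sub_pos.mpr (meshT_lt T r N hT hr0 hNR (by omega : n - 1 < n))
  have hτ' : 0 ≤ t1 - t2 :=
    sub_nonneg.mpr (meshT_mono T r N hT hr0 hNR (by omega : n - 2 ≤ n - 1))
  have hstep : t1 - t2 ≤ tn - t1 := meshT_step_mono T r N hT hr hNR hn2
  set τ : ℝ := tn - t1 with hτdef
  set τ' : ℝ := t1 - t2 with hτ'def
  set δ : ℝ := (1 - σ) * τ with hδdef
  have hδ : 0 < δ := mul_pos h1σ hτ
  have hcval : meshTSig T r σ N n = t1 + δ := by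
    unfold meshTSig
    rw [hδdef, hτdef, htn, ht1]; ring
  -- value of a_{n,n}
  have hwA : wA T r α σ N n n = (1 / Real.Gamma (1 - α)) * (δ ^ (1 - α) / (1 - α)) := by
    rw [wA, if_pos rfl, hcval, ← ht1, aux_integral_a t1 δ α hα1]
  -- bound on b_{n,n-1}
  have hidx1 : n - 1 + 1 = n := by omega
  have hidx2 : n - 1 - 1 = n - 2 := by omega
  have hwB : wB T r α σ N n (n-1) ≤
      (2 / (tn - t2)) * (1 / Real.Gamma (1 - α)) *
        (α * δ ^ (-α - 1) * τ' ^ 3 / 12) := by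
    rw [wB, hidx1, hidx2, hcval]
    have hIb := aux_integral_b t2 t1 (t1 + δ) δ α (by linarith) hδ (by linarith) hα0
    have hfac : 0 ≤ (2 / (tn - t2)) * (1 / Real.Gamma (1 - α)) := by
      apply mul_nonneg
      · apply div_nonneg (by norm_num); linarith
      · positivity
    calc (2 / (tn - t2)) * (1 / Real.Gamma (1 - α)) *
          ∫ s in t2..t1, (t1 + δ - s) ^ (-α) * (s - (t2 + t1) / 2)
        ≤ (2 / (tn - t2)) * (1 / Real.Gamma (1 - α)) *
          (α * δ ^ (-α - 1) * (t1 - t2) ^ 3 / 12) :=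
          mul_le_mul_of_nonneg_left hIb hfac
      _ = (2 / (tn - t2)) * (1 / Real.Gamma (1 - α)) *
          (α * δ ^ (-α - 1) * τ' ^ 3 / 12) := by rw [hτ'def]
  -- unfold wC
  have hwC : wC T r α σ N n n =
      τ⁻¹ * (wA T r α σ N n n + wB T r α σ N n (n - 1)) := by
    rw [wC, if_neg (by omega : n ≠ 1), if_pos rfl, meshTau, ← htn, ← ht1, ← hτdef]
  have hmeshTau : meshTau T r N n = τ := by rw [meshTau, ← htn, ← ht1]
  rw [hwC, hmeshTau]
  -- split the right-hand side
  have hτinv : (0:ℝ) ≤ τ⁻¹ := by positivity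
  have hΓ2 : Real.Gamma (2 - α) = (1 - α) * Real.Gamma (1 - α) := by
    rw [show (2:ℝ) - α = (1 - α) + 1 by ring, Real.Gamma_add_one (by linarith)]
  have htt2 : tn - t2 = τ + τ' := by rw [hτdef, hτ'def]; ring
  -- first term: exact equality
  have hterm1 : τ⁻¹ * wA T r α σ N n n = τ ^ (-α) * ((1 - σ) ^ (1 - α) / Real.Gamma (2 - α)) := by
    rw [hwA, hΓ2, hδdef]
    exact aux_first τ α σ (Real.Gamma (1 - α)) hτ hα0 hα1 h1σ hΓ
  -- second term
  have hterm2 : τ⁻¹ * wB T r α σ N n (n - 1) ≤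
      τ ^ (-α) * (α / (6 * Real.Gamma (1 - α)) * (1 - σ) ^ (-(1 + α))) := by
    rw [htt2, hδdef] at hwB
    calc τ⁻¹ * wB T r α σ N n (n - 1)
        ≤ τ⁻¹ * (2 / (τ + τ') * (1 / Real.Gamma (1 - α)) *
            (α * ((1 - σ) * τ) ^ (-α - 1) * τ' ^ 3 / 12)) :=
          mul_le_mul_of_nonneg_left hwB hτinv
      _ ≤ τ ^ (-α) * (α / (6 * Real.Gamma (1 - α)) * (1 - σ) ^ (-(1 + α))) :=
          aux_final τ τ' α σ (Real.Gamma (1 - α)) hτ hτ' hstep hα0 h1σ hΓ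
  calc τ⁻¹ * (wA T r α σ N n n + wB T r α σ N n (n - 1))
      = τ⁻¹ * wA T r α σ N n n + τ⁻¹ * wB T r α σ N n (n - 1) := by ring
    _ ≤ τ ^ (-α) * ((1 - σ) ^ (1 - α) / Real.Gamma (2 - α)) +
        τ ^ (-α) * (α / (6 * Real.Gamma (1 - α)) * (1 - σ) ^ (-(1 + α))) := by
        rw [hterm1]; exact add_le_add_right hterm2 _
    _ = τ ^ (-α) * ((1 - σ) ^ (1 - α) / Real.Gamma (2 - α) +
        α / (6 * Real.Gamma (1 - α)) * (1 - σ) ^ (-(1 + α))) := by ring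
end

section
/- Let V be a real inner product space, let n ≥ 1 be an integer, let u^0, u^1, …, u^n ∈ V, and let c_1, c_2, …, c_n be real numbers with 0 < c_1 ≤ c_2 ≤ … ≤ c_n. Define D = c_n u^n + Σ_{j=1}^{n−1} (c_j − c_{j+1}) u^j − c_1 u^0. Then ⟨D, u^n⟩ ≥ (1/2) [ c_n ‖u^n‖² + Σ_{j=1}^{n−1} (c_j − c_{j+1}) ‖u^j‖² − c_1 ‖u^0‖² ]. -/
open scoped RealInnerProductSpace

/-- Discrete positivity of the L2-1_σ operator: if `0 < c_1 ≤ c_2 ≤ … ≤ c_n` and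
`D = c_n u^n + Σ_{j=1}^{n-1} (c_j - c_{j+1}) u^j - c_1 u^0`, then
`⟨D, u^n⟩ ≥ (1/2)[c_n ‖u^n‖² + Σ_{j=1}^{n-1} (c_j - c_{j+1}) ‖u^j‖² - c_1 ‖u^0‖²]`. -/
theorem stmt7 (V : Type*) [NormedAddCommGroup V] [InnerProductSpace ℝ V]
    (n : ℕ) (hn : 1 ≤ n) (u : ℕ → V) (c : ℕ → ℝ)
    (hc1 : 0 < c 1) (hmono : ∀ j : ℕ, 1 ≤ j → j ≤ n - 1 → c j ≤ c (j + 1)) :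
    ⟪c n • u n + (∑ j ∈ Finset.Icc 1 (n - 1), (c j - c (j + 1)) • u j) - c 1 • u 0, u n⟫ ≥
      (1 / 2) * (c n * ‖u n‖ ^ 2 +
        (∑ j ∈ Finset.Icc 1 (n - 1), (c j - c (j + 1)) * ‖u j‖ ^ 2) - c 1 * ‖u 0‖ ^ 2) := by
  have key : ∀ (x y : V), ⟪x, y⟫ ≤ (‖x‖ ^ 2 + ‖y‖ ^ 2) / 2 := by
    intro x y
    nlinarith [real_inner_le_norm x y, sq_nonneg (‖x‖ - ‖y‖), norm_nonneg x, norm_nonneg y]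
  have hneg : ∀ j ∈ Finset.Icc 1 (n - 1), c j - c (j + 1) ≤ 0 := by
    intro j hj
    simp only [Finset.mem_Icc] at hj
    linarith [hmono j hj.1 hj.2]
  have hS : ∑ j ∈ Finset.Icc 1 (n - 1), (c j - c (j + 1)) * ((‖u j‖ ^ 2 + ‖u n‖ ^ 2) / 2)
      ≤ ∑ j ∈ Finset.Icc 1 (n - 1), (c j - c (j + 1)) * ⟪u j, u n⟫ := by
    refine Finset.sum_le_sum fun j hj => ?_
    exact mul_le_mul_of_nonpos_left (key _ _) (hneg j hj)
  have htel : ∑ j ∈ Finset.Icc 1 (n - 1), (c j - c (j + 1)) = c 1 - c n := by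
    have hIcc : Finset.Icc 1 (n - 1) = Finset.Ico 1 n := by
      rw [← Finset.Ico_add_one_right_eq_Icc]
      congr 1
      omega
    rw [hIcc, Finset.sum_Ico_eq_sum_range]
    have h2 := Finset.sum_range_sub' (fun i => c (i + 1)) (n - 1)
    simp only [Nat.sub_add_cancel hn] at h2
    rw [← h2]
    apply Finset.sum_congr rfl
    intro i _
    have : 1 + i = i + 1 := by omega
    rw [this]
  have hsplit : ∑ j ∈ Finset.Icc 1 (n - 1), (c j - c (j + 1)) * ((‖u j‖ ^ 2 + ‖u n‖ ^ 2) / 2)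
      = (∑ j ∈ Finset.Icc 1 (n - 1), (c j - c (j + 1)) * ‖u j‖ ^ 2) / 2
        + (c 1 - c n) * ‖u n‖ ^ 2 / 2 := by
    rw [← htel, Finset.sum_mul, Finset.sum_div, Finset.sum_div, ← Finset.sum_add_distrib]
    exact Finset.sum_congr rfl fun j _ => by ring
  have hexp : ⟪c n • u n + (∑ j ∈ Finset.Icc 1 (n - 1), (c j - c (j + 1)) • u j)
        - c 1 • u 0, u n⟫
      = c n * ‖u n‖ ^ 2
        + (∑ j ∈ Finset.Icc 1 (n - 1), (c j - c (j + 1)) * ⟪u j, u n⟫)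
        - c 1 * ⟪u 0, u n⟫ := by
    rw [inner_sub_left, inner_add_left, inner_smul_left, inner_smul_left, sum_inner,
      real_inner_self_eq_norm_sq]
    simp [inner_smul_left]
  have hcross : c 1 * ⟪u 0, u n⟫ ≤ c 1 * ((‖u 0‖ ^ 2 + ‖u n‖ ^ 2) / 2) :=
    mul_le_mul_of_nonneg_left (key _ _) hc1.le
  rw [ge_iff_le, hexp]
  linarith [hS, hsplit]
end

section
/- Let u : [0,T] → ℝ be continuous on [0,T] and twice continuously differentiable on (0,T], satisfying |u'(t)| ≤ C₀ t^{α−1} and |u''(t)| ≤ C₀ t^{α−2} for all t ∈ (0,T]. On the graded mesh t_n = T(n/N)^r, define the extrapolated value ũ^{n−1,σ} = u(t_{n−1}) + (1−σ)(τ_n/τ_{n−1})(u(t_{n−1}) − u(t_{n−2})) for n ≥ 2. Then there exists a constant C, depending only on C₀, α, σ, r, T and independent of n and N, such that |ũ^{n−1,σ} − u(t_{n−σ})| ≤ C N^{−min{rα, 2}} for all 2 ≤ n ≤ N. -/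
section AuxStmt8

open Set

/-- Mean value inequality on a closed interval. -/
lemma mvt_bound0 {f f' : ℝ → ℝ} {a b M : ℝ}
    (hd : ∀ t ∈ Set.Icc a b, HasDerivAt f (f' t) t)
    (hM : ∀ t ∈ Set.Icc a b, |f' t| ≤ M)
    {x y : ℝ} (hx : x ∈ Set.Icc a b) (hy : y ∈ Set.Icc a b) :
    |f y - f x| ≤ M * |y - x| := by
  have := (convex_Icc a b).norm_image_sub_le_of_norm_hasDerivWithin_le
    (fun t ht => (hd t ht).hasDerivWithinAt) (fun t ht => hM t ht) hx hy
  simpa [Real.norm_eq_abs] using this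

/-- Taylor-type second order bound. -/
lemma taylor_bound0 {f f' f'' : ℝ → ℝ} {a b M : ℝ}
    (hd : ∀ t ∈ Set.Icc a b, HasDerivAt f (f' t) t)
    (hd' : ∀ t ∈ Set.Icc a b, HasDerivAt f' (f'' t) t)
    (hM : ∀ t ∈ Set.Icc a b, |f'' t| ≤ M)
    {x y : ℝ} (hx : x ∈ Set.Icc a b) (hy : y ∈ Set.Icc a b) :
    |f y - f x - f' x * (y - x)| ≤ M * (y - x) ^ 2 := by
  have hMnn : 0 ≤ M := le_trans (abs_nonneg _) (hM x hx)
  set g : ℝ → ℝ := fun t => f t - f' x * t with hg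
  have hsub : Set.Icc (min x y) (max x y) ⊆ Set.Icc a b := by
    intro t ht
    constructor
    · exact le_trans (le_min hx.1 hy.1) ht.1
    · exact le_trans ht.2 (max_le hx.2 hy.2)
  have hgd : ∀ t ∈ Set.Icc (min x y) (max x y),
      HasDerivAt g (f' t - f' x) t := by
    intro t ht
    have h := (hd t (hsub ht)).sub ((hasDerivAt_id t).const_mul (f' x))
    rw [mul_one] at h
    exact h
  have hgb : ∀ t ∈ Set.Icc (min x y) (max x y), |f' t - f' x| ≤ M * |y - x| := by
    intro t ht
    have h1 : |f' t - f' x| ≤ M * |t - x| := mvt_bound0 hd' hM hx (hsub ht)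
    have h2 : |t - x| ≤ |y - x| := by
      rw [abs_sub_le_iff]
      constructor
      · rcases le_total x y with h | h
        · have := ht.2; have := abs_nonneg (y - x)
          have : t ≤ max x y := ht.2
          rw [max_eq_right h] at this
          have : t - x ≤ y - x := by linarith
          exact le_trans this (le_abs_self _)
        · have ht2 : t ≤ max x y := ht.2
          rw [max_eq_left h] at ht2
          have : t - x ≤ 0 := by linarith
          exact le_trans this (abs_nonneg _)
      · rcases le_total x y with h | h
        · have ht1 : min x y ≤ t := ht.1
          rw [min_eq_left h] at ht1
          have : x - t ≤ 0 := by linarith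
          exact le_trans this (abs_nonneg _)
        · have ht1 : min x y ≤ t := ht.1
          rw [min_eq_right h] at ht1
          have : x - t ≤ x - y := by linarith
          calc x - t ≤ x - y := this
            _ ≤ |x - y| := le_abs_self _
            _ = |y - x| := abs_sub_comm _ _
      
    calc |f' t - f' x| ≤ M * |t - x| := h1
      _ ≤ M * |y - x| := by exact mul_le_mul_of_nonneg_left h2 hMnn
  have hxm : x ∈ Set.Icc (min x y) (max x y) := ⟨min_le_left _ _, le_max_left _ _⟩
  have hym : y ∈ Set.Icc (min x y) (max x y) := ⟨min_le_right _ _, le_max_right _ _⟩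
  have key := mvt_bound0 hgd hgb hxm hym
  have : g y - g x = f y - f x - f' x * (y - x) := by simp [hg]; ring
  rw [this] at key
  calc |f y - f x - f' x * (y - x)| ≤ M * |y - x| * |y - x| := key
    _ = M * (y - x) ^ 2 := by rw [mul_assoc, abs_mul_abs_self]; ring

/-- `b^r - a^r ≤ r b^{r-1}(b-a)` for `0 ≤ a ≤ b`, `1 ≤ r`. -/
lemma rpow_diff_le0 {a b r : ℝ} (hr : 1 ≤ r) (ha : 0 ≤ a) (hab : a ≤ b) :
    b ^ r - a ^ r ≤ r * b ^ (r - 1) * (b - a) := by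
  rcases eq_or_lt_of_le hab with rfl | hab'
  · simp
  have hb : 0 < b := lt_of_le_of_lt ha hab'
  have hcont : ContinuousOn (fun t : ℝ => t ^ r) (Set.Icc a b) := by
    intro t ht
    exact (Real.continuousAt_rpow_const t r (Or.inr (by linarith))).continuousWithinAt
  have hder : ∀ t ∈ Set.Ioo a b, HasDerivAt (fun t : ℝ => t ^ r) (r * t ^ (r - 1)) t := by
    intro t ht
    exact Real.hasDerivAt_rpow_const (Or.inr hr)
  obtain ⟨c, hc, hslope⟩ := exists_hasDerivAt_eq_slope (fun t : ℝ => t ^ r)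
    (fun t => r * t ^ (r - 1)) hab' hcont hder
  have hc0 : 0 < c := lt_of_le_of_lt ha hc.1
  have hcb : c ≤ b := le_of_lt hc.2
  have hmono : c ^ (r - 1) ≤ b ^ (r - 1) :=
    Real.rpow_le_rpow hc0.le hcb (by linarith)
  have hba : 0 < b - a := by linarith
  have : b ^ r - a ^ r = r * c ^ (r - 1) * (b - a) := by
    field_simp at hslope
    linarith [hslope]
  rw [this]
  have := mul_le_mul_of_nonneg_left hmono (by linarith : (0:ℝ) ≤ r)
  nlinarith


lemma holder_pos0_aux {T α C₀ : ℝ} (hα0 : 0 < α)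
    {u u' : ℝ → ℝ} (hu' : ∀ t ∈ Set.Ioc (0:ℝ) T, HasDerivAt u (u' t) t)
    (hb : ∀ t ∈ Set.Ioc (0:ℝ) T, |u' t| ≤ C₀ * t ^ (α - 1))
    {x y : ℝ} (hx : 0 < x) (hxy : x ≤ y) (hyT : y ≤ T) :
    u y - u x ≤ (C₀ / α) * (y ^ α - x ^ α) := by
  rcases eq_or_lt_of_le hxy with rfl | hxy'
  · simp
  have hmem : ∀ t ∈ Set.Icc x y, t ∈ Set.Ioc (0:ℝ) T := fun t ht =>
    ⟨lt_of_lt_of_le hx ht.1, le_trans ht.2 hyT⟩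
  set g : ℝ → ℝ := fun t => (C₀ / α) * t ^ α - u t with hgdef
  have hgd : ∀ t ∈ Set.Ioo x y, HasDerivAt g ((C₀ / α) * (α * t ^ (α - 1)) - u' t) t := by
    intro t ht
    have ht' : t ∈ Set.Ioc (0:ℝ) T := hmem t ⟨ht.1.le, ht.2.le⟩
    have h1 : HasDerivAt (fun t : ℝ => t ^ α) (α * t ^ (α - 1)) t :=
      Real.hasDerivAt_rpow_const (Or.inl ht'.1.ne')
    exact (h1.const_mul _).sub (hu' t ht')
  have hgc : ContinuousOn g (Set.Icc x y) := by
    intro t ht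
    have ht' := hmem t ht
    have h1 : HasDerivAt (fun t : ℝ => t ^ α) (α * t ^ (α - 1)) t :=
      Real.hasDerivAt_rpow_const (Or.inl ht'.1.ne')
    exact (((h1.const_mul _).sub (hu' t ht')).continuousAt).continuousWithinAt
  obtain ⟨c, hc, hslope⟩ := exists_hasDerivAt_eq_slope g _ hxy' hgc hgd
  have hc' : c ∈ Set.Ioc (0:ℝ) T := hmem c ⟨hc.1.le, hc.2.le⟩
  have h4 := abs_le.mp (hb c hc')
  have h3 : (C₀ / α) * (α * c ^ (α - 1)) = C₀ * c ^ (α - 1) := by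
    field_simp
  have hnn : 0 ≤ (C₀ / α) * (α * c ^ (α - 1)) - u' c := by
    rw [h3]; linarith [h4.2]
  rw [hslope] at hnn
  have hba : 0 < y - x := by linarith
  have := (div_nonneg_iff.mp hnn)
  have hgy : g x ≤ g y := by
    rcases this with ⟨h1, _⟩ | ⟨_, h2⟩
    · linarith
    · linarith
  simp only [hgdef] at hgy
  linarith

lemma holder_pos0 {T α C₀ : ℝ} (hα0 : 0 < α)
    {u u' : ℝ → ℝ} (hu' : ∀ t ∈ Set.Ioc (0:ℝ) T, HasDerivAt u (u' t) t)
    (hb : ∀ t ∈ Set.Ioc (0:ℝ) T, |u' t| ≤ C₀ * t ^ (α - 1))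
    {x y : ℝ} (hx : 0 < x) (hxy : x ≤ y) (hyT : y ≤ T) :
    |u y - u x| ≤ (C₀ / α) * (y ^ α - x ^ α) := by
  have h1 := holder_pos0_aux hα0 hu' hb hx hxy hyT
  have h2 := holder_pos0_aux hα0 (u := fun t => -u t) (u' := fun t => -u' t)
    (fun t ht => (hu' t ht).neg) (fun t ht => by simpa using hb t ht) hx hxy hyT
  rw [abs_le]
  constructor <;> linarith

/-- Limit version at `0`. -/
lemma holder_zero0 {T α C₀ : ℝ} (hT : 0 < T) (hα0 : 0 < α)
    {u u' : ℝ → ℝ} (hu : ContinuousOn u (Set.Icc 0 T))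
    (hu' : ∀ t ∈ Set.Ioc (0:ℝ) T, HasDerivAt u (u' t) t)
    (hb : ∀ t ∈ Set.Ioc (0:ℝ) T, |u' t| ≤ C₀ * t ^ (α - 1))
    {y : ℝ} (hy : 0 < y) (hyT : y ≤ T) :
    |u y - u 0| ≤ (C₀ / α) * y ^ α := by
  have hne : (nhdsWithin (0:ℝ) (Set.Ioi 0)).NeBot := by infer_instance
  have hev : ∀ᶠ x in nhdsWithin (0:ℝ) (Set.Ioi 0), x ∈ Set.Ioc (0:ℝ) y :=
    Ioc_mem_nhdsGT_of_mem ⟨le_refl 0, hy⟩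
  have hle : nhdsWithin (0:ℝ) (Set.Ioi 0) ≤ nhdsWithin (0:ℝ) (Set.Icc 0 T) := by
    rw [nhdsWithin_le_iff]
    filter_upwards [hev] with x hx
    exact ⟨hx.1.le, le_trans hx.2 hyT⟩
  have hucont : Filter.Tendsto u (nhdsWithin (0:ℝ) (Set.Ioi 0)) (nhds (u 0)) :=
    (hu 0 ⟨le_refl 0, hT.le⟩).mono_left hle
  have hF : Filter.Tendsto (fun x => |u y - u x|) (nhdsWithin (0:ℝ) (Set.Ioi 0))
      (nhds (|u y - u 0|)) := ((tendsto_const_nhds.sub hucont).abs)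
  have hpow : Filter.Tendsto (fun x : ℝ => x ^ α) (nhdsWithin (0:ℝ) (Set.Ioi 0))
      (nhds ((0:ℝ) ^ α)) :=
    ((Real.continuousAt_rpow_const 0 α (Or.inr hα0.le)).tendsto).mono_left nhdsWithin_le_nhds
  have h0 : (0:ℝ) ^ α = 0 := Real.zero_rpow hα0.ne'
  have hG : Filter.Tendsto (fun x : ℝ => (C₀ / α) * (y ^ α - x ^ α))
      (nhdsWithin (0:ℝ) (Set.Ioi 0)) (nhds ((C₀ / α) * y ^ α)) := by
    have h5 : Filter.Tendsto (fun x : ℝ => y ^ α - x ^ α) (nhdsWithin (0:ℝ) (Set.Ioi 0))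
        (nhds (y ^ α - (0:ℝ) ^ α)) := Filter.Tendsto.sub tendsto_const_nhds hpow
    have h6 := h5.const_mul (C₀ / α)
    rw [h0, sub_zero] at h6
    exact h6
  refine le_of_tendsto_of_tendsto hF hG ?_
  filter_upwards [hev] with x hx
  exact holder_pos0 hα0 hu' hb hx.1 hx.2 hyT


lemma rpow_midpoint0 {a b r : ℝ} (hr : 1 ≤ r) (ha : 0 ≤ a) (hb : 0 ≤ b) :
    ((a + b) / 2) ^ r ≤ (a ^ r + b ^ r) / 2 := by
  have h := (convexOn_rpow hr).2 (Set.mem_Ici.mpr ha) (Set.mem_Ici.mpr hb)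
    (by norm_num : (0:ℝ) ≤ 1/2) (by norm_num : (0:ℝ) ≤ 1/2) (by norm_num)
  simp only [smul_eq_mul] at h
  have e1 : (1/2 : ℝ) * a + (1/2 : ℝ) * b = (a + b) / 2 := by ring
  rw [e1] at h
  linarith

end AuxStmt8

set_option maxHeartbeats 1000000 in
/-- Linearization error of the extrapolation
`ũ^{n-1,σ} = u(t_{n-1}) + (1-σ)(τ_n/τ_{n-1})(u(t_{n-1}) - u(t_{n-2}))`:
for `u` continuous on `[0,T]`, twice continuously differentiable on `(0,T]` with
`|u'(t)| ≤ C₀ t^{α-1}` and `|u''(t)| ≤ C₀ t^{α-2}`, one has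
`|ũ^{n-1,σ} - u(t_{n-σ})| ≤ C N^{-min{rα,2}}` for `2 ≤ n ≤ N`, with `C` independent
of `n` and `N`. -/
theorem stmt8 (T r α σ C₀ : ℝ) (hT : 0 < T) (hr : 1 ≤ r) (hα0 : 0 < α) (hα1 : α < 1)
    (hσ0 : 0 < σ) (hσ1 : σ < 1) (hC₀ : 0 < C₀)
    (u u' u'' : ℝ → ℝ)
    (hu : ContinuousOn u (Set.Icc 0 T))
    (hu' : ∀ t ∈ Set.Ioc (0 : ℝ) T, HasDerivAt u (u' t) t)
    (hu'' : ∀ t ∈ Set.Ioc (0 : ℝ) T, HasDerivAt u' (u'' t) t)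
    (hu''c : ContinuousOn u'' (Set.Ioc 0 T))
    (hb1 : ∀ t ∈ Set.Ioc (0 : ℝ) T, |u' t| ≤ C₀ * t ^ (α - 1))
    (hb2 : ∀ t ∈ Set.Ioc (0 : ℝ) T, |u'' t| ≤ C₀ * t ^ (α - 2)) :
    ∃ C : ℝ, 0 < C ∧ ∀ N : ℕ, 2 ≤ N → ∀ n : ℕ, 2 ≤ n → n ≤ N →
      |u (meshT T r N (n - 1)) +
          (1 - σ) * (meshTau T r N n / meshTau T r N (n - 1)) *
            (u (meshT T r N (n - 1)) - u (meshT T r N (n - 2))) -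
        u (meshTSig T r σ N n)| ≤ C * (N : ℝ) ^ (-min (r * α) 2) := by
  have hr0 : 0 < r := lt_of_lt_of_le one_pos hr
  obtain ⟨m, hm⟩ : ∃ x : ℝ, x = min (r * α) 2 := ⟨_, rfl⟩
  obtain ⟨C1, hC1⟩ : ∃ x : ℝ, x = (C₀ / α) * T ^ α * ((2:ℝ) ^ (r * α) + (2:ℝ) ^ r) := ⟨_, rfl⟩
  obtain ⟨C2, hC2⟩ : ∃ x : ℝ, x = 2 * C₀ * T ^ α * r ^ 2 * (3:ℝ) ^ (2 * r) := ⟨_, rfl⟩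
  have hTα : (0:ℝ) < T ^ α := Real.rpow_pos_of_pos hT α
  have hC1pos : 0 < C1 := by
    have h2 : (0:ℝ) < (2:ℝ) ^ (r * α) := Real.rpow_pos_of_pos (by norm_num) _
    have h3 : (0:ℝ) < (2:ℝ) ^ r := Real.rpow_pos_of_pos (by norm_num) _
    have h4 : (0:ℝ) < C₀ / α := div_pos hC₀ hα0
    rw [hC1]; positivity
  have hC2pos : 0 < C2 := by
    have h3 : (0:ℝ) < (3:ℝ) ^ (2 * r) := Real.rpow_pos_of_pos (by norm_num) _
    rw [hC2]; positivity
  refine ⟨C1 + C2, by linarith, ?_⟩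
  intro N hN n hn2 hnN
  have hN2 : (2:ℝ) ≤ (N:ℝ) := by exact_mod_cast hN
  have hn2' : (2:ℝ) ≤ (n:ℝ) := by exact_mod_cast hn2
  have hnN' : (n:ℝ) ≤ (N:ℝ) := by exact_mod_cast hnN
  have hN0 : (0:ℝ) < (N:ℝ) := by linarith
  have hN1 : (1:ℝ) ≤ (N:ℝ) := by linarith
  have hcast1 : ((n - 1 : ℕ) : ℝ) = (n:ℝ) - 1 := by
    have h : (1:ℕ) ≤ n := by omega
    push_cast [h]; ring
  have hcast2 : ((n - 2 : ℕ) : ℝ) = (n:ℝ) - 2 := by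
    push_cast [hn2]; ring
  have hsubnat : n - 1 - 1 = n - 2 := by omega
  obtain ⟨a, ha⟩ : ∃ x : ℝ, x = ((n:ℝ) - 2) / (N:ℝ) := ⟨_, rfl⟩
  obtain ⟨b, hb⟩ : ∃ x : ℝ, x = ((n:ℝ) - 1) / (N:ℝ) := ⟨_, rfl⟩
  obtain ⟨c, hc⟩ : ∃ x : ℝ, x = (n:ℝ) / (N:ℝ) := ⟨_, rfl⟩
  have ha0 : 0 ≤ a := by rw [ha]; exact div_nonneg (by linarith) hN0.le
  have hb0 : 0 < b := by rw [hb]; exact div_pos (by linarith) hN0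
  have hc0 : 0 < c := by rw [hc]; exact div_pos (by linarith) hN0
  have hab : a < b := by
    rw [ha, hb, div_lt_div_iff_of_pos_right hN0]; linarith
  have hbc : b < c := by
    rw [hb, hc, div_lt_div_iff_of_pos_right hN0]; linarith
  have hc1 : c ≤ 1 := by
    rw [hc, div_le_one hN0]; exact hnN'
  obtain ⟨t0, ht0⟩ : ∃ x : ℝ, x = T * a ^ r := ⟨_, rfl⟩
  obtain ⟨t1, ht1⟩ : ∃ x : ℝ, x = T * b ^ r := ⟨_, rfl⟩
  obtain ⟨t2, ht2⟩ : ∃ x : ℝ, x = T * c ^ r := ⟨_, rfl⟩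
  obtain ⟨tσ, htσ⟩ : ∃ x : ℝ, x = (1 - σ) * t2 + σ * t1 := ⟨_, rfl⟩
  -- identify mesh quantities
  have e1 : meshT T r N (n - 1) = t1 := by rw [meshT, hcast1, ht1, hb]
  have e2 : meshT T r N (n - 2) = t0 := by rw [meshT, hcast2, ht0, ha]
  have e3 : meshT T r N n = t2 := by rw [meshT, ht2, hc]
  have e4 : meshTau T r N n = t2 - t1 := by rw [meshTau, e3, e1]
  have e5 : meshTau T r N (n - 1) = t1 - t0 := by
    rw [meshTau, hsubnat, e1, e2]
  have e6 : meshTSig T r σ N n = tσ := by rw [meshTSig, e3, e1, htσ]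
  rw [← hm]
  rw [e1, e2, e4, e5, e6]
  -- basic ordering facts
  have ht01 : t0 < t1 := by
    rw [ht0, ht1]
    exact mul_lt_mul_of_pos_left (Real.rpow_lt_rpow ha0 hab hr0) hT
  have ht12 : t1 < t2 := by
    rw [ht1, ht2]
    exact mul_lt_mul_of_pos_left (Real.rpow_lt_rpow hb0.le hbc hr0) hT
  have ht1pos : 0 < t1 := by rw [ht1]; exact mul_pos hT (Real.rpow_pos_of_pos hb0 r)
  have ht2pos : 0 < t2 := by rw [ht2]; exact mul_pos hT (Real.rpow_pos_of_pos hc0 r)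
  have ht2T : t2 ≤ T := by
    rw [ht2]
    calc T * c ^ r ≤ T * 1 :=
          mul_le_mul_of_nonneg_left (Real.rpow_le_one hc0.le hc1 hr0.le) hT.le
      _ = T := mul_one T
  have htσ1 : t1 ≤ tσ := by
    rw [htσ]
    have h := mul_le_mul_of_nonneg_left ht12.le (by linarith : (0:ℝ) ≤ 1 - σ)
    linarith
  have htσ2 : tσ ≤ t2 := by
    rw [htσ]
    have h := mul_le_mul_of_nonneg_left ht12.le hσ0.le
    linarith
  have hτpos : 0 < t2 - t1 := by linarith
  have hτ'pos : 0 < t1 - t0 := by linarith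
  have hτ'τ : t1 - t0 ≤ t2 - t1 := by
    have hmid : b = (a + c) / 2 := by rw [ha, hb, hc]; field_simp; ring
    have h := rpow_midpoint0 hr ha0 hc0.le
    rw [← hmid] at h
    rw [ht0, ht1, ht2]
    have h2 := mul_le_mul_of_nonneg_left h hT.le
    linarith
  have htσsub : tσ - t1 = (1 - σ) * (t2 - t1) := by rw [htσ]; ring
  -- the upper bound for τ_n
  have hτle : t2 - t1 ≤ T * r * c ^ (r - 1) * (1 / (N:ℝ)) := by
    have h := rpow_diff_le0 hr hb0.le hbc.le
    have hcb : c - b = 1 / (N:ℝ) := by rw [hb, hc]; field_simp; ring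
    rw [hcb] at h
    rw [ht1, ht2]
    calc T * c ^ r - T * b ^ r = T * (c ^ r - b ^ r) := by ring
      _ ≤ T * (r * c ^ (r - 1) * (1 / (N:ℝ))) := mul_le_mul_of_nonneg_left h hT.le
      _ = T * r * c ^ (r - 1) * (1 / (N:ℝ)) := by ring
  -- N^(-rα) ≤ N^(-m)
  have hNm : (N:ℝ) ^ (-(r * α)) ≤ (N:ℝ) ^ (-m) :=
    Real.rpow_le_rpow_of_exponent_le hN1 (neg_le_neg (hm ▸ min_le_left _ _))
  have hNmpos : (0:ℝ) < (N:ℝ) ^ (-m) := Real.rpow_pos_of_pos hN0 _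
  rcases eq_or_lt_of_le hn2' with hn2eq | hn3
  · -- case n = 2
    have han : a = 0 := by rw [ha, ← hn2eq]; simp
    have ht00 : t0 = 0 := by
      rw [ht0, han, Real.zero_rpow (ne_of_gt hr0), mul_zero]
    have hcb2 : c = 2 * b := by rw [hc, hb, ← hn2eq]; ring
    have ht2t1 : t2 = (2:ℝ) ^ r * t1 := by
      rw [ht2, ht1, hcb2, Real.mul_rpow (by norm_num) hb0.le]; ring
    have hratio : (t2 - t1) / (t1 - t0) = (2:ℝ) ^ r - 1 := by
      rw [ht00, sub_zero, ht2t1]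
      field_simp
    have h2r1 : (1:ℝ) ≤ (2:ℝ) ^ r := Real.one_le_rpow (by norm_num) hr0.le
    -- Hölder bounds
    have hbd1 : |u tσ - u t1| ≤ (C₀ / α) * (tσ ^ α - t1 ^ α) :=
      holder_pos0 hα0 hu' hb1 ht1pos htσ1 (le_trans htσ2 ht2T)
    have hbd2 : |u t1 - u 0| ≤ (C₀ / α) * t1 ^ α :=
      holder_zero0 hT hα0 hu hu' hb1 ht1pos (by linarith)
    have htσα : tσ ^ α ≤ t2 ^ α := Real.rpow_le_rpow (by linarith) htσ2 hα0.le
    have ht1α0 : 0 ≤ t1 ^ α := (Real.rpow_pos_of_pos ht1pos α).le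
    have hCα : 0 ≤ C₀ / α := (div_pos hC₀ hα0).le
    -- t1^α and t2^α explicitly
    have hbval : b = 1 / (N:ℝ) := by rw [hb, ← hn2eq]; norm_num
    have ht1α : t1 ^ α = T ^ α * (N:ℝ) ^ (-(r * α)) := by
      rw [ht1, Real.mul_rpow hT.le (Real.rpow_pos_of_pos hb0 r).le,
        ← Real.rpow_mul hb0.le, hbval, one_div, Real.inv_rpow hN0.le, ← Real.rpow_neg hN0.le]
    have ht2α : t2 ^ α = (2:ℝ) ^ (r * α) * t1 ^ α := by
      rw [ht2t1, Real.mul_rpow (Real.rpow_pos_of_pos (by norm_num : (0:ℝ)<2) r).le ht1pos.le,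
        ← Real.rpow_mul (by norm_num : (0:ℝ) ≤ 2)]
    -- assemble
    have key : |u t1 + (1 - σ) * ((t2 - t1) / (t1 - t0)) * (u t1 - u t0) - u tσ|
        ≤ C1 * (N:ℝ) ^ (-m) := by
      have hu0 : u t0 = u 0 := by rw [ht00]
      have habs : |u t1 + (1 - σ) * ((t2 - t1) / (t1 - t0)) * (u t1 - u t0) - u tσ|
          ≤ |u tσ - u t1| + (1 - σ) * ((2:ℝ) ^ r - 1) * |u t1 - u 0| := by
        rw [hratio, hu0]
        have h1 : u t1 + (1 - σ) * ((2:ℝ) ^ r - 1) * (u t1 - u 0) - u tσ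
            = -(u tσ - u t1) + (1 - σ) * ((2:ℝ) ^ r - 1) * (u t1 - u 0) := by ring
        rw [h1]
        calc |(-(u tσ - u t1)) + (1 - σ) * ((2:ℝ) ^ r - 1) * (u t1 - u 0)|
            ≤ |(-(u tσ - u t1))| + |(1 - σ) * ((2:ℝ) ^ r - 1) * (u t1 - u 0)| := abs_add_le _ _
          _ = |u tσ - u t1| + (1 - σ) * ((2:ℝ) ^ r - 1) * |u t1 - u 0| := by
              rw [abs_neg, abs_mul, abs_mul, abs_of_nonneg (by linarith : (0:ℝ) ≤ 1 - σ),
                abs_of_nonneg (by linarith : (0:ℝ) ≤ (2:ℝ) ^ r - 1)]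
      have hstep : |u tσ - u t1| + (1 - σ) * ((2:ℝ) ^ r - 1) * |u t1 - u 0|
          ≤ (C₀ / α) * t2 ^ α + (2:ℝ) ^ r * ((C₀ / α) * t1 ^ α) := by
        have h2 : |u tσ - u t1| ≤ (C₀ / α) * t2 ^ α := by
          calc |u tσ - u t1| ≤ (C₀ / α) * (tσ ^ α - t1 ^ α) := hbd1
            _ ≤ (C₀ / α) * t2 ^ α := by
                apply mul_le_mul_of_nonneg_left _ hCα
                linarith
        have h3 : (1 - σ) * ((2:ℝ) ^ r - 1) * |u t1 - u 0| ≤ (2:ℝ) ^ r * ((C₀ / α) * t1 ^ α) := by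
          have hco : (1 - σ) * ((2:ℝ) ^ r - 1) ≤ (2:ℝ) ^ r := by
            calc (1 - σ) * ((2:ℝ) ^ r - 1) ≤ 1 * ((2:ℝ) ^ r - 1) :=
                  mul_le_mul_of_nonneg_right (by linarith) (by linarith)
              _ ≤ (2:ℝ) ^ r := by linarith
          have habs0 : 0 ≤ |u t1 - u 0| := abs_nonneg _
          calc (1 - σ) * ((2:ℝ) ^ r - 1) * |u t1 - u 0|
              ≤ (2:ℝ) ^ r * |u t1 - u 0| := mul_le_mul_of_nonneg_right hco habs0
            _ ≤ (2:ℝ) ^ r * ((C₀ / α) * t1 ^ α) := by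
                apply mul_le_mul_of_nonneg_left hbd2
                exact (Real.rpow_pos_of_pos (by norm_num : (0:ℝ)<2) r).le
        linarith
      have hfin : (C₀ / α) * t2 ^ α + (2:ℝ) ^ r * ((C₀ / α) * t1 ^ α)
          = C1 * (N:ℝ) ^ (-(r * α)) := by
        rw [ht2α, ht1α, hC1]; ring
      calc |u t1 + (1 - σ) * ((t2 - t1) / (t1 - t0)) * (u t1 - u t0) - u tσ|
          ≤ |u tσ - u t1| + (1 - σ) * ((2:ℝ) ^ r - 1) * |u t1 - u 0| := habs
        _ ≤ (C₀ / α) * t2 ^ α + (2:ℝ) ^ r * ((C₀ / α) * t1 ^ α) := hstep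
        _ = C1 * (N:ℝ) ^ (-(r * α)) := hfin
        _ ≤ C1 * (N:ℝ) ^ (-m) := mul_le_mul_of_nonneg_left hNm hC1pos.le
    calc |u t1 + (1 - σ) * ((t2 - t1) / (t1 - t0)) * (u t1 - u t0) - u tσ|
        ≤ C1 * (N:ℝ) ^ (-m) := key
      _ ≤ (C1 + C2) * (N:ℝ) ^ (-m) :=
          mul_le_mul_of_nonneg_right (by linarith) hNmpos.le
  · -- case n ≥ 3
    have hn3nat : 2 < n := by exact_mod_cast hn3
    have hn3' : (3:ℝ) ≤ (n:ℝ) := by exact_mod_cast hn3nat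
    have ha0' : 0 < a := by rw [ha]; exact div_pos (by linarith) hN0
    have ht0pos : 0 < t0 := by rw [ht0]; exact mul_pos hT (Real.rpow_pos_of_pos ha0' r)
    have hP : Set.Icc t0 t2 ⊆ Set.Ioc (0:ℝ) T := by
      intro t ht
      exact ⟨lt_of_lt_of_le ht0pos ht.1, le_trans ht.2 ht2T⟩
    have hd : ∀ t ∈ Set.Icc t0 t2, HasDerivAt u (u' t) t := fun t ht => hu' t (hP ht)
    have hd' : ∀ t ∈ Set.Icc t0 t2, HasDerivAt u' (u'' t) t := fun t ht => hu'' t (hP ht)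
    obtain ⟨M, hM⟩ : ∃ x : ℝ, x = C₀ * t0 ^ (α - 2) := ⟨_, rfl⟩
    have hMpos : 0 < M := by
      rw [hM]; exact mul_pos hC₀ (Real.rpow_pos_of_pos ht0pos _)
    have hMb : ∀ t ∈ Set.Icc t0 t2, |u'' t| ≤ M := by
      intro t ht
      have h2 : t ^ (α - 2) ≤ t0 ^ (α - 2) :=
        Real.rpow_le_rpow_of_nonpos ht0pos ht.1 (by linarith)
      calc |u'' t| ≤ C₀ * t ^ (α - 2) := hb2 t (hP ht)
        _ ≤ C₀ * t0 ^ (α - 2) := mul_le_mul_of_nonneg_left h2 hC₀.le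
        _ = M := hM.symm
    have ht1mem : t1 ∈ Set.Icc t0 t2 := ⟨ht01.le, ht12.le⟩
    have htσmem : tσ ∈ Set.Icc t0 t2 := ⟨by linarith, htσ2⟩
    have ht0mem : t0 ∈ Set.Icc t0 t2 := ⟨le_refl _, by linarith⟩
    have hA := taylor_bound0 hd hd' hMb ht1mem htσmem
    have hB := taylor_bound0 hd hd' hMb ht1mem ht0mem
    have hτ'ne : t1 - t0 ≠ 0 := ne_of_gt hτ'pos
    have hρ : (t2 - t1) / (t1 - t0) * (t1 - t0) = t2 - t1 := div_mul_cancel₀ _ hτ'ne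
    have hρnn : 0 ≤ (t2 - t1) / (t1 - t0) := div_nonneg hτpos.le hτ'pos.le
    have hE : u t1 + (1 - σ) * ((t2 - t1) / (t1 - t0)) * (u t1 - u t0) - u tσ
        = -((1 - σ) * ((t2 - t1) / (t1 - t0)) * (u t0 - u t1 - u' t1 * (t0 - t1)))
          - (u tσ - u t1 - u' t1 * (tσ - t1)) := by
      linear_combination (1 - σ) * u' t1 * hρ - u' t1 * htσsub
    have hPnn : 0 ≤ (1 - σ) * ((t2 - t1) / (t1 - t0)) :=
      mul_nonneg (by linarith) hρnn
    have habs : |u t1 + (1 - σ) * ((t2 - t1) / (t1 - t0)) * (u t1 - u t0) - u tσ|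
        ≤ (1 - σ) * ((t2 - t1) / (t1 - t0)) * (M * (t0 - t1) ^ 2) + M * (tσ - t1) ^ 2 := by
      rw [hE]
      calc |(-((1 - σ) * ((t2 - t1) / (t1 - t0)) * (u t0 - u t1 - u' t1 * (t0 - t1))))
            - (u tσ - u t1 - u' t1 * (tσ - t1))|
          ≤ |(-((1 - σ) * ((t2 - t1) / (t1 - t0)) * (u t0 - u t1 - u' t1 * (t0 - t1))))|
            + |u tσ - u t1 - u' t1 * (tσ - t1)| := abs_sub _ _
        _ = (1 - σ) * ((t2 - t1) / (t1 - t0)) * |u t0 - u t1 - u' t1 * (t0 - t1)|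
            + |u tσ - u t1 - u' t1 * (tσ - t1)| := by
            rw [abs_neg, abs_mul, abs_of_nonneg hPnn]
        _ ≤ (1 - σ) * ((t2 - t1) / (t1 - t0)) * (M * (t0 - t1) ^ 2) + M * (tσ - t1) ^ 2 :=
            add_le_add (mul_le_mul_of_nonneg_left hB hPnn) hA
    have hstep2 : (1 - σ) * ((t2 - t1) / (t1 - t0)) * (M * (t0 - t1) ^ 2) + M * (tσ - t1) ^ 2
        ≤ 2 * M * (t2 - t1) ^ 2 := by
      have h3 : (t2 - t1) * (t1 - t0) ≤ (t2 - t1) * (t2 - t1) :=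
        mul_le_mul_of_nonneg_left hτ'τ hτpos.le
      have h4 : (tσ - t1) ^ 2 ≤ (t2 - t1) ^ 2 := by
        have e0 : 0 ≤ tσ - t1 := by linarith
        have e1 : tσ - t1 ≤ t2 - t1 := by linarith
        exact pow_le_pow_left₀ e0 e1 2
      have h5 : (1 - σ) * ((t2 - t1) / (t1 - t0)) * (M * (t0 - t1) ^ 2)
          ≤ M * (t2 - t1) ^ 2 := by
        have e2 : (1 - σ) * ((t2 - t1) / (t1 - t0)) * (M * (t0 - t1) ^ 2)
            = (1 - σ) * (M * ((t2 - t1) * (t1 - t0))) := by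
          field_simp
          ring
        rw [e2]
        have e3 : M * ((t2 - t1) * (t1 - t0)) ≤ M * ((t2 - t1) * (t2 - t1)) :=
          mul_le_mul_of_nonneg_left h3 hMpos.le
        have e4 : (1 - σ) * (M * ((t2 - t1) * (t1 - t0))) ≤ 1 * (M * ((t2 - t1) * (t2 - t1))) :=
          mul_le_mul (by linarith) e3
            (mul_nonneg hMpos.le (mul_nonneg hτpos.le hτ'pos.le)) (by norm_num)
        calc (1 - σ) * (M * ((t2 - t1) * (t1 - t0))) ≤ 1 * (M * ((t2 - t1) * (t2 - t1))) := e4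
          _ = M * (t2 - t1) ^ 2 := by ring
      have h6 : M * (tσ - t1) ^ 2 ≤ M * (t2 - t1) ^ 2 :=
        mul_le_mul_of_nonneg_left h4 hMpos.le
      linarith
    -- lower bound for t0
    have hcd3 : 0 < c / 3 := by positivity
    have hac : c / 3 ≤ a := by
      rw [ha, hc, div_div, div_le_div_iff₀ (by positivity) hN0]
      have hprod : 3 * (N:ℝ) ≤ (n:ℝ) * (N:ℝ) := mul_le_mul_of_nonneg_right hn3' hN0.le
      linarith [hprod]
    have ht0low : T * (c / 3) ^ r ≤ t0 := by
      rw [ht0]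
      exact mul_le_mul_of_nonneg_left (Real.rpow_le_rpow hcd3.le hac hr0.le) hT.le
    have hT3pos : 0 < T * (c / 3) ^ r := mul_pos hT (Real.rpow_pos_of_pos hcd3 r)
    have hM1 : t0 ^ (α - 2) ≤ (T * (c / 3) ^ r) ^ (α - 2) :=
      Real.rpow_le_rpow_of_nonpos hT3pos ht0low (by linarith)
    have hexp1 : (T * (c / 3) ^ r) ^ (α - 2) = T ^ (α - 2) * (c / 3) ^ (r * (α - 2)) := by
      rw [Real.mul_rpow hT.le (Real.rpow_pos_of_pos hcd3 r).le, ← Real.rpow_mul hcd3.le]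
    have hexp2 : (c / 3) ^ (r * (α - 2)) = c ^ (r * (α - 2)) * (3:ℝ) ^ (r * (2 - α)) := by
      rw [Real.div_rpow hc0.le (by norm_num : (0:ℝ) ≤ 3), div_eq_mul_inv,
        ← Real.rpow_neg (by norm_num : (0:ℝ) ≤ 3),
        show -(r * (α - 2)) = r * (2 - α) by ring]
    have h3le : (3:ℝ) ^ (r * (2 - α)) ≤ (3:ℝ) ^ (2 * r) := by
      apply Real.rpow_le_rpow_of_exponent_le (by norm_num)
      have hra := mul_pos hr0 hα0
      linarith [hra]
    have hMbar : M ≤ C₀ * (T ^ (α - 2) * (c ^ (r * (α - 2)) * (3:ℝ) ^ (2 * r))) := by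
      rw [hM]
      apply mul_le_mul_of_nonneg_left _ hC₀.le
      calc t0 ^ (α - 2) ≤ (T * (c / 3) ^ r) ^ (α - 2) := hM1
        _ = T ^ (α - 2) * (c ^ (r * (α - 2)) * (3:ℝ) ^ (r * (2 - α))) := by
            rw [hexp1, hexp2]
        _ ≤ T ^ (α - 2) * (c ^ (r * (α - 2)) * (3:ℝ) ^ (2 * r)) := by
            apply mul_le_mul_of_nonneg_left _ (Real.rpow_pos_of_pos hT _).le
            exact mul_le_mul_of_nonneg_left h3le (Real.rpow_pos_of_pos hc0 _).le
    -- algebraic identity for the bound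
    have hT2 : T ^ (2:ℝ) = T * T := by
      rw [show (2:ℝ) = ((2:ℕ):ℝ) by norm_num, Real.rpow_natCast]; ring
    have eTT : T ^ (α - 2) * (T * T) = T ^ α := by
      rw [← hT2, ← Real.rpow_add hT]; norm_num
    have ecc : c ^ (r * (α - 2)) * (c ^ (r - 1) * c ^ (r - 1)) = c ^ (r * α - 2) := by
      rw [← Real.rpow_add hc0, ← Real.rpow_add hc0,
        show r * (α - 2) + (r - 1 + (r - 1)) = r * α - 2 by ring]
    have eNN : (1 / (N:ℝ)) * (1 / (N:ℝ)) = (N:ℝ) ^ (-(2:ℝ)) := by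
      rw [Real.rpow_neg hN0.le, show (2:ℝ) = ((2:ℕ):ℝ) by norm_num, Real.rpow_natCast]
      rw [pow_two, mul_inv, one_div]
    have h2eq : 2 * (C₀ * (T ^ (α - 2) * (c ^ (r * (α - 2)) * (3:ℝ) ^ (2 * r))))
          * (T * r * c ^ (r - 1) * (1 / (N:ℝ))) ^ 2
        = C2 * (c ^ (r * α - 2) * (N:ℝ) ^ (-(2:ℝ))) := by
      calc 2 * (C₀ * (T ^ (α - 2) * (c ^ (r * (α - 2)) * (3:ℝ) ^ (2 * r))))
            * (T * r * c ^ (r - 1) * (1 / (N:ℝ))) ^ 2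
          = 2 * C₀ * (3:ℝ) ^ (2 * r) * (r * r)
            * (T ^ (α - 2) * (T * T))
            * (c ^ (r * (α - 2)) * (c ^ (r - 1) * c ^ (r - 1)))
            * ((1 / (N:ℝ)) * (1 / (N:ℝ))) := by ring
        _ = 2 * C₀ * (3:ℝ) ^ (2 * r) * (r * r) * T ^ α * c ^ (r * α - 2)
            * (N:ℝ) ^ (-(2:ℝ)) := by rw [eTT, ecc, eNN]
        _ = C2 * (c ^ (r * α - 2) * (N:ℝ) ^ (-(2:ℝ))) := by rw [hC2]; ring
    -- core mesh inequality
    have hNneg2 : (0:ℝ) ≤ (N:ℝ) ^ (-(2:ℝ)) := (Real.rpow_pos_of_pos hN0 _).le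
    have hcore : c ^ (r * α - 2) * (N:ℝ) ^ (-(2:ℝ)) ≤ (N:ℝ) ^ (-m) := by
      rcases le_or_gt (r * α) 2 with hle | hlt
      · have hmeq : m = r * α := by rw [hm]; exact min_eq_left hle
        have h1N : 1 / (N:ℝ) ≤ c := by
          rw [hc, div_le_div_iff₀ hN0 hN0]
          have := mul_le_mul_of_nonneg_right (by linarith : (1:ℝ) ≤ (n:ℝ)) hN0.le
          linarith
        have h1 : c ^ (r * α - 2) ≤ (1 / (N:ℝ)) ^ (r * α - 2) :=
          Real.rpow_le_rpow_of_nonpos (by positivity) h1N (by linarith)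
        have h2 : (1 / (N:ℝ)) ^ (r * α - 2) = (N:ℝ) ^ (2 - r * α) := by
          rw [one_div, Real.inv_rpow hN0.le, ← Real.rpow_neg hN0.le,
            show -(r * α - 2) = 2 - r * α by ring]
        have h3 : (N:ℝ) ^ (2 - r * α) * (N:ℝ) ^ (-(2:ℝ)) = (N:ℝ) ^ (-(r * α)) := by
          rw [← Real.rpow_add hN0, show 2 - r * α + -(2:ℝ) = -(r * α) by ring]
        calc c ^ (r * α - 2) * (N:ℝ) ^ (-(2:ℝ))
            ≤ (1 / (N:ℝ)) ^ (r * α - 2) * (N:ℝ) ^ (-(2:ℝ)) :=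
              mul_le_mul_of_nonneg_right h1 hNneg2
          _ = (N:ℝ) ^ (-(r * α)) := by rw [h2, h3]
          _ = (N:ℝ) ^ (-m) := by rw [hmeq]
      · have hmeq : m = 2 := by rw [hm]; exact min_eq_right hlt.le
        have h1 : c ^ (r * α - 2) ≤ 1 := Real.rpow_le_one hc0.le hc1 (by linarith)
        calc c ^ (r * α - 2) * (N:ℝ) ^ (-(2:ℝ)) ≤ 1 * (N:ℝ) ^ (-(2:ℝ)) :=
              mul_le_mul_of_nonneg_right h1 hNneg2
          _ = (N:ℝ) ^ (-m) := by rw [one_mul, hmeq]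
    -- final chain
    calc |u t1 + (1 - σ) * ((t2 - t1) / (t1 - t0)) * (u t1 - u t0) - u tσ|
        ≤ (1 - σ) * ((t2 - t1) / (t1 - t0)) * (M * (t0 - t1) ^ 2) + M * (tσ - t1) ^ 2 := habs
      _ ≤ 2 * M * (t2 - t1) ^ 2 := hstep2
      _ ≤ 2 * M * (T * r * c ^ (r - 1) * (1 / (N:ℝ))) ^ 2 := by
          apply mul_le_mul_of_nonneg_left (pow_le_pow_left₀ hτpos.le hτle 2) (by linarith)
      _ ≤ 2 * (C₀ * (T ^ (α - 2) * (c ^ (r * (α - 2)) * (3:ℝ) ^ (2 * r))))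
            * (T * r * c ^ (r - 1) * (1 / (N:ℝ))) ^ 2 := by
          apply mul_le_mul_of_nonneg_right _ (sq_nonneg _)
          linarith [hMbar]
      _ = C2 * (c ^ (r * α - 2) * (N:ℝ) ^ (-(2:ℝ))) := h2eq
      _ ≤ C2 * (N:ℝ) ^ (-m) := mul_le_mul_of_nonneg_left hcore hC2pos.le
      _ ≤ (C1 + C2) * (N:ℝ) ^ (-m) := mul_le_mul_of_nonneg_right (by linarith) hNmpos.le
end

section
/- Let u : [0,T] → ℝ be continuous on [0,T] and twice continuously differentiable on (0,T], satisfying |u'(t)| ≤ C₀ t^{α−1} and |u''(t)| ≤ C₀ t^{α−2} for all t ∈ (0,T]. On the graded mesh t_n = T(n/N)^r, define the interpolated value u^{n,σ} = (1−σ) u(t_n) + σ u(t_{n−1}) for n ≥ 1. Then there exists a constant C, depending only on C₀, α, σ, r, T and independent of n and N, such that |u^{n,σ} − u(t_{n−σ})| ≤ C N^{−min{rα, 2}} for all 1 ≤ n ≤ N. -/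
open Set in
lemma aux_holder (T α C₀ : ℝ) (hα0 : 0 < α) (u u' : ℝ → ℝ)
    (hu : ContinuousOn u (Set.Icc 0 T))
    (hu' : ∀ t ∈ Set.Ioc (0:ℝ) T, HasDerivAt u (u' t) t)
    (hb1 : ∀ t ∈ Set.Ioc (0:ℝ) T, |u' t| ≤ C₀ * t ^ (α-1)) :
    ∀ a b : ℝ, 0 ≤ a → a ≤ b → b ≤ T → |u b - u a| ≤ C₀/α * (b ^ α - a ^ α) := by
  have hcont : ContinuousOn (fun t : ℝ => C₀/α * t ^ α) (Icc 0 T) := by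
    apply ContinuousOn.mul continuousOn_const
    exact fun t _ => (Real.continuousAt_rpow_const t α (Or.inr hα0.le)).continuousWithinAt
  have key : ∀ ε : ℝ, ε = 1 ∨ ε = -1 →
      MonotoneOn (fun t => C₀/α * t ^ α - ε * u t) (Icc 0 T) := by
    intro ε hε
    have hder : ∀ x ∈ Ioo (0:ℝ) T,
        HasDerivAt (fun t => C₀/α * t ^ α - ε * u t) (C₀ * x ^ (α-1) - ε * u' x) x := by
      intro x hx
      have h1 : HasDerivAt (fun t : ℝ => t ^ α) (α * x ^ (α-1)) x :=
        Real.hasDerivAt_rpow_const (Or.inl hx.1.ne')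
      have h2 := (h1.const_mul (C₀/α)).sub ((hu' x ⟨hx.1, hx.2.le⟩).const_mul ε)
      refine h2.congr_deriv ?_
      rw [← mul_assoc, div_mul_cancel₀ C₀ hα0.ne']
    apply monotoneOn_of_deriv_nonneg (convex_Icc 0 T)
    · exact hcont.sub (continuousOn_const.mul hu)
    · rw [interior_Icc]
      exact fun x hx => ((hder x hx).differentiableAt).differentiableWithinAt
    · rw [interior_Icc]
      intro x hx
      rw [(hder x hx).deriv]
      have hb := hb1 x ⟨hx.1, hx.2.le⟩
      have habs : ε * u' x ≤ |u' x| := by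
        rcases hε with rfl | rfl
        · simpa using le_abs_self _
        · simpa using neg_le_abs (u' x)
      linarith
  intro a b ha hab hbT
  have hma : a ∈ Icc 0 T := ⟨ha, hab.trans hbT⟩
  have hmb : b ∈ Icc 0 T := ⟨ha.trans hab, hbT⟩
  have h1 := key 1 (Or.inl rfl) hma hmb hab
  have h2 := key (-1) (Or.inr rfl) hma hmb hab
  simp only [one_mul, neg_one_mul] at h1 h2
  rw [abs_sub_le_iff]
  constructor <;> linarith

open Set in
lemma aux_taylor (T α σ C₀ : ℝ) (hα1 : α < 1) (hσ0 : 0 < σ) (hσ1 : σ < 1) (hC₀ : 0 < C₀)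
    (u u' u'' : ℝ → ℝ)
    (hu' : ∀ t ∈ Set.Ioc (0:ℝ) T, HasDerivAt u (u' t) t)
    (hu'' : ∀ t ∈ Set.Ioc (0:ℝ) T, HasDerivAt u' (u'' t) t)
    (hb2 : ∀ t ∈ Set.Ioc (0:ℝ) T, |u'' t| ≤ C₀ * t ^ (α - 2))
    (a b : ℝ) (ha : 0 < a) (hab : a ≤ b) (hbT : b ≤ T) :
    |(1 - σ) * u b + σ * u a - u ((1-σ)*b + σ*a)| ≤
      (C₀ * a ^ (α - 2)) * (b - a) * (b - a) := by
  set M : ℝ := C₀ * a ^ (α - 2) with hMdef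
  have hM0 : 0 ≤ M := by positivity
  have hsub : Icc a b ⊆ Ioc 0 T := fun z hz => ⟨lt_of_lt_of_le ha hz.1, hz.2.trans hbT⟩
  -- Lipschitz bound on u'
  have lip : ∀ y ∈ Icc a b, ∀ z ∈ Icc a b, |u' z - u' y| ≤ M * |z - y| := by
    intro y hy z hz
    have := Convex.norm_image_sub_le_of_norm_hasDerivWithin_le
      (f := u') (f' := u'') (s := Icc a b) (C := M)
      (fun w hw => (hu'' w (hsub hw)).hasDerivWithinAt)
      (fun w hw => by
        have h1 := hb2 w (hsub hw)
        have h2 : w ^ (α - 2) ≤ a ^ (α - 2) :=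
          Real.rpow_le_rpow_of_nonpos ha hw.1 (by linarith)
        rw [Real.norm_eq_abs]
        nlinarith)
      (convex_Icc a b) hy hz
    simpa [Real.norm_eq_abs] using this
  set x : ℝ := (1-σ)*b + σ*a with hxdef
  have hxa : a ≤ x := by nlinarith
  have hxb : x ≤ b := by nlinarith
  have hx : x ∈ Icc a b := ⟨hxa, hxb⟩
  -- first-order Taylor bound at x
  have tay : ∀ y ∈ Icc a b, |u y - u x - u' x * (y - x)| ≤ (M * (b - a)) * (b - a) := by
    intro y hy
    have hg : ∀ z ∈ Icc a b, HasDerivWithinAt (fun t => u t - u' x * t) (u' z - u' x) (Icc a b) z := by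
      intro z hz
      have h := (hu' z (hsub hz)).sub ((hasDerivAt_id z).const_mul (u' x))
      exact h.hasDerivWithinAt.congr_deriv (by ring)
    have hbound : ∀ z ∈ Icc a b, ‖u' z - u' x‖ ≤ M * (b - a) := by
      intro z hz
      rw [Real.norm_eq_abs]
      have h1 := lip x hx z hz
      have h2 : |z - x| ≤ b - a := by
        rw [abs_sub_le_iff]; constructor <;> [linarith [hz.2, hz.1]; linarith [hz.1, hz.2]]
      nlinarith
    have := Convex.norm_image_sub_le_of_norm_hasDerivWithin_le hg hbound (convex_Icc a b) hx hy
    rw [Real.norm_eq_abs, Real.norm_eq_abs] at this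
    have hyx : |y - x| ≤ b - a := by
      rw [abs_sub_le_iff]; constructor <;> [linarith [hy.2]; linarith [hy.1]]
    have heq : u y - u' x * y - (u x - u' x * x) = u y - u x - u' x * (y - x) := by ring
    rw [heq] at this
    calc |u y - u x - u' x * (y - x)| ≤ (M * (b-a)) * |y - x| := this
      _ ≤ (M * (b-a)) * (b - a) := by
          apply mul_le_mul_of_nonneg_left hyx
          exact mul_nonneg hM0 (by linarith)
  have t1 := tay b ⟨hab, le_refl b⟩
  have t2 := tay a ⟨le_refl a, hab⟩
  have hid : (1-σ) * u b + σ * u a - u x =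
      (1-σ) * (u b - u x - u' x * (b - x)) + σ * (u a - u x - u' x * (a - x)) := by
    rw [hxdef]; ring
  calc |(1-σ) * u b + σ * u a - u x|
      = |(1-σ) * (u b - u x - u' x * (b - x)) + σ * (u a - u x - u' x * (a - x))| := by rw [hid]
    _ ≤ (1-σ) * |u b - u x - u' x * (b - x)| + σ * |u a - u x - u' x * (a - x)| := by
        refine (abs_add_le _ _).trans ?_
        rw [abs_mul, abs_mul, abs_of_nonneg (by linarith), abs_of_nonneg hσ0.le]
    _ ≤ (1-σ) * ((M * (b-a)) * (b-a)) + σ * ((M * (b-a)) * (b-a)) := by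
        apply add_le_add
        · exact mul_le_mul_of_nonneg_left t1 (by linarith)
        · exact mul_le_mul_of_nonneg_left t2 hσ0.le
    _ = M * (b - a) * (b - a) := by ring

set_option maxHeartbeats 1000000 in
/-- Linearization error of the interpolation `u^{n,σ} = (1-σ) u(t_n) + σ u(t_{n-1})`:
for `u` continuous on `[0,T]`, twice continuously differentiable on `(0,T]` with
`|u'(t)| ≤ C₀ t^{α-1}` and `|u''(t)| ≤ C₀ t^{α-2}`, one has
`|u^{n,σ} - u(t_{n-σ})| ≤ C N^{-min{rα,2}}` for `1 ≤ n ≤ N`, with `C` independent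
of `n` and `N`. -/
theorem stmt9 (T r α σ C₀ : ℝ) (hT : 0 < T) (hr : 1 ≤ r) (hα0 : 0 < α) (hα1 : α < 1)
    (hσ0 : 0 < σ) (hσ1 : σ < 1) (hC₀ : 0 < C₀)
    (u u' u'' : ℝ → ℝ)
    (hu : ContinuousOn u (Set.Icc 0 T))
    (hu' : ∀ t ∈ Set.Ioc (0 : ℝ) T, HasDerivAt u (u' t) t)
    (hu'' : ∀ t ∈ Set.Ioc (0 : ℝ) T, HasDerivAt u' (u'' t) t)
    (hu''c : ContinuousOn u'' (Set.Ioc 0 T))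
    (hb1 : ∀ t ∈ Set.Ioc (0 : ℝ) T, |u' t| ≤ C₀ * t ^ (α - 1))
    (hb2 : ∀ t ∈ Set.Ioc (0 : ℝ) T, |u'' t| ≤ C₀ * t ^ (α - 2)) :
    ∃ C : ℝ, 0 < C ∧ ∀ N : ℕ, 2 ≤ N → ∀ n : ℕ, 1 ≤ n → n ≤ N →
      |(1 - σ) * u (meshT T r N n) + σ * u (meshT T r N (n - 1)) -
        u (meshTSig T r σ N n)| ≤ C * (N : ℝ) ^ (-min (r * α) 2) := by
  have hr0 : (0:ℝ) < r := by linarith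
  have hrα : 0 < r * α := mul_pos hr0 hα0
  have hTα : (0:ℝ) < T ^ α := Real.rpow_pos_of_pos hT α
  have h2r : (0:ℝ) < (2:ℝ) ^ (2*r) := Real.rpow_pos_of_pos two_pos _
  set C : ℝ := C₀/α * T^α + C₀ * T^α * r^2 * (2:ℝ)^(2*r) with hCdef
  have hC1 : 0 ≤ C₀/α * T^α := by positivity
  have hC2 : 0 ≤ C₀ * T^α * r^2 * (2:ℝ)^(2*r) := by positivity
  have hCpos : 0 < C := by
    have : 0 < C₀/α * T^α := by positivity
    have : 0 < C₀ * T^α * r^2 * (2:ℝ)^(2*r) := by positivity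
    positivity
  refine ⟨C, hCpos, ?_⟩
  intro N hN n hn1 hnN
  have hν0 : (0:ℝ) < (N:ℝ) := by exact_mod_cast Nat.lt_of_lt_of_le Nat.zero_lt_two hN
  have hν1 : (1:ℝ) ≤ (N:ℝ) := by exact_mod_cast Nat.one_le_of_lt hN
  set ν : ℝ := (N:ℝ) with hνdef
  set m : ℝ := min (r*α) 2 with hmdef
  clear_value m
  have hνmpos : 0 < ν ^ (-m) := Real.rpow_pos_of_pos hν0 _
  have hνmle : ν ^ (-(r*α)) ≤ ν ^ (-m) :=
    Real.rpow_le_rpow_of_exponent_le hν1 (neg_le_neg (hmdef ▸ min_le_left _ _))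
  clear_value ν C
  rcases eq_or_lt_of_le hn1 with h1 | h2
  · -- case n = 1
    subst h1
    have ht0 : meshT T r N 0 = 0 := by
      simp [meshT, Real.zero_rpow (by linarith : r ≠ 0)]
    have ht1 : meshT T r N 1 = T * (1/ν) ^ r := by simp [meshT, hνdef]
    set t1 : ℝ := T * (1/ν) ^ r with ht1def
    have ht1pos : 0 < t1 := by positivity
    have ht1T : t1 ≤ T := by
      have h1 : (1/ν) ^ r ≤ 1 :=
        Real.rpow_le_one (by positivity) (by rw [div_le_one hν0]; exact hν1) hr0.le
      nlinarith
    clear_value t1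
    have hsig : meshTSig T r σ N 1 = (1-σ) * t1 := by
      simp only [meshTSig, show (1:ℕ)-1 = 0 from rfl, ht0, ht1]
      ring
    simp only [show (1:ℕ)-1 = 0 from rfl]
    rw [ht0, ht1, hsig]
    set x : ℝ := (1-σ) * t1 with hxdef
    have hx0 : 0 ≤ x := by nlinarith
    have hxt1 : x ≤ t1 := by nlinarith
    clear_value x
    have hAA := aux_holder T α C₀ hα0 u u' hu hu' hb1
    have e1 := hAA x t1 hx0 hxt1 ht1T
    have e2 := hAA 0 x le_rfl hx0 (hxt1.trans ht1T)
    have e2' : |u 0 - u x| ≤ C₀/α * (x^α - (0:ℝ)^α) := by rwa [abs_sub_comm]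
    have h0α : (0:ℝ)^α = 0 := Real.zero_rpow hα0.ne'
    rw [h0α] at e2'
    have hxα : x^α ≤ t1^α := Real.rpow_le_rpow hx0 hxt1 hα0.le
    have hxαnn : 0 ≤ x^α := Real.rpow_nonneg hx0 _
    have hK : 0 ≤ C₀/α := by positivity
    have hEb : |(1-σ) * u t1 + σ * u 0 - u x| ≤ C₀/α * t1^α := by
      have hid : (1-σ) * u t1 + σ * u 0 - u x
          = (1-σ) * (u t1 - u x) + σ * (u 0 - u x) := by ring
      rw [hid]
      calc |(1-σ) * (u t1 - u x) + σ * (u 0 - u x)|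
          ≤ (1-σ) * |u t1 - u x| + σ * |u 0 - u x| := by
            refine (abs_add_le _ _).trans ?_
            rw [abs_mul, abs_mul, abs_of_nonneg (by linarith), abs_of_nonneg hσ0.le]
        _ ≤ (1-σ) * (C₀/α * (t1^α - x^α)) + σ * (C₀/α * (x^α - 0)) := by
            exact add_le_add (mul_le_mul_of_nonneg_left e1 (by linarith))
              (mul_le_mul_of_nonneg_left e2' hσ0.le)
        _ ≤ C₀/α * t1^α := by
            have hσ1' : (0:ℝ) ≤ 1 - σ := by linarith
            nlinarith [mul_nonneg (mul_nonneg hK hσ0.le) (sub_nonneg.2 hxα),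
              mul_nonneg (mul_nonneg hK hσ1') hxαnn]
    have ht1α : t1^α = T^α * ν^(-(r*α)) := by
      rw [ht1def, Real.mul_rpow hT.le (Real.rpow_nonneg (by positivity) _),
        ← Real.rpow_mul (by positivity : (0:ℝ) ≤ 1/ν), one_div, Real.inv_rpow hν0.le,
        ← Real.rpow_neg hν0.le]
    calc |(1-σ) * u t1 + σ * u 0 - u x| ≤ C₀/α * t1^α := hEb
      _ = (C₀/α * T^α) * ν^(-(r*α)) := by rw [ht1α]; ring
      _ ≤ (C₀/α * T^α) * ν^(-m) := mul_le_mul_of_nonneg_left hνmle (by positivity)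
      _ ≤ C * ν^(-m) := mul_le_mul_of_nonneg_right (by rw [hCdef]; nlinarith) hνmpos.le
  · -- case 2 ≤ n
    have hn2 : 2 ≤ n := h2
    have hn2r : (2:ℝ) ≤ (n:ℝ) := by exact_mod_cast hn2
    have hn0 : (0:ℝ) < (n:ℝ) := by linarith
    have hnν : (n:ℝ) ≤ ν := by rw [hνdef]; exact_mod_cast hnN
    have hcast : ((n-1:ℕ):ℝ) = (n:ℝ) - 1 := by
      push_cast [Nat.cast_sub hn1]; ring
    set p : ℝ := (n:ℝ)/ν with hpdef
    set q : ℝ := ((n:ℝ)-1)/ν with hqdef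
    have hp0 : 0 < p := div_pos hn0 hν0
    have hp1 : p ≤ 1 := by rw [hpdef, div_le_one hν0]; exact hnν
    have hq0 : 0 < q := div_pos (by linarith) hν0
    have hqp : q ≤ p := by
      rw [hpdef, hqdef]; gcongr; linarith
    have hq2 : p/2 ≤ q := by
      rw [hpdef, hqdef, div_div, div_le_div_iff₀ (by linarith) hν0]
      nlinarith
    clear_value p q
    have hbval : meshT T r N n = T * p ^ r := by simp [meshT, hpdef, hνdef]
    have haval : meshT T r N (n-1) = T * q ^ r := by
      simp [meshT, hcast, hqdef, hνdef]
    have hsig : meshTSig T r σ N n = (1-σ) * (T * p ^ r) + σ * (T * q ^ r) := by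
      simp [meshTSig, hbval, haval]
    rw [hbval, haval, hsig]
    set A : ℝ := T * q ^ r with hAdef
    set B : ℝ := T * p ^ r with hBdef
    have hA0 : 0 < A := by positivity
    have hAB : A ≤ B := by
      have := Real.rpow_le_rpow hq0.le hqp hr0.le
      nlinarith
    have hBT : B ≤ T := by
      have h1 : p ^ r ≤ 1 := Real.rpow_le_one hp0.le hp1 hr0.le
      nlinarith
    clear_value A B
    have key := aux_taylor T α σ C₀ hα1 hσ0 hσ1 hC₀ u u' u'' hu' hu'' hb2 A B hA0 hAB hBT
    -- step (i): B - A ≤ T*r*p^r/n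
    set D : ℝ := T * r * p ^ r / (n:ℝ) with hDdef
    have hD0 : 0 ≤ D := by positivity
    clear_value D
    have hstep1 : B - A ≤ D := by
      have hber : 1 + r * (-1/(n:ℝ)) ≤ (1 + (-1/(n:ℝ))) ^ r := by
        apply one_add_mul_self_le_rpow_one_add _ hr
        rw [neg_div, neg_le_neg_iff]
        rw [div_le_one hn0]; linarith
      have hq_eq : q = p * (1 + (-1/(n:ℝ))) := by
        rw [hpdef, hqdef]; field_simp; ring
      have hqr : q ^ r = p ^ r * (1 + (-1/(n:ℝ))) ^ r := by
        have h01 : (0:ℝ) ≤ 1 + -1/(n:ℝ) := by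
          rw [neg_div]
          have : 1/(n:ℝ) ≤ 1 := by rw [div_le_one hn0]; linarith
          linarith
        rw [hq_eq, Real.mul_rpow hp0.le h01]
      have hpr0 : (0:ℝ) ≤ p ^ r := (Real.rpow_pos_of_pos hp0 r).le
      have : p ^ r * (1 + r * (-1/(n:ℝ))) ≤ q ^ r := by
        rw [hqr]; exact mul_le_mul_of_nonneg_left hber hpr0
      rw [hAdef, hBdef, hDdef]
      have hexp : p ^ r * (1 + r * (-1/(n:ℝ))) = p ^ r - r * p ^ r / (n:ℝ) := by
        field_simp; ring
      rw [hexp] at this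
      have : p ^ r - q ^ r ≤ r * p ^ r / (n:ℝ) := by linarith
      calc T * p ^ r - T * q ^ r = T * (p ^ r - q ^ r) := by ring
        _ ≤ T * (r * p ^ r / (n:ℝ)) := mul_le_mul_of_nonneg_left this hT.le
        _ = T * r * p ^ r / (n:ℝ) := by ring
    -- step (ii): A^(α-2) ≤ T^(α-2) * ((p/2)^r)^(α-2)
    have hp2r : (0:ℝ) < (p/2) ^ r := Real.rpow_pos_of_pos (by linarith) r
    have hstep2 : A ^ (α-2) ≤ T ^ (α-2) * ((p/2) ^ r) ^ (α-2) := by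
      have hA'A : T * (p/2) ^ r ≤ A := by
        have := Real.rpow_le_rpow (by linarith : (0:ℝ) ≤ p/2) hq2 hr0.le
        rw [hAdef]; nlinarith
      calc A ^ (α-2) ≤ (T * (p/2) ^ r) ^ (α-2) :=
            Real.rpow_le_rpow_of_nonpos (by positivity) hA'A (by linarith)
        _ = T ^ (α-2) * ((p/2) ^ r) ^ (α-2) :=
            Real.mul_rpow hT.le hp2r.le
    -- the key numeric inequality
    have hKEY : ((p/2) ^ r) ^ (α-2) * (p ^ r) ^ 2 / (n:ℝ) ^ 2 ≤ (2:ℝ) ^ (2*r) * ν ^ (-m) := by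
      have e1 : ((p/2) ^ r) ^ (α-2) = p^(r*(α-2)) * (2:ℝ)^(-(r*(α-2))) := by
        rw [← Real.rpow_mul (by positivity : (0:ℝ) ≤ p/2),
          Real.div_rpow hp0.le (by norm_num : (0:ℝ) ≤ 2),
          Real.rpow_neg (by norm_num : (0:ℝ) ≤ (2:ℝ)), div_eq_mul_inv]
      have e2 : (p ^ r) ^ 2 = p ^ (2*r) := by
        rw [← Real.rpow_natCast (p^r) 2, ← Real.rpow_mul hp0.le]
        congr 1; push_cast; ring
      have e3 : p^(r*(α-2)) * p^(2*r) = p^(r*α) := by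
        rw [← Real.rpow_add hp0]; congr 1; ring
      have e4 : (2:ℝ)^(-(r*(α-2))) ≤ (2:ℝ)^(2*r) := by
        apply Real.rpow_le_rpow_of_exponent_le (by norm_num : (1:ℝ) ≤ 2)
        rw [show -(r*(α-2)) = 2*r - r*α from by ring]
        linarith [hrα.le]
      have hn1r : (1:ℝ) ≤ (n:ℝ) := by linarith
      have hn2e : (n:ℝ)^((2:ℝ)) = (n:ℝ)^(2:ℕ) := by
        rw [← Real.rpow_natCast (n:ℝ) 2]; norm_num
      have hν2e : ν^((2:ℝ)) = ν^(2:ℕ) := by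
        rw [← Real.rpow_natCast ν 2]; norm_num
      have hpn : p^(r*α) = (n:ℝ)^(r*α) / ν^(r*α) := by
        rw [hpdef, Real.div_rpow hn0.le hν0.le]
      have e5 : p^(r*α) / (n:ℝ)^2 ≤ ν^(-m) := by
        rcases le_total (r*α) 2 with hc | hc
        · rw [hmdef, min_eq_left hc, hpn, Real.rpow_neg hν0.le]
          have h1 : (n:ℝ)^(r*α) ≤ (n:ℝ)^(2:ℕ) := by
            have := Real.rpow_le_rpow_of_exponent_le hn1r hc
            rwa [hn2e] at this
          rw [div_div, div_le_iff₀ (by positivity)]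
          rw [← mul_assoc, inv_mul_cancel₀ (ne_of_gt (Real.rpow_pos_of_pos hν0 _)), one_mul]
          exact h1
        · rw [hmdef, min_eq_right hc, hpn]
          have key2 : (n:ℝ)^(r*α-2) ≤ ν^(r*α-2) :=
            Real.rpow_le_rpow hn0.le hnν (by linarith)
          rw [Real.rpow_sub hn0, Real.rpow_sub hν0, hn2e, hν2e] at key2
          rw [div_le_div_iff₀ (by positivity) (by positivity)] at key2
          rw [Real.rpow_neg hν0.le, hν2e, div_div, div_le_iff₀ (by positivity),
            inv_mul_eq_div, le_div_iff₀ (by positivity)]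
          linarith [key2]
      calc ((p/2) ^ r) ^ (α-2) * (p ^ r) ^ 2 / (n:ℝ) ^ 2
          = (2:ℝ)^(-(r*(α-2))) * (p^(r*α) / (n:ℝ)^2) := by rw [e1, e2, ← e3]; ring
        _ ≤ (2:ℝ)^(2*r) * ν^(-m) :=
            mul_le_mul e4 e5 (by positivity) (by positivity)
    -- assemble
    have hMnn : 0 ≤ A ^ (α-2) := Real.rpow_nonneg hA0.le _
    have hTT : T ^ (α-2) * T^2 = T ^ α := by
      have h : (T:ℝ)^(2:ℕ) = T^((2:ℝ)) := by
        rw [← Real.rpow_natCast T 2]; norm_num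
      rw [h, ← Real.rpow_add hT]; norm_num
    have hBA0 : 0 ≤ B - A := by linarith
    calc |(1-σ) * u B + σ * u A - u ((1-σ)*B + σ*A)|
        ≤ (C₀ * A ^ (α-2)) * (B - A) * (B - A) := key
      _ ≤ (C₀ * (T ^ (α-2) * ((p/2) ^ r) ^ (α-2))) * D * D := by
          have h1 : C₀ * A ^ (α-2) ≤ C₀ * (T ^ (α-2) * ((p/2) ^ r) ^ (α-2)) :=
            mul_le_mul_of_nonneg_left hstep2 hC₀.le
          have h2 : (C₀ * A ^ (α-2)) * (B-A) ≤ (C₀ * (T ^ (α-2) * ((p/2) ^ r) ^ (α-2))) * D :=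
            mul_le_mul h1 hstep1 hBA0 (by positivity)
          exact mul_le_mul h2 hstep1 hBA0 (by positivity)
      _ = (C₀ * T ^ (α-2) * T^2 * r^2) * (((p/2) ^ r) ^ (α-2) * (p ^ r) ^ 2 / (n:ℝ) ^ 2) := by
          rw [hDdef]; field_simp
      _ ≤ (C₀ * T ^ (α-2) * T^2 * r^2) * ((2:ℝ) ^ (2*r) * ν ^ (-m)) := by
          apply mul_le_mul_of_nonneg_left hKEY
          positivity
      _ = (C₀ * T ^ α * r^2 * (2:ℝ) ^ (2*r)) * ν ^ (-m) := by rw [← hTT]; ring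
      _ ≤ C * ν ^ (-m) := by
          apply mul_le_mul_of_nonneg_right ?_ hνmpos.le
          rw [hCdef]
          linarith [hC1]
end

section
/- Let E be a real Banach space and let f : [0, t₁] → E be continuous on [0, t₁] and differentiable on (0, t₁) with ‖f'(s)‖ ≤ C₀ s^{α−1} for all s ∈ (0, t₁), where 0 < α < 1. Then the right-rectangle quadrature error satisfies ‖ t_{1−σ} f(t_{1−σ}) − ∫_0^{t_{1−σ}} f(s) ds ‖ ≤ C₀ t₁^{1+α} = C₀ T^{1+α} N^{−r(1+α)}, where t₁ = T N^{−r} and t_{1−σ} = (1−σ) t₁ for σ ∈ (0,1). -/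
open MeasureTheory

/-- Right-rectangle quadrature error on the first graded-mesh interval: for `f`
continuous on `[0,t₁]`, differentiable on `(0,t₁)` with `‖f'(s)‖ ≤ C₀ s^{α-1}`,
one has `‖t_{1-σ} f(t_{1-σ}) - ∫_0^{t_{1-σ}} f(s) ds‖ ≤ C₀ t₁^{1+α}
= C₀ T^{1+α} N^{-r(1+α)}`, where `t₁ = T N^{-r}` and `t_{1-σ} = (1-σ) t₁`. -/
theorem stmt11 (E : Type*) [NormedAddCommGroup E] [NormedSpace ℝ E] [CompleteSpace E]
    (T r α σ C₀ : ℝ) (hT : 0 < T) (hr : 1 ≤ r) (hα0 : 0 < α) (hα1 : α < 1)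
    (hσ0 : 0 < σ) (hσ1 : σ < 1) (hC₀ : 0 < C₀)
    (N : ℕ) (hN : 2 ≤ N)
    (t₁ : ℝ) (ht₁ : t₁ = T * (N : ℝ) ^ (-r))
    (f f' : ℝ → E)
    (hf : ContinuousOn f (Set.Icc 0 t₁))
    (hf' : ∀ s ∈ Set.Ioo (0 : ℝ) t₁, HasDerivAt f (f' s) s)
    (hb : ∀ s ∈ Set.Ioo (0 : ℝ) t₁, ‖f' s‖ ≤ C₀ * s ^ (α - 1)) :
    ‖((1 - σ) * t₁) • f ((1 - σ) * t₁) - ∫ s in (0 : ℝ)..((1 - σ) * t₁), f s‖ ≤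
        C₀ * t₁ ^ (1 + α) ∧
      C₀ * t₁ ^ (1 + α) = C₀ * T ^ (1 + α) * (N : ℝ) ^ (-(r * (1 + α))) := by
  have hN0 : (0 : ℝ) < (N : ℝ) := by
    have : 0 < N := by omega
    exact_mod_cast this
  have ht₁pos : 0 < t₁ := by
    rw [ht₁]
    exact mul_pos hT (Real.rpow_pos_of_pos hN0 _)
  set τ : ℝ := (1 - σ) * t₁ with hτdef
  have hτpos : 0 < τ := mul_pos (by linarith) ht₁pos
  have hτlt : τ < t₁ := by
    have : (1 - σ) * t₁ < 1 * t₁ := by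
      apply mul_lt_mul_of_pos_right (by linarith) ht₁pos
    simpa using this
  -- MVT bound on [s, τ]
  have mvt : ∀ s ∈ Set.Ioc (0 : ℝ) τ, ‖f τ - f s‖ ≤ C₀ / α * (τ ^ α - s ^ α) := by
    intro s hs
    obtain ⟨hs0, hsτ⟩ := hs
    have key := image_norm_le_of_norm_deriv_right_le_deriv_boundary'
      (f := fun x => f x - f s) (f' := f') (a := s) (b := τ)
      (B := fun u => C₀ / α * (u ^ α - s ^ α)) (B' := fun u => C₀ * u ^ (α - 1))
      (by
        apply ContinuousOn.sub _ continuousOn_const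
        exact hf.mono (Set.Icc_subset_Icc hs0.le (le_of_lt hτlt)))
      (by
        intro x hx
        have hx' : x ∈ Set.Ioo (0 : ℝ) t₁ :=
          ⟨lt_of_lt_of_le hs0 hx.1, lt_trans hx.2 hτlt⟩
        exact (((hf' x hx').sub_const (f s))).hasDerivWithinAt)
      (by simp)
      (by
        apply continuousOn_const.mul
        apply ContinuousOn.sub _ continuousOn_const
        intro u hu
        exact (Real.continuousAt_rpow_const u α
          (Or.inl (lt_of_lt_of_le hs0 hu.1).ne')).continuousWithinAt)
      (by
        intro x hx
        have hx0 : 0 < x := lt_of_lt_of_le hs0 hx.1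
        have hd : HasDerivAt (fun u : ℝ => C₀ / α * (u ^ α - s ^ α)) (C₀ * x ^ (α - 1)) x := by
          have h1 : HasDerivAt (fun u : ℝ => u ^ α) (α * x ^ (α - 1)) x :=
            Real.hasDerivAt_rpow_const (p := α) (Or.inl hx0.ne')
          have h2 := ((h1.sub_const (s ^ α)).const_mul (C₀ / α))
          exact h2.congr_deriv (by rw [← mul_assoc, div_mul_cancel₀ _ hα0.ne'])
        exact hd.hasDerivWithinAt)
      (by
        intro x hx
        have hx' : x ∈ Set.Ioo (0 : ℝ) t₁ :=
          ⟨lt_of_lt_of_le hs0 hx.1, lt_trans hx.2 hτlt⟩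
        exact hb x hx')
    have := key (x := τ) ⟨hsτ, le_refl τ⟩
    simpa using this
  -- integrability
  have hfint : IntervalIntegrable f volume 0 τ := by
    apply ContinuousOn.intervalIntegrable
    rw [Set.uIcc_of_le hτpos.le]
    exact hf.mono (Set.Icc_subset_Icc le_rfl hτlt.le)
  have hgint : IntervalIntegrable (fun s : ℝ => C₀ / α * (τ ^ α - s ^ α)) volume 0 τ := by
    apply IntervalIntegrable.const_mul
    exact intervalIntegrable_const.sub (intervalIntegral.intervalIntegrable_rpow (Or.inl hα0.le))
  -- rewrite error as an integral
  have hrw : τ • f τ - ∫ s in (0 : ℝ)..τ, f s = ∫ s in (0 : ℝ)..τ, (f τ - f s) := by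
    rw [intervalIntegral.integral_sub intervalIntegrable_const hfint,
      intervalIntegral.integral_const, sub_zero]
  have hval : (∫ s in (0:ℝ)..τ, C₀ / α * (τ ^ α - s ^ α))
      = C₀ / α * (τ * τ ^ α - (τ ^ (α + 1) - (0:ℝ) ^ (α + 1)) / (α + 1)) := by
    rw [intervalIntegral.integral_const_mul,
      intervalIntegral.integral_sub intervalIntegrable_const
        (intervalIntegral.intervalIntegrable_rpow (Or.inl hα0.le)),
      intervalIntegral.integral_const,
      integral_rpow (Or.inl (by linarith))]
    simp [smul_eq_mul, mul_comm]
  constructor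
  · rw [hrw]
    calc ‖∫ s in (0:ℝ)..τ, (f τ - f s)‖
        ≤ ‖∫ s in (0:ℝ)..τ, C₀ / α * (τ ^ α - s ^ α)‖ := by
          apply intervalIntegral.norm_integral_le_abs_of_norm_le _ hgint
          filter_upwards [ae_restrict_mem measurableSet_uIoc] with s hs
          rw [Set.uIoc_of_le hτpos.le] at hs
          exact mvt s hs
      _ ≤ C₀ * t₁ ^ (1 + α) := by
          rw [hval, Real.zero_rpow (by linarith), Real.rpow_add hτpos α 1, Real.rpow_one,
            Real.norm_eq_abs]
          rw [abs_of_nonneg (by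
            have hτα : (0:ℝ) ≤ τ ^ α := (Real.rpow_pos_of_pos hτpos _).le
            have h1 : τ ^ α * τ ≤ (τ * τ ^ α) * (α + 1) := by nlinarith [mul_nonneg hτpos.le hτα]
            have h2 : (τ ^ α * τ - 0) / (α + 1) ≤ τ * τ ^ α := by
              rw [div_le_iff₀ (by linarith)]; nlinarith
            have : 0 ≤ τ * τ ^ α - (τ ^ α * τ - 0) / (α + 1) := by linarith
            positivity)]
          have hττ : τ * τ ^ α = τ ^ α * τ := mul_comm _ _
          have hτα : (0:ℝ) < τ ^ α := Real.rpow_pos_of_pos hτpos _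
          have hle : τ ^ α * τ ≤ t₁ ^ α * t₁ := by
            apply mul_le_mul _ hτlt.le hτpos.le (Real.rpow_nonneg (by linarith) _)
            exact Real.rpow_le_rpow hτpos.le hτlt.le hα0.le
          have ht₁' : t₁ ^ (1 + α) = t₁ ^ α * t₁ := by
            rw [Real.rpow_add ht₁pos, Real.rpow_one, mul_comm]
          rw [ht₁']
          have h1 : C₀ / α * (τ * τ ^ α - (τ ^ α * τ - 0) / (α + 1)) =
              C₀ * (τ ^ α * τ) / (α + 1) := by
            field_simp
            ring
          rw [h1]
          calc C₀ * (τ ^ α * τ) / (α + 1) ≤ C₀ * (τ ^ α * τ) / 1 := by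
                apply div_le_div_of_nonneg_left _ one_pos (by linarith)
                positivity
            _ = C₀ * (τ ^ α * τ) := by ring
            _ ≤ C₀ * (t₁ ^ α * t₁) := by
                exact mul_le_mul_of_nonneg_left hle hC₀.le
  · rw [ht₁, Real.mul_rpow hT.le (Real.rpow_nonneg hN0.le _), ← Real.rpow_mul hN0.le,
      neg_mul, ← mul_assoc]
end

section
/- Let E be a real Banach space and let f : (0,T] → E be continuous and twice continuously differentiable on (0,T), with ‖f'(s)‖ ≤ C₀ s^{α−1} and ‖f''(s)‖ ≤ C₀ s^{α−2} for all s ∈ (0,T), where 0 < α < 1. On the graded mesh t_n = T(n/N)^r define, for 2 ≤ n ≤ N, the modified trapezoidal quadrature error Q^{n−σ} = Σ_{j=2}^{n−1} (τ_j/2)(f(t_{j−1}) + f(t_j)) + (1−σ) τ_n f(t_{n−1}) − ∫_{t_1}^{t_{n−σ}} f(s) ds. Then there exists a constant C, depending only on C₀, α, σ, r, T and independent of n and N, such that for all 2 ≤ n ≤ N: ‖Q^{n−σ}‖ ≤ C N^{−min{r(1+α), 2}} if r(1+α) ≠ 2, and ‖Q^{n−σ}‖ ≤ C N^{−2} (1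 + ln N) if r(1+α) = 2. -/
open MeasureTheory Set

set_option linter.unusedSectionVars false
set_option maxHeartbeats 1000000

lemma rpow_slope' {y x : ℝ} (q : ℝ) (h0 : 0 < y) (hyx : y < x) :
    ∃ c ∈ Set.Ioo y x, x ^ q - y ^ q = q * c ^ (q - 1) * (x - y) := by
  have hcont : ContinuousOn (fun t : ℝ => t ^ q) (Set.Icc y x) := fun t ht =>
    (Real.hasDerivAt_rpow_const (p := q)
      (Or.inl (ne_of_gt (lt_of_lt_of_le h0 ht.1)))).continuousAt.continuousWithinAt
  have hd : ∀ c ∈ Set.Ioo y x, HasDerivAt (fun t : ℝ => t ^ q) (q * c ^ (q - 1)) c := fun c hc =>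
    Real.hasDerivAt_rpow_const (Or.inl (ne_of_gt (lt_trans h0 hc.1)))
  obtain ⟨c, hc, hc2⟩ := exists_hasDerivAt_eq_slope (fun t : ℝ => t ^ q)
    (fun c => q * c ^ (q - 1)) hyx hcont hd
  exact ⟨c, hc, by rw [hc2, div_mul_cancel₀ _ (sub_ne_zero.mpr hyx.ne')]⟩

lemma sum_rpow_lt (γ : ℝ) (hγ : γ < -1) (m : ℕ) :
    ∑ j ∈ Finset.Icc 2 m, (j : ℝ) ^ γ ≤ (1 - (m : ℝ) ^ (γ + 1)) / (-(γ + 1)) := by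
  have hpos : 0 < -(γ + 1) := by linarith
  induction m with
  | zero =>
    simp only [Finset.Icc_eq_empty_of_lt (by norm_num : (0:ℕ) < 2), Finset.sum_empty]
    rw [Nat.cast_zero, Real.zero_rpow (by linarith : γ + 1 ≠ 0)]
    positivity
  | succ m ih =>
    rcases Nat.lt_or_ge (m + 1) 2 with hm | hm
    · have hm0 : m = 0 := by omega
      subst hm0
      simp only [Finset.Icc_eq_empty_of_lt (by norm_num : (1:ℕ) < 2), Finset.sum_empty]
      rw [Nat.cast_one, Real.one_rpow]
      simp
    · have hm1 : 1 ≤ m := by omega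
      rw [Finset.sum_Icc_succ_top hm]
      have hmr : (1:ℝ) ≤ (m:ℝ) := by exact_mod_cast hm1
      obtain ⟨c, hc, hceq⟩ := rpow_slope' (γ + 1) (by linarith : (0:ℝ) < m)
        (by push_cast; linarith : (m:ℝ) < (m+1 : ℕ))
      have hcast : ((m+1 : ℕ) : ℝ) = (m:ℝ) + 1 := by push_cast; ring
      rw [hcast] at hceq hc
      have hsimp : ((m:ℝ) + 1) - (m:ℝ) = 1 := by ring
      rw [hsimp, mul_one, add_sub_cancel_right] at hceq
      have hkey : ((m:ℝ) + 1) ^ γ ≤ c ^ γ :=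
        Real.rpow_le_rpow_of_nonpos (by linarith [hc.1] : (0:ℝ) < c)
          (le_of_lt hc.2) (by linarith)
      have hthis : ((m+1:ℕ):ℝ) ^ γ ≤ ((m:ℝ) ^ (γ+1) - ((m:ℝ)+1) ^ (γ+1)) / (-(γ + 1)) := by
        rw [hcast, le_div_iff₀ hpos]
        nlinarith [hkey, hceq]
      calc ∑ j ∈ Finset.Icc 2 m, (j : ℝ) ^ γ + ((m+1:ℕ):ℝ) ^ γ
          ≤ (1 - (m : ℝ) ^ (γ + 1)) / (-(γ + 1)) +
            ((m:ℝ) ^ (γ+1) - ((m:ℝ)+1) ^ (γ+1)) / (-(γ + 1)) := add_le_add ih hthis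
        _ = (1 - ((m+1:ℕ) : ℝ) ^ (γ + 1)) / (-(γ + 1)) := by rw [hcast, ← add_div]; ring_nf

lemma sum_rpow_eq (m : ℕ) (hm : 1 ≤ m) :
    ∑ j ∈ Finset.Icc 2 m, (j : ℝ) ^ (-1 : ℝ) ≤ Real.log m := by
  induction m with
  | zero => omega
  | succ m ih =>
    rcases Nat.lt_or_ge m 1 with hm0 | hm1
    · have hm0' : m = 0 := by omega
      subst hm0'
      simp [Finset.Icc_eq_empty_of_lt (by norm_num : (1:ℕ) < 2)]
    · rw [Finset.sum_Icc_succ_top (by omega : 2 ≤ m + 1)]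
      have hmr : (1:ℝ) ≤ (m:ℝ) := by exact_mod_cast hm1
      have hcast : ((m+1 : ℕ) : ℝ) = (m:ℝ) + 1 := by push_cast; ring
      have hstep : ((m+1:ℕ):ℝ) ^ (-1:ℝ) ≤ Real.log ((m+1:ℕ):ℝ) - Real.log m := by
        have h1 : Real.log ((m:ℝ) / ((m:ℝ)+1)) ≤ (m:ℝ)/((m:ℝ)+1) - 1 :=
          Real.log_le_sub_one_of_pos (by positivity)
        rw [Real.log_div (by linarith) (by linarith)] at h1
        rw [hcast, Real.rpow_neg_one]
        have h2 : (m:ℝ)/((m:ℝ)+1) - 1 = -(((m:ℝ)+1)⁻¹) := by field_simp; ring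
        rw [h2] at h1
        linarith
      calc ∑ j ∈ Finset.Icc 2 m, (j : ℝ) ^ (-1:ℝ) + ((m+1:ℕ):ℝ) ^ (-1:ℝ)
          ≤ Real.log m + (Real.log ((m+1:ℕ):ℝ) - Real.log m) := add_le_add (ih hm1) hstep
        _ = Real.log ((m+1:ℕ):ℝ) := by ring

lemma sum_rpow_gt (γ : ℝ) (hγ : -1 < γ) (m : ℕ) :
    ∑ j ∈ Finset.Icc 2 m, (j : ℝ) ^ γ ≤ 2 ^ (max γ 0) / (γ + 1) * (m : ℝ) ^ (γ + 1) := by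
  have hpos : 0 < γ + 1 := by linarith
  induction m with
  | zero =>
    simp only [Finset.Icc_eq_empty_of_lt (by norm_num : (0:ℕ) < 2), Finset.sum_empty]
    rw [Nat.cast_zero, Real.zero_rpow (by linarith : γ + 1 ≠ 0)]
    simp
  | succ m ih =>
    rcases Nat.lt_or_ge (m + 1) 2 with hm | hm
    · have hm0 : m = 0 := by omega
      subst hm0
      simp only [Finset.Icc_eq_empty_of_lt (by norm_num : (1:ℕ) < 2), Finset.sum_empty]
      positivity
    · have hm1 : 1 ≤ m := by omega
      rw [Finset.sum_Icc_succ_top hm]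
      have hmr : (1:ℝ) ≤ (m:ℝ) := by exact_mod_cast hm1
      obtain ⟨c, hc, hceq⟩ := rpow_slope' (γ + 1) (by linarith : (0:ℝ) < m)
        (by push_cast; linarith : (m:ℝ) < (m+1 : ℕ))
      have hcast : ((m+1 : ℕ) : ℝ) = (m:ℝ) + 1 := by push_cast; ring
      rw [hcast] at hceq hc
      have hsimp : ((m:ℝ) + 1) - (m:ℝ) = 1 := by ring
      rw [hsimp, mul_one, add_sub_cancel_right] at hceq
      have hc0 : (0:ℝ) < c := by linarith [hc.1]
      have hkey : ((m:ℝ) + 1) ^ γ ≤ 2 ^ (max γ 0) * c ^ γ := by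
        rcases le_or_gt 0 γ with h0 | h0
        · rw [max_eq_left h0]
          have h2c : (m:ℝ) + 1 ≤ 2 * c := by linarith [hc.1]
          calc ((m:ℝ) + 1) ^ γ ≤ (2 * c) ^ γ :=
                Real.rpow_le_rpow (by linarith) h2c h0
            _ = 2 ^ γ * c ^ γ := Real.mul_rpow (by norm_num) (le_of_lt hc0)
        · rw [max_eq_right (le_of_lt h0), Real.rpow_zero, one_mul]
          exact Real.rpow_le_rpow_of_nonpos hc0 (le_of_lt hc.2) (le_of_lt h0)
      have hstep : ((m+1:ℕ):ℝ) ^ γ ≤ 2 ^ (max γ 0) / (γ + 1) *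
          (((m:ℝ)+1) ^ (γ+1) - (m:ℝ) ^ (γ+1)) := by
        rw [hcast, hceq, div_mul_eq_mul_div, le_div_iff₀ hpos]
        calc ((m:ℝ) + 1) ^ γ * (γ + 1) ≤ (2 ^ (max γ 0) * c ^ γ) * (γ + 1) := by
              apply mul_le_mul_of_nonneg_right hkey (le_of_lt hpos)
          _ = 2 ^ (max γ 0) * ((γ + 1) * c ^ γ) := by ring
      calc ∑ j ∈ Finset.Icc 2 m, (j : ℝ) ^ γ + ((m+1:ℕ):ℝ) ^ γ
          ≤ 2 ^ (max γ 0) / (γ + 1) * (m : ℝ) ^ (γ + 1) +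
            2 ^ (max γ 0) / (γ + 1) * (((m:ℝ)+1) ^ (γ+1) - (m:ℝ) ^ (γ+1)) :=
            add_le_add ih hstep
        _ = 2 ^ (max γ 0) / (γ + 1) * ((m+1:ℕ) : ℝ) ^ (γ + 1) := by rw [hcast]; ring

lemma pow_combine {j N : ℝ} (hj : 0 < j) (hN : 0 < N) (p q e E : ℝ) (k : ℕ)
    (hpe : p + q * (k:ℝ) = e) (hE : e + (k:ℝ) = E) :
    (j/N)^p * (((j/N)^q)^k * (1/N)^k) = j^e * N^(-E) := by
  have hx : (0:ℝ) < j/N := div_pos hj hN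
  have h1 : ((j/N)^q)^k = (j/N)^(q*(k:ℝ)) := by
    rw [← Real.rpow_natCast ((j/N)^q) k, ← Real.rpow_mul hx.le]
  have h2 : (1/N)^k = N^(-(k:ℝ)) := by
    rw [one_div, ← Real.rpow_natCast N⁻¹ k, Real.inv_rpow hN.le, ← Real.rpow_neg hN.le]
  rw [h1, h2, ← mul_assoc, ← Real.rpow_add hx, hpe, Real.div_rpow hj.le hN.le,
    div_eq_mul_inv, ← Real.rpow_neg hN.le, mul_assoc, ← Real.rpow_add hN]
  congr 2
  linarith

section Err
variable {E : Type*} [NormedAddCommGroup E] [NormedSpace ℝ E] [CompleteSpace E]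

lemma rect_err (T α C₀ : ℝ) (f f' : ℝ → E)
    (hf : ContinuousOn f (Set.Ioc 0 T))
    (hf' : ∀ s ∈ Set.Ioo (0:ℝ) T, HasDerivAt f (f' s) s)
    (hb1 : ∀ s ∈ Set.Ioo (0:ℝ) T, ‖f' s‖ ≤ C₀ * s ^ (α - 1))
    (hα : α - 1 ≤ 0) (hC₀ : 0 ≤ C₀)
    (a c : ℝ) (h0 : 0 < a) (hac : a < c) (hcT : c < T) :
    ‖(c - a) • f a - ∫ s in a..c, f s‖ ≤ C₀ * a ^ (α - 1) * (c - a) ^ 2 := by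
  have hsub : Set.Icc a c ⊆ Set.Ioo 0 T := fun x hx =>
    ⟨lt_of_lt_of_le h0 hx.1, lt_of_le_of_lt hx.2 hcT⟩
  have hsub' : Set.Icc a c ⊆ Set.Ioc 0 T := fun x hx =>
    ⟨lt_of_lt_of_le h0 hx.1, le_of_lt (lt_of_le_of_lt hx.2 hcT)⟩
  have hfc : ContinuousOn f (Set.Icc a c) := hf.mono hsub'
  have hle : a ≤ c := le_of_lt hac
  have hint : IntervalIntegrable f volume a c := by
    rw [intervalIntegrable_iff_integrableOn_Icc_of_le hle]
    exact hfc.integrableOn_compact isCompact_Icc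
  set M := C₀ * a ^ (α - 1) with hM
  have hMnn : 0 ≤ M := mul_nonneg hC₀ (Real.rpow_nonneg (le_of_lt h0) _)
  have hmvt : ∀ u ∈ Set.Icc a c, ‖f u - f a‖ ≤ M * ‖u - a‖ := by
    intro u hu
    apply Convex.norm_image_sub_le_of_norm_hasDerivWithin_le
      (fun x hx => (hf' x (hsub hx)).hasDerivWithinAt) ?_ (convex_Icc a c)
      (Set.left_mem_Icc.mpr hle) hu
    intro x hx
    calc ‖f' x‖ ≤ C₀ * x ^ (α - 1) := hb1 x (hsub hx)
      _ ≤ C₀ * a ^ (α - 1) := by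
          apply mul_le_mul_of_nonneg_left _ hC₀
          exact Real.rpow_le_rpow_of_nonpos h0 hx.1 hα
  have hconst : (∫ _ in a..c, f a) = (c - a) • f a := by
    rw [intervalIntegral.integral_const]
  rw [← hconst, ← intervalIntegral.integral_sub intervalIntegrable_const hint]
  have hbd : ∀ u ∈ Set.uIoc a c, ‖f a - f u‖ ≤ M * (c - a) := by
    intro u hu
    rw [Set.uIoc_of_le hle] at hu
    have hu' : u ∈ Set.Icc a c := ⟨le_of_lt hu.1, hu.2⟩
    calc ‖f a - f u‖ = ‖f u - f a‖ := norm_sub_rev _ _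
      _ ≤ M * ‖u - a‖ := hmvt u hu'
      _ ≤ M * (c - a) := by
          apply mul_le_mul_of_nonneg_left _ hMnn
          rw [Real.norm_eq_abs, abs_of_nonneg (by linarith [hu.1] : (0:ℝ) ≤ u - a)]
          linarith [hu.2]
  calc ‖∫ u in a..c, (f a - f u)‖ ≤ M * (c - a) * |c - a| :=
        intervalIntegral.norm_integral_le_of_norm_le_const hbd
    _ = M * (c - a) ^ 2 := by rw [abs_of_nonneg (by linarith : (0:ℝ) ≤ c - a)]; ring

lemma trap_err (T α C₀ : ℝ) (f f' f'' : ℝ → E)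
    (hf : ContinuousOn f (Set.Ioc 0 T))
    (hf' : ∀ s ∈ Set.Ioo (0:ℝ) T, HasDerivAt f (f' s) s)
    (hf'' : ∀ s ∈ Set.Ioo (0:ℝ) T, HasDerivAt f' (f'' s) s)
    (hb2 : ∀ s ∈ Set.Ioo (0:ℝ) T, ‖f'' s‖ ≤ C₀ * s ^ (α - 2))
    (hα : α - 2 ≤ 0) (hC₀ : 0 ≤ C₀)
    (a b : ℝ) (h0 : 0 < a) (hab : a < b) (hbT : b < T) :
    ‖((b - a) / 2) • (f a + f b) - ∫ s in a..b, f s‖ ≤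
      C₀ * a ^ (α - 2) * (b - a) ^ 3 / 4 := by
  have hle : a ≤ b := le_of_lt hab
  have hsub : Set.Icc a b ⊆ Set.Ioo 0 T := fun x hx =>
    ⟨lt_of_lt_of_le h0 hx.1, lt_of_le_of_lt hx.2 hbT⟩
  have hsub' : Set.Icc a b ⊆ Set.Ioc 0 T := fun x hx =>
    ⟨lt_of_lt_of_le h0 hx.1, le_of_lt (lt_of_le_of_lt hx.2 hbT)⟩
  have hfc : ContinuousOn f (Set.Icc a b) := hf.mono hsub'
  have hf'c : ContinuousOn f' (Set.Icc a b) := fun x hx =>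
    (hf'' x (hsub hx)).continuousAt.continuousWithinAt
  set mid := (a + b) / 2 with hmid
  have hmidmem : mid ∈ Set.Icc a b := ⟨by rw [hmid]; linarith, by rw [hmid]; linarith⟩
  have hint : IntervalIntegrable f volume a b := by
    rw [intervalIntegrable_iff_integrableOn_Icc_of_le hle]
    exact hfc.integrableOn_compact isCompact_Icc
  have hgc : ContinuousOn (fun u => (u - mid) • f' u) (Set.Icc a b) :=
    (continuousOn_id.sub continuousOn_const).smul hf'c
  have hgint : IntervalIntegrable (fun u => (u - mid) • f' u) volume a b := by
    rw [intervalIntegrable_iff_integrableOn_Icc_of_le hle]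
    exact hgc.integrableOn_compact isCompact_Icc
  have hftc : (∫ u in a..b, (f u + (u - mid) • f' u)) =
      (b - mid) • f b - (a - mid) • f a := by
    have h := intervalIntegral.integral_eq_sub_of_hasDerivAt
      (f := fun u => (u - mid) • f u) (f' := fun u => f u + (u - mid) • f' u)
      (a := a) (b := b) ?_ ?_
    · exact h
    · intro x hx
      rw [Set.uIcc_of_le hle] at hx
      have hx' := hsub hx
      have h1 : HasDerivAt (fun u : ℝ => u - mid) 1 x := (hasDerivAt_id x).sub_const mid
      have h2 := h1.smul (hf' x hx')
      have h3 : HasDerivAt (fun u => (u - mid) • f u) ((x - mid) • f' x + (1:ℝ) • f x) x := h2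
      rw [one_smul, add_comm] at h3
      exact h3
    · exact IntervalIntegrable.add hint hgint
  have hzero : (∫ u in a..b, (u - mid) • f' mid) = 0 := by
    rw [intervalIntegral.integral_smul_const]
    have h3 : (∫ u in a..b, (u - mid)) = 0 := by
      rw [intervalIntegral.integral_sub intervalIntegral.intervalIntegrable_id intervalIntegrable_const,
        integral_id, intervalIntegral.integral_const, hmid]
      simp only [smul_eq_mul]
      ring
    rw [h3, zero_smul]
  have key : ((b - a) / 2) • (f a + f b) - (∫ s in a..b, f s) =
      ∫ u in a..b, (u - mid) • (f' u - f' mid) := by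
    have hsplit : (∫ u in a..b, (f u + (u - mid) • f' u)) =
        (∫ u in a..b, f u) + ∫ u in a..b, (u - mid) • f' u :=
      intervalIntegral.integral_add hint hgint
    have hmc : ContinuousOn (fun u => (u - mid) • (f' u - f' mid)) (Set.Icc a b) :=
      (continuousOn_id.sub continuousOn_const).smul (hf'c.sub continuousOn_const)
    have hmint : IntervalIntegrable (fun u => (u - mid) • (f' u - f' mid)) volume a b := by
      rw [intervalIntegrable_iff_integrableOn_Icc_of_le hle]
      exact hmc.integrableOn_compact isCompact_Icc
    have heq : (∫ u in a..b, (u - mid) • (f' u - f' mid)) =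
        (∫ u in a..b, (u - mid) • f' u) - ∫ u in a..b, (u - mid) • f' mid := by
      rw [← intervalIntegral.integral_sub hgint (by
        rw [intervalIntegrable_iff_integrableOn_Icc_of_le hle]
        exact ((continuousOn_id.sub continuousOn_const).smul
          continuousOn_const).integrableOn_compact isCompact_Icc)]
      congr 1
      ext u
      rw [smul_sub]
    rw [heq, hzero, sub_zero]
    have h4 : (∫ u in a..b, (u - mid) • f' u) =
        ((b - mid) • f b - (a - mid) • f a) - ∫ u in a..b, f u := by
      rw [← hftc, hsplit]; abel
    rw [h4, hmid]
    have hb2' : b - (a + b) / 2 = (b - a) / 2 := by ring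
    have ha2' : a - (a + b) / 2 = -((b - a) / 2) := by ring
    rw [hb2', ha2', neg_smul, smul_add]
    abel
  rw [key]
  set M := C₀ * a ^ (α - 2) with hM
  have hMnn : 0 ≤ M := mul_nonneg hC₀ (Real.rpow_nonneg (le_of_lt h0) _)
  have hmvt : ∀ u ∈ Set.Icc a b, ‖f' u - f' mid‖ ≤ M * ‖u - mid‖ := by
    intro u hu
    apply Convex.norm_image_sub_le_of_norm_hasDerivWithin_le
      (fun x hx => (hf'' x (hsub hx)).hasDerivWithinAt) ?_ (convex_Icc a b) hmidmem hu
    intro x hx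
    calc ‖f'' x‖ ≤ C₀ * x ^ (α - 2) := hb2 x (hsub hx)
      _ ≤ C₀ * a ^ (α - 2) := by
          apply mul_le_mul_of_nonneg_left _ hC₀
          exact Real.rpow_le_rpow_of_nonpos h0 hx.1 hα
  have hbd : ∀ u ∈ Set.uIoc a b, ‖(u - mid) • (f' u - f' mid)‖ ≤
      ((b - a) / 2) * (M * ((b - a) / 2)) := by
    intro u hu
    rw [Set.uIoc_of_le hle] at hu
    have hu' : u ∈ Set.Icc a b := ⟨le_of_lt hu.1, hu.2⟩
    have habs : |u - mid| ≤ (b - a) / 2 := by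
      rw [abs_le]
      constructor <;> rw [hmid] <;> [linarith [hu'.1]; linarith [hu'.2]]
    rw [norm_smul, Real.norm_eq_abs]
    have h2 : ‖f' u - f' mid‖ ≤ M * ((b - a) / 2) := by
      refine le_trans (hmvt u hu') ?_
      apply mul_le_mul_of_nonneg_left _ hMnn
      rw [Real.norm_eq_abs]; exact habs
    apply mul_le_mul habs h2 (norm_nonneg _) (by linarith)
  calc ‖∫ u in a..b, (u - mid) • (f' u - f' mid)‖ ≤
      ((b - a) / 2) * (M * ((b - a) / 2)) * |b - a| :=
        intervalIntegral.norm_integral_le_of_norm_le_const hbd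
    _ = M * (b - a) ^ 3 / 4 := by
        rw [abs_of_nonneg (by linarith : (0:ℝ) ≤ b - a)]; ring

end Err

section Mesh
variable {T r : ℝ} {N : ℕ} (hT : 0 < T) (hr : 1 ≤ r) (hN : 0 < N)

include hT hr hN

lemma mesh_cast {j : ℕ} (hj : 1 ≤ j) : ((j - 1 : ℕ) : ℝ) = (j : ℝ) - 1 := by
  have h : (1:ℕ) ≤ j := hj
  push_cast [Nat.cast_sub h]
  ring

lemma mesh_pos {j : ℕ} (hj : 1 ≤ j) : 0 < meshT T r N j := by
  have hjr : (0:ℝ) < (j:ℝ) / (N:ℝ) := by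
    apply div_pos (by exact_mod_cast hj) (by exact_mod_cast hN)
  exact mul_pos hT (Real.rpow_pos_of_pos hjr r)

lemma mesh_mono {j k : ℕ} (hjk : j ≤ k) : meshT T r N j ≤ meshT T r N k := by
  unfold meshT
  apply mul_le_mul_of_nonneg_left _ hT.le
  apply Real.rpow_le_rpow (by positivity) _ (by linarith)
  have hNr : (0:ℝ) < (N:ℝ) := by exact_mod_cast hN
  have h : (j:ℝ) ≤ (k:ℝ) := by exact_mod_cast hjk
  gcongr

lemma mesh_strict_mono {j k : ℕ} (hjk : j < k) : meshT T r N j < meshT T r N k := by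
  unfold meshT
  apply mul_lt_mul_of_pos_left _ hT
  apply Real.rpow_lt_rpow (by positivity) _ (by linarith)
  have hNr : (0:ℝ) < (N:ℝ) := by exact_mod_cast hN
  apply div_lt_div_of_pos_right _ hNr
  exact_mod_cast hjk

lemma mesh_le_T {j : ℕ} (hj : j ≤ N) : meshT T r N j ≤ T := by
  unfold meshT
  nth_rewrite 2 [← mul_one T]
  apply mul_le_mul_of_nonneg_left _ hT.le
  apply Real.rpow_le_one (by positivity) _ (by linarith)
  apply div_le_one_of_le₀ (by exact_mod_cast hj) (by positivity)

lemma mesh_lt_T {j : ℕ} (hj : j < N) : meshT T r N j < T := by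
  unfold meshT
  nth_rewrite 2 [← mul_one T]
  apply mul_lt_mul_of_pos_left _ hT
  apply Real.rpow_lt_one (by positivity) _ (by linarith)
  rw [div_lt_one (by exact_mod_cast hN)]
  exact_mod_cast hj

lemma mesh_tau_le {j : ℕ} (hj : 2 ≤ j) :
    meshTau T r N j ≤ T * r * ((j:ℝ)/(N:ℝ)) ^ (r - 1) * (1/(N:ℝ)) := by
  unfold meshTau meshT
  rw [mesh_cast hT hr hN (by omega : 1 ≤ j)]
  have hNr : (0:ℝ) < (N:ℝ) := by exact_mod_cast hN
  have h0 : (0:ℝ) < ((j:ℝ) - 1) / (N:ℝ) := by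
    apply div_pos _ hNr
    have h' : (2:ℝ) ≤ (j:ℝ) := by exact_mod_cast hj
    linarith
  have hyx : ((j:ℝ) - 1) / (N:ℝ) < (j:ℝ) / (N:ℝ) := by
    apply div_lt_div_of_pos_right (by linarith) hNr
  obtain ⟨c, hc, hceq⟩ := rpow_slope' r h0 hyx
  have hdiff : (j:ℝ)/(N:ℝ) - ((j:ℝ)-1)/(N:ℝ) = 1/(N:ℝ) := by field_simp; ring
  rw [hdiff] at hceq
  have hcb : c ^ (r - 1) ≤ ((j:ℝ)/(N:ℝ)) ^ (r - 1) :=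
    Real.rpow_le_rpow (le_of_lt (lt_trans h0 hc.1)) (le_of_lt hc.2) (by linarith)
  calc T * ((j:ℝ)/(N:ℝ)) ^ r - T * (((j:ℝ)-1)/(N:ℝ)) ^ r
      = T * (((j:ℝ)/(N:ℝ)) ^ r - (((j:ℝ)-1)/(N:ℝ)) ^ r) := by ring
    _ = T * (r * c ^ (r-1) * (1/(N:ℝ))) := by rw [hceq]
    _ ≤ T * (r * ((j:ℝ)/(N:ℝ)) ^ (r-1) * (1/(N:ℝ))) := by
        apply mul_le_mul_of_nonneg_left _ hT.le
        apply mul_le_mul_of_nonneg_right _ (by positivity)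
        apply mul_le_mul_of_nonneg_left hcb (by linarith)
    _ = T * r * ((j:ℝ)/(N:ℝ)) ^ (r - 1) * (1/(N:ℝ)) := by ring

lemma mesh_tau_nonneg {j : ℕ} : 0 ≤ meshTau T r N j := by
  unfold meshTau
  have h := mesh_mono hT hr hN (Nat.sub_le j 1)
  linarith

lemma mesh_lower {j : ℕ} (hj : 2 ≤ j) :
    T * 2 ^ (-r) * ((j:ℝ)/(N:ℝ)) ^ r ≤ meshT T r N (j - 1) := by
  unfold meshT
  rw [mesh_cast hT hr hN (by omega : 1 ≤ j)]
  have hNr : (0:ℝ) < (N:ℝ) := by exact_mod_cast hN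
  have hjr : (2:ℝ) ≤ (j:ℝ) := by exact_mod_cast hj
  have hhalf : ((j:ℝ)/(N:ℝ)) * (2:ℝ)⁻¹ ≤ ((j:ℝ) - 1)/(N:ℝ) := by
    rw [div_mul_eq_mul_div, div_le_div_iff₀ hNr hNr]
    nlinarith
  have h1 : (((j:ℝ)/(N:ℝ)) * (2:ℝ)⁻¹) ^ r ≤ (((j:ℝ) - 1)/(N:ℝ)) ^ r :=
    Real.rpow_le_rpow (by positivity) hhalf (by linarith)
  have h2 : (((j:ℝ)/(N:ℝ)) * (2:ℝ)⁻¹) ^ r = ((j:ℝ)/(N:ℝ)) ^ r * (2:ℝ) ^ (-r) := by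
    rw [Real.mul_rpow (by positivity) (by norm_num), Real.inv_rpow (by norm_num),
      ← Real.rpow_neg (by norm_num)]
  calc T * 2 ^ (-r) * ((j:ℝ)/(N:ℝ)) ^ r = T * (((j:ℝ)/(N:ℝ)) ^ r * (2:ℝ) ^ (-r)) := by ring
    _ ≤ T * ((((j:ℝ) - 1)/(N:ℝ)) ^ r) := by
        apply mul_le_mul_of_nonneg_left _ hT.le
        rw [← h2]; exact h1

end Mesh
/-- Error of the modified trapezoidal quadrature
`Q^{n-σ} = Σ_{j=2}^{n-1} (τ_j/2)(f(t_{j-1})+f(t_j)) + (1-σ)τ_n f(t_{n-1})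
- ∫_{t_1}^{t_{n-σ}} f(s) ds` for a Banach-space valued `f` continuous on `(0,T]`,
twice continuously differentiable on `(0,T)` with `‖f'(s)‖ ≤ C₀ s^{α-1}` and
`‖f''(s)‖ ≤ C₀ s^{α-2}`: one has `‖Q^{n-σ}‖ ≤ C N^{-min{r(1+α),2}}` if `r(1+α) ≠ 2`,
and `‖Q^{n-σ}‖ ≤ C N^{-2}(1 + ln N)` if `r(1+α) = 2`, with `C` independent
of `n` and `N`. -/
theorem stmt12 (E : Type*) [NormedAddCommGroup E] [NormedSpace ℝ E] [CompleteSpace E]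
    (T r α σ C₀ : ℝ) (hT : 0 < T) (hr : 1 ≤ r) (hα0 : 0 < α) (hα1 : α < 1)
    (hσ0 : 0 < σ) (hσ1 : σ < 1) (hC₀ : 0 < C₀)
    (f f' f'' : ℝ → E)
    (hf : ContinuousOn f (Set.Ioc 0 T))
    (hf' : ∀ s ∈ Set.Ioo (0 : ℝ) T, HasDerivAt f (f' s) s)
    (hf'' : ∀ s ∈ Set.Ioo (0 : ℝ) T, HasDerivAt f' (f'' s) s)
    (hf''c : ContinuousOn f'' (Set.Ioo 0 T))
    (hb1 : ∀ s ∈ Set.Ioo (0 : ℝ) T, ‖f' s‖ ≤ C₀ * s ^ (α - 1))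
    (hb2 : ∀ s ∈ Set.Ioo (0 : ℝ) T, ‖f'' s‖ ≤ C₀ * s ^ (α - 2)) :
    ∃ C : ℝ, 0 < C ∧ ∀ N : ℕ, 2 ≤ N → ∀ n : ℕ, 2 ≤ n → n ≤ N →
      (r * (1 + α) ≠ 2 →
        ‖(∑ j ∈ Finset.Icc 2 (n - 1),
            (meshTau T r N j / 2) • (f (meshT T r N (j - 1)) + f (meshT T r N j))) +
          ((1 - σ) * meshTau T r N n) • f (meshT T r N (n - 1)) -
          ∫ s in (meshT T r N 1)..(meshTSig T r σ N n), f s‖ ≤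
        C * (N : ℝ) ^ (-min (r * (1 + α)) 2)) ∧
      (r * (1 + α) = 2 →
        ‖(∑ j ∈ Finset.Icc 2 (n - 1),
            (meshTau T r N j / 2) • (f (meshT T r N (j - 1)) + f (meshT T r N j))) +
          ((1 - σ) * meshTau T r N n) • f (meshT T r N (n - 1)) -
          ∫ s in (meshT T r N 1)..(meshTSig T r σ N n), f s‖ ≤
        C * (N : ℝ) ^ (-(2 : ℝ)) * (1 + Real.log N)) := by

  have hα2 : α - 2 ≤ 0 := by linarith
  have hα1' : α - 1 ≤ 0 := by linarith
  set β := r * (1 + α) with hβ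
  have hβ1 : 1 < β := by nlinarith
  have hT2 : (0:ℝ) < T * 2^(-r) := by positivity
  set K₁ := C₀/4 * ((T*2^(-r))^(α-2)) * (T*r)^3 with hK₁def
  set K₂ := C₀ * ((T*2^(-r))^(α-1)) * (T*r)^2 with hK₂def
  have hK₁ : 0 < K₁ := by
    rw [hK₁def]
    have := Real.rpow_pos_of_pos hT2 (α-2)
    positivity
  have hK₂ : 0 < K₂ := by
    rw [hK₂def]
    have := Real.rpow_pos_of_pos hT2 (α-1)
    positivity
  have hD : (0:ℝ) ≤ 2^(max (β-3) 0) * |β-2|⁻¹ := by positivity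
  set C := 1 + K₁ * (|2-β|⁻¹ + 2^(max (β-3) 0) * |β-2|⁻¹ + 1) + K₂ with hCdef
  have hC : 0 < C := by
    have h1 : (0:ℝ) ≤ K₁ * (|2-β|⁻¹ + 2^(max (β-3) 0) * |β-2|⁻¹ + 1) := by
      apply mul_nonneg hK₁.le
      positivity
    rw [hCdef]; linarith [hK₂.le]
  refine ⟨C, hC, ?_⟩
  intro N hN n hn2 hnN
  have hNpos : 0 < N := by omega
  have hNr : (0:ℝ) < (N:ℝ) := by exact_mod_cast hNpos
  have hNr1 : (1:ℝ) ≤ (N:ℝ) := by exact_mod_cast (by omega : 1 ≤ N)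
  set S := ∑ j ∈ Finset.Icc 2 (n-1), (j:ℝ)^(β-3) with hSdef
  have hSnn : 0 ≤ S := Finset.sum_nonneg fun j _ => Real.rpow_nonneg (Nat.cast_nonneg j) _
  have hNβ : (0:ℝ) < (N:ℝ)^(-β) := Real.rpow_pos_of_pos hNr _
  -- per-interval trapezoid bounds
  have hEj : ∀ j ∈ Finset.Icc 2 (n-1),
      ‖(meshTau T r N j / 2) • (f (meshT T r N (j-1)) + f (meshT T r N j)) -
        ∫ s in (meshT T r N (j-1))..(meshT T r N j), f s‖
        ≤ K₁ * (j:ℝ)^(β-3) * (N:ℝ)^(-β) := by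
    intro j hj
    rw [Finset.mem_Icc] at hj
    have hj2 : 2 ≤ j := hj.1
    have hjN : j < N := by omega
    have h0 : 0 < meshT T r N (j-1) := mesh_pos hT hr hNpos (by omega)
    have hab : meshT T r N (j-1) < meshT T r N j := mesh_strict_mono hT hr hNpos (by omega)
    have hbT : meshT T r N j < T := mesh_lt_T hT hr hNpos hjN
    have htau : meshTau T r N j = meshT T r N j - meshT T r N (j-1) := rfl
    have htrap := trap_err T α C₀ f f' f'' hf hf' hf'' hb2 hα2 hC₀.le
      (meshT T r N (j-1)) (meshT T r N j) h0 hab hbT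
    rw [← htau] at htrap
    have hjr : (0:ℝ) < (j:ℝ) := by exact_mod_cast (by omega : 0 < j)
    have hxpos : 0 < (j:ℝ)/(N:ℝ) := div_pos hjr hNr
    have hta : (meshT T r N (j-1))^(α-2) ≤
        (T*2^(-r))^(α-2) * ((j:ℝ)/(N:ℝ))^(r*(α-2)) := by
      have hlow := mesh_lower hT hr hNpos hj2
      have hlowpos : 0 < T * 2^(-r) * ((j:ℝ)/(N:ℝ))^r := by
        have := Real.rpow_pos_of_pos hxpos r
        positivity
      calc (meshT T r N (j-1))^(α-2) ≤ (T * 2^(-r) * ((j:ℝ)/(N:ℝ))^r)^(α-2) :=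
            Real.rpow_le_rpow_of_nonpos hlowpos hlow hα2
        _ = (T*2^(-r))^(α-2) * ((j:ℝ)/(N:ℝ))^(r*(α-2)) := by
            rw [Real.mul_rpow hT2.le (Real.rpow_nonneg hxpos.le _),
              ← Real.rpow_mul hxpos.le]
    have htau3 : (meshTau T r N j)^3 ≤ (T*r*((j:ℝ)/(N:ℝ))^(r-1)*(1/(N:ℝ)))^3 :=
      pow_le_pow_left₀ (mesh_tau_nonneg hT hr hNpos) (mesh_tau_le hT hr hNpos hj2) 3
    calc ‖(meshTau T r N j / 2) • (f (meshT T r N (j-1)) + f (meshT T r N j)) -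
          ∫ s in (meshT T r N (j-1))..(meshT T r N j), f s‖
        ≤ C₀ * (meshT T r N (j-1))^(α-2) * (meshTau T r N j)^3 / 4 := htrap
      _ ≤ C₀ * ((T*2^(-r))^(α-2) * ((j:ℝ)/(N:ℝ))^(r*(α-2))) *
            (T*r*((j:ℝ)/(N:ℝ))^(r-1)*(1/(N:ℝ)))^3 / 4 := by
          have h1 : 0 ≤ (meshTau T r N j)^3 :=
            pow_nonneg (mesh_tau_nonneg hT hr hNpos) 3
          have h2 : 0 ≤ (T*2^(-r))^(α-2) * ((j:ℝ)/(N:ℝ))^(r*(α-2)) :=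
            mul_nonneg (Real.rpow_nonneg hT2.le _) (Real.rpow_nonneg hxpos.le _)
          have h3 : 0 ≤ (meshT T r N (j-1))^(α-2) := Real.rpow_nonneg h0.le _
          apply div_le_div_of_nonneg_right ?_ (by norm_num)
          apply mul_le_mul (mul_le_mul_of_nonneg_left hta hC₀.le) htau3 h1
          exact mul_nonneg hC₀.le h2
      _ = K₁ * (((j:ℝ)/(N:ℝ))^(r*(α-2)) *
            ((((j:ℝ)/(N:ℝ))^(r-1))^3 * (1/(N:ℝ))^3)) := by rw [hK₁def]; ring
      _ = K₁ * ((j:ℝ)^(β-3) * (N:ℝ)^(-β)) := by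
          rw [pow_combine hjr hNr (r*(α-2)) (r-1) (β-3) β 3
            (by rw [hβ]; push_cast; ring) (by push_cast; ring)]
      _ = K₁ * (j:ℝ)^(β-3) * (N:ℝ)^(-β) := by ring
  -- rectangle bound
  have h0n : 0 < meshT T r N (n-1) := mesh_pos hT hr hNpos (by omega)
  have habn : meshT T r N (n-1) < meshT T r N n := mesh_strict_mono hT hr hNpos (by omega)
  have hcn : meshT T r N (n-1) < meshTSig T r σ N n := by
    unfold meshTSig
    nlinarith
  have hcT : meshTSig T r σ N n < T := by
    have h1 : meshT T r N n ≤ T := mesh_le_T hT hr hNpos hnN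
    have h2 : meshT T r N (n-1) < T := mesh_lt_T hT hr hNpos (by omega)
    unfold meshTSig
    nlinarith
  have hR : ‖((1 - σ) * meshTau T r N n) • f (meshT T r N (n-1)) -
      ∫ s in (meshT T r N (n-1))..(meshTSig T r σ N n), f s‖
      ≤ K₂ * (n:ℝ)^(β-2) * (N:ℝ)^(-β) := by
    have hrect := rect_err T α C₀ f f' hf hf' hb1 hα1' hC₀.le
      (meshT T r N (n-1)) (meshTSig T r σ N n) h0n hcn hcT
    have hdiff : meshTSig T r σ N n - meshT T r N (n-1) = (1-σ) * meshTau T r N n := by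
      unfold meshTSig meshTau
      ring
    rw [hdiff] at hrect
    have hnr : (0:ℝ) < (n:ℝ) := by exact_mod_cast (by omega : 0 < n)
    have hxpos : 0 < (n:ℝ)/(N:ℝ) := div_pos hnr hNr
    have hta : (meshT T r N (n-1))^(α-1) ≤
        (T*2^(-r))^(α-1) * ((n:ℝ)/(N:ℝ))^(r*(α-1)) := by
      have hlow := mesh_lower hT hr hNpos hn2
      have hlowpos : 0 < T * 2^(-r) * ((n:ℝ)/(N:ℝ))^r := by
        have := Real.rpow_pos_of_pos hxpos r
        positivity
      calc (meshT T r N (n-1))^(α-1) ≤ (T * 2^(-r) * ((n:ℝ)/(N:ℝ))^r)^(α-1) :=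
            Real.rpow_le_rpow_of_nonpos hlowpos hlow hα1'
        _ = (T*2^(-r))^(α-1) * ((n:ℝ)/(N:ℝ))^(r*(α-1)) := by
            rw [Real.mul_rpow hT2.le (Real.rpow_nonneg hxpos.le _),
              ← Real.rpow_mul hxpos.le]
    have htau2 : ((1-σ) * meshTau T r N n)^2 ≤ (T*r*((n:ℝ)/(N:ℝ))^(r-1)*(1/(N:ℝ)))^2 := by
      apply pow_le_pow_left₀ (mul_nonneg (by linarith) (mesh_tau_nonneg hT hr hNpos))
      calc (1-σ) * meshTau T r N n ≤ 1 * meshTau T r N n :=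
            mul_le_mul_of_nonneg_right (by linarith) (mesh_tau_nonneg hT hr hNpos)
        _ = meshTau T r N n := one_mul _
        _ ≤ T*r*((n:ℝ)/(N:ℝ))^(r-1)*(1/(N:ℝ)) := mesh_tau_le hT hr hNpos hn2
    calc ‖((1 - σ) * meshTau T r N n) • f (meshT T r N (n-1)) -
          ∫ s in (meshT T r N (n-1))..(meshTSig T r σ N n), f s‖
        ≤ C₀ * (meshT T r N (n-1))^(α-1) * ((1-σ) * meshTau T r N n)^2 := hrect
      _ ≤ C₀ * ((T*2^(-r))^(α-1) * ((n:ℝ)/(N:ℝ))^(r*(α-1))) *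
            (T*r*((n:ℝ)/(N:ℝ))^(r-1)*(1/(N:ℝ)))^2 := by
          have h1 : 0 ≤ ((1-σ) * meshTau T r N n)^2 := sq_nonneg _
          have h2 : 0 ≤ (T*2^(-r))^(α-1) * ((n:ℝ)/(N:ℝ))^(r*(α-1)) :=
            mul_nonneg (Real.rpow_nonneg hT2.le _) (Real.rpow_nonneg hxpos.le _)
          apply mul_le_mul (mul_le_mul_of_nonneg_left hta hC₀.le) htau2 h1
          exact mul_nonneg hC₀.le h2
      _ = K₂ * (((n:ℝ)/(N:ℝ))^(r*(α-1)) *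
            ((((n:ℝ)/(N:ℝ))^(r-1))^2 * (1/(N:ℝ))^2)) := by rw [hK₂def]; ring
      _ = K₂ * ((n:ℝ)^(β-2) * (N:ℝ)^(-β)) := by
          rw [pow_combine hnr hNr (r*(α-1)) (r-1) (β-2) β 2
            (by rw [hβ]; push_cast; ring) (by push_cast; ring)]
      _ = K₂ * (n:ℝ)^(β-2) * (N:ℝ)^(-β) := by ring
  -- integrability helper
  have hIcc : ∀ (x y : ℝ), 0 < x → y ≤ T → x ≤ y → IntervalIntegrable f volume x y := by
    intro x y hx hyT hxy
    rw [intervalIntegrable_iff_integrableOn_Icc_of_le hxy]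
    exact (hf.mono (fun s hs => ⟨lt_of_lt_of_le hx hs.1, le_trans hs.2 hyT⟩)).integrableOn_compact
      isCompact_Icc
  -- telescoping
  have htele : ∑ k ∈ Finset.range (n-2),
      (∫ s in (meshT T r N (k+1))..(meshT T r N (k+1+1)), f s)
      = ∫ s in (meshT T r N (0+1))..(meshT T r N (n-2+1)), f s := by
    apply intervalIntegral.sum_integral_adjacent_intervals (a := fun k => meshT T r N (k+1))
    intro k hk
    apply hIcc
    · exact mesh_pos hT hr hNpos (by omega)
    · exact mesh_le_T hT hr hNpos (by omega)
    · exact mesh_mono hT hr hNpos (by omega)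
  rw [show (0:ℕ)+1 = 1 by omega, show n-2+1 = n-1 by omega] at htele
  have hsum_eq : ∑ j ∈ Finset.Icc 2 (n-1),
      (∫ s in (meshT T r N (j-1))..(meshT T r N j), f s)
      = ∑ k ∈ Finset.range (n-2),
        (∫ s in (meshT T r N (k+1))..(meshT T r N (k+1+1)), f s) := by
    rw [show Finset.Icc 2 (n-1) = Finset.Ico 2 n by
      rw [← Finset.Ico_add_one_right_eq_Icc]; congr 1; omega]
    rw [Finset.sum_Ico_eq_sum_range]
    apply Finset.sum_congr rfl
    intro i _
    rw [show 2+i-1 = i+1 by omega, show 2+i = i+1+1 by omega]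
  have hIeq : (∫ s in (meshT T r N 1)..(meshTSig T r σ N n), f s)
      = (∑ j ∈ Finset.Icc 2 (n-1), ∫ s in (meshT T r N (j-1))..(meshT T r N j), f s)
        + ∫ s in (meshT T r N (n-1))..(meshTSig T r σ N n), f s := by
    rw [hsum_eq, htele]
    exact (intervalIntegral.integral_add_adjacent_intervals
      (hIcc _ _ (mesh_pos hT hr hNpos (by omega)) (mesh_le_T hT hr hNpos (by omega))
        (mesh_mono hT hr hNpos (by omega)))
      (hIcc _ _ h0n hcT.le hcn.le)).symm
  -- master bound
  have hmaster : ‖(∑ j ∈ Finset.Icc 2 (n - 1),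
        (meshTau T r N j / 2) • (f (meshT T r N (j - 1)) + f (meshT T r N j))) +
      ((1 - σ) * meshTau T r N n) • f (meshT T r N (n - 1)) -
      ∫ s in (meshT T r N 1)..(meshTSig T r σ N n), f s‖
      ≤ K₁ * S * (N:ℝ)^(-β) + K₂ * (n:ℝ)^(β-2) * (N:ℝ)^(-β) := by
    have hQ : (∑ j ∈ Finset.Icc 2 (n - 1),
        (meshTau T r N j / 2) • (f (meshT T r N (j - 1)) + f (meshT T r N j))) +
        ((1 - σ) * meshTau T r N n) • f (meshT T r N (n - 1)) -
        (∫ s in (meshT T r N 1)..(meshTSig T r σ N n), f s)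
        = (∑ j ∈ Finset.Icc 2 (n - 1),
            ((meshTau T r N j / 2) • (f (meshT T r N (j - 1)) + f (meshT T r N j)) -
              ∫ s in (meshT T r N (j-1))..(meshT T r N j), f s)) +
          (((1 - σ) * meshTau T r N n) • f (meshT T r N (n - 1)) -
            ∫ s in (meshT T r N (n-1))..(meshTSig T r σ N n), f s) := by
      rw [hIeq, Finset.sum_sub_distrib]
      abel
    rw [hQ]
    calc ‖(∑ j ∈ Finset.Icc 2 (n - 1),
        ((meshTau T r N j / 2) • (f (meshT T r N (j - 1)) + f (meshT T r N j)) -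
          ∫ s in (meshT T r N (j-1))..(meshT T r N j), f s)) +
        (((1 - σ) * meshTau T r N n) • f (meshT T r N (n - 1)) -
          ∫ s in (meshT T r N (n-1))..(meshTSig T r σ N n), f s)‖
        ≤ ‖∑ j ∈ Finset.Icc 2 (n - 1),
            ((meshTau T r N j / 2) • (f (meshT T r N (j - 1)) + f (meshT T r N j)) -
              ∫ s in (meshT T r N (j-1))..(meshT T r N j), f s)‖ +
          ‖((1 - σ) * meshTau T r N n) • f (meshT T r N (n - 1)) -
            ∫ s in (meshT T r N (n-1))..(meshTSig T r σ N n), f s‖ := norm_add_le _ _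
      _ ≤ (∑ j ∈ Finset.Icc 2 (n - 1),
            ‖(meshTau T r N j / 2) • (f (meshT T r N (j - 1)) + f (meshT T r N j)) -
              ∫ s in (meshT T r N (j-1))..(meshT T r N j), f s‖) +
          (K₂ * (n:ℝ)^(β-2) * (N:ℝ)^(-β)) := add_le_add (norm_sum_le _ _) hR
      _ ≤ (∑ j ∈ Finset.Icc 2 (n - 1), K₁ * (j:ℝ)^(β-3) * (N:ℝ)^(-β)) +
          K₂ * (n:ℝ)^(β-2) * (N:ℝ)^(-β) := by
          apply add_le_add_left (Finset.sum_le_sum hEj)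
      _ = K₁ * S * (N:ℝ)^(-β) + K₂ * (n:ℝ)^(β-2) * (N:ℝ)^(-β) := by
          rw [hSdef, Finset.mul_sum, Finset.sum_mul]
  constructor
  · intro hne
    rcases lt_or_gt_of_ne hne with hlt | hgt
    · -- β < 2
      rw [min_eq_left hlt.le]
      have hS : S ≤ 1/(2-β) := by
        have h := sum_rpow_lt (β-3) (by linarith) (n-1)
        rw [show β-3+1 = β-2 by ring, show -(β-2) = 2-β by ring] at h
        have h3 : (0:ℝ) ≤ ((n-1:ℕ):ℝ)^(β-2) := Real.rpow_nonneg (Nat.cast_nonneg _) _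
        calc S ≤ (1 - ((n-1:ℕ):ℝ)^(β-2))/(2-β) := h
          _ ≤ 1/(2-β) := by
              apply div_le_div_of_nonneg_right ?_ (by linarith)
              linarith
      have hn1 : (n:ℝ)^(β-2) ≤ 1 :=
        Real.rpow_le_one_of_one_le_of_nonpos (by exact_mod_cast (by omega : 1 ≤ n))
          (by linarith)
      have habs : |2-β|⁻¹ = 1/(2-β) := by
        rw [abs_of_pos (by linarith : (0:ℝ) < 2-β), one_div]
      have hCge : K₁*(1/(2-β)) + K₂ ≤ C := by
        rw [hCdef, ← habs]
        nlinarith [hK₁.le, hD]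
      calc ‖(∑ j ∈ Finset.Icc 2 (n - 1),
          (meshTau T r N j / 2) • (f (meshT T r N (j - 1)) + f (meshT T r N j))) +
          ((1 - σ) * meshTau T r N n) • f (meshT T r N (n - 1)) -
          ∫ s in (meshT T r N 1)..(meshTSig T r σ N n), f s‖
          ≤ K₁ * S * (N:ℝ)^(-β) + K₂ * (n:ℝ)^(β-2) * (N:ℝ)^(-β) := hmaster
        _ ≤ K₁ * (1/(2-β)) * (N:ℝ)^(-β) + K₂ * 1 * (N:ℝ)^(-β) := by
            apply add_le_add
            · apply mul_le_mul_of_nonneg_right _ hNβ.le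
              exact mul_le_mul_of_nonneg_left hS hK₁.le
            · apply mul_le_mul_of_nonneg_right _ hNβ.le
              exact mul_le_mul_of_nonneg_left hn1 hK₂.le
        _ = (K₁ * (1/(2-β)) + K₂) * (N:ℝ)^(-β) := by ring
        _ ≤ C * (N:ℝ)^(-β) := mul_le_mul_of_nonneg_right hCge hNβ.le
    · -- β > 2
      rw [min_eq_right hgt.le]
      have hβ2 : (0:ℝ) < β - 2 := by linarith
      have hcastn1 : ((n-1:ℕ):ℝ) ≤ (N:ℝ) := by exact_mod_cast (by omega : n-1 ≤ N)
      have hS : S ≤ 2^(max (β-3) 0)/(β-2) * (N:ℝ)^(β-2) := by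
        have h := sum_rpow_gt (β-3) (by linarith) (n-1)
        rw [show β-3+1 = β-2 by ring] at h
        calc S ≤ 2^(max (β-3) 0)/(β-2) * ((n-1:ℕ):ℝ)^(β-2) := h
          _ ≤ 2^(max (β-3) 0)/(β-2) * (N:ℝ)^(β-2) := by
              apply mul_le_mul_of_nonneg_left _ (by positivity)
              exact Real.rpow_le_rpow (Nat.cast_nonneg _) hcastn1 hβ2.le
      have hnN' : (n:ℝ)^(β-2) ≤ (N:ℝ)^(β-2) :=
        Real.rpow_le_rpow (Nat.cast_nonneg _) (by exact_mod_cast hnN) hβ2.le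
      have hNN : (N:ℝ)^(β-2) * (N:ℝ)^(-β) = (N:ℝ)^(-(2:ℝ)) := by
        rw [← Real.rpow_add hNr]
        congr 1
        ring
      have habs : |β-2|⁻¹ = (β-2)⁻¹ := by rw [abs_of_pos hβ2]
      have hCge : K₁ * (2^(max (β-3) 0)/(β-2)) + K₂ ≤ C := by
        rw [hCdef, div_eq_mul_inv, ← habs]
        nlinarith [hK₁.le, abs_nonneg (2-β), inv_nonneg.mpr (abs_nonneg (2-β))]
      calc ‖(∑ j ∈ Finset.Icc 2 (n - 1),
          (meshTau T r N j / 2) • (f (meshT T r N (j - 1)) + f (meshT T r N j))) +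
          ((1 - σ) * meshTau T r N n) • f (meshT T r N (n - 1)) -
          ∫ s in (meshT T r N 1)..(meshTSig T r σ N n), f s‖
          ≤ K₁ * S * (N:ℝ)^(-β) + K₂ * (n:ℝ)^(β-2) * (N:ℝ)^(-β) := hmaster
        _ ≤ K₁ * (2^(max (β-3) 0)/(β-2) * (N:ℝ)^(β-2)) * (N:ℝ)^(-β) +
            K₂ * (N:ℝ)^(β-2) * (N:ℝ)^(-β) := by
            apply add_le_add
            · apply mul_le_mul_of_nonneg_right _ hNβ.le
              exact mul_le_mul_of_nonneg_left hS hK₁.le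
            · apply mul_le_mul_of_nonneg_right _ hNβ.le
              exact mul_le_mul_of_nonneg_left hnN' hK₂.le
        _ = (K₁ * (2^(max (β-3) 0)/(β-2)) + K₂) * ((N:ℝ)^(β-2) * (N:ℝ)^(-β)) := by ring
        _ = (K₁ * (2^(max (β-3) 0)/(β-2)) + K₂) * (N:ℝ)^(-(2:ℝ)) := by rw [hNN]
        _ ≤ C * (N:ℝ)^(-(2:ℝ)) :=
            mul_le_mul_of_nonneg_right hCge (Real.rpow_pos_of_pos hNr _).le
  · intro heq
    have h3 : β - 3 = -1 := by rw [heq]; norm_num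
    have hS : S ≤ Real.log N := by
      have h := sum_rpow_eq (n-1) (by omega)
      calc S = ∑ j ∈ Finset.Icc 2 (n-1), (j:ℝ)^(-1:ℝ) := by
            rw [hSdef]; exact Finset.sum_congr rfl fun j _ => by rw [h3]
        _ ≤ Real.log ((n-1:ℕ):ℝ) := h
        _ ≤ Real.log N := by
            apply Real.log_le_log (by exact_mod_cast (by omega : 0 < n-1))
            exact_mod_cast (by omega : n-1 ≤ N)
    have h2' : (n:ℝ)^(β-2) = 1 := by
      rw [heq, show (2:ℝ)-2 = 0 by norm_num, Real.rpow_zero]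
    have hNβ2 : -β = -(2:ℝ) := by rw [heq]
    have hlog : 0 ≤ Real.log N := Real.log_nonneg hNr1
    have hP : (0:ℝ) < (N:ℝ)^(-(2:ℝ)) := Real.rpow_pos_of_pos hNr _
    have hK₁C : K₁ ≤ C := by
      rw [hCdef]
      nlinarith [hK₁.le, hK₂.le, hD, abs_nonneg (2-β), inv_nonneg.mpr (abs_nonneg (2-β))]
    have hK₂C : K₂ ≤ C := by
      rw [hCdef]
      nlinarith [hK₁.le, hD, abs_nonneg (2-β), inv_nonneg.mpr (abs_nonneg (2-β))]
    rw [hNβ2, h2'] at hmaster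
    calc ‖(∑ j ∈ Finset.Icc 2 (n - 1),
        (meshTau T r N j / 2) • (f (meshT T r N (j - 1)) + f (meshT T r N j))) +
        ((1 - σ) * meshTau T r N n) • f (meshT T r N (n - 1)) -
        ∫ s in (meshT T r N 1)..(meshTSig T r σ N n), f s‖
        ≤ K₁ * S * (N:ℝ)^(-(2:ℝ)) + K₂ * 1 * (N:ℝ)^(-(2:ℝ)) := hmaster
      _ ≤ C * (N:ℝ)^(-(2:ℝ)) * (1 + Real.log N) := by
          nlinarith [mul_le_mul_of_nonneg_right hS hP.le, hK₁.le, hK₂.le,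
            mul_le_mul_of_nonneg_right hK₁C (mul_nonneg hP.le hlog),
            mul_le_mul_of_nonneg_right hK₂C hP.le, hSnn,
            mul_le_mul_of_nonneg_left (mul_le_mul_of_nonneg_right hS hP.le) hK₁.le]
end

section
/- For the graded mesh t_n = T(n/N)^r with steps τ_n = t_n − t_{n−1}, and for 0 < α < 1, there exists a constant C depending only on r, α, T such that for every n with 2 ≤ n ≤ N both Σ_{j=⌊n/2⌋}^{n−2} τ_{j+1}³ t_j^{α−2} ≤ C N^{−r(1+α)} n^{r(1+α)−2} and τ_n² t_{n−1}^{α−1} ≤ C N^{−r(1+α)} n^{r(1+α)−2} hold (the sum being zero when ⌊n/2⌋ > n−2). -/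
/-- Mean-value type bound: `b^r - a^r ≤ r b^{r-1} (b - a)` for `0 ≤ a ≤ b`, `r ≥ 1`. -/
lemma rpow_sub_rpow_le_aux {r a b : ℝ} (hr : 1 ≤ r) (ha : 0 ≤ a) (hab : a ≤ b) :
    b ^ r - a ^ r ≤ r * b ^ (r - 1) * (b - a) := by
  have hb : 0 ≤ b := ha.trans hab
  rcases hb.eq_or_lt with h | hb
  · have ha0 : a = 0 := le_antisymm (hab.trans h.ge) ha
    rw [← h, ha0]
    simp
  · set s : ℝ := a / b - 1 with hs_def
    have hs : -1 ≤ s := by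
      have : 0 ≤ a / b := div_nonneg ha hb.le
      simp only [hs_def]; linarith
    have h1 := one_add_mul_self_le_rpow_one_add hs hr
    have h2 : (1 : ℝ) + s = a / b := by rw [hs_def]; ring
    rw [h2, Real.div_rpow ha hb.le] at h1
    have hbr : 0 < b ^ r := Real.rpow_pos_of_pos hb r
    have h4 : (1 + r * s) * b ^ r ≤ a ^ r := by
      rw [← le_div_iff₀ hbr]; exact h1
    have h5 : b ^ r = b ^ (r - 1) * b := by
      rw [← Real.rpow_add_one hb.ne' (r - 1)]; ring_nf
    have h6 : b ^ r * (a / b) = b ^ (r - 1) * a := by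
      rw [h5]; field_simp
    have h7 : (1 + r * s) * b ^ r = b ^ r + r * (b ^ r * (a / b)) - r * b ^ r := by
      rw [hs_def]; ring
    rw [h7, h6] at h4
    have h8 : r * b ^ (r - 1) * (b - a) = r * b ^ r - r * (b ^ (r - 1) * a) := by
      rw [h5]; ring
    rw [h8]; linarith

lemma meshTau_nonneg {T r : ℝ} (hT : 0 < T) (hr : 1 ≤ r) (N n : ℕ) :
    0 ≤ meshTau T r N n := by
  unfold meshTau meshT
  have hbase : ((n - 1 : ℕ) : ℝ) / N ≤ (n : ℝ) / N := by
    rw [div_eq_mul_inv, div_eq_mul_inv]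
    exact mul_le_mul_of_nonneg_right (Nat.cast_le.mpr (Nat.sub_le n 1))
      (inv_nonneg.mpr (Nat.cast_nonneg N))
  have h := Real.rpow_le_rpow (div_nonneg (Nat.cast_nonneg _) (Nat.cast_nonneg _))
    hbase (by linarith : (0:ℝ) ≤ r)
  have h2 := mul_le_mul_of_nonneg_left h hT.le
  linarith

lemma meshTau_le {T r : ℝ} (hT : 0 < T) (hr : 1 ≤ r) {N n : ℕ} (hN : 1 ≤ N) (hn : 1 ≤ n) :
    meshTau T r N n ≤ T * r * ((n : ℝ) / N) ^ (r - 1) * (1 / N) := by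
  have hN0 : (0:ℝ) < N := by exact_mod_cast hN
  have hn1 : (1:ℝ) ≤ (n:ℝ) := by exact_mod_cast hn
  have hc : ((n - 1 : ℕ) : ℝ) = (n : ℝ) - 1 := by
    rw [Nat.cast_sub hn, Nat.cast_one]
  set a : ℝ := ((n:ℝ) - 1) / N with ha_def
  set b : ℝ := (n:ℝ) / N with hb_def
  have ha : 0 ≤ a := by
    apply div_nonneg (by linarith) hN0.le
  have hab : a ≤ b := by
    rw [ha_def, hb_def, div_eq_mul_inv, div_eq_mul_inv]
    exact mul_le_mul_of_nonneg_right (by linarith) (inv_nonneg.mpr hN0.le)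
  have hba : b - a = 1 / N := by
    rw [ha_def, hb_def, div_sub_div_same]; ring_nf
  have key := rpow_sub_rpow_le_aux hr ha hab
  rw [hba] at key
  unfold meshTau meshT
  rw [hc]
  have h2 := mul_le_mul_of_nonneg_left key hT.le
  have h3 : T * (r * b ^ (r - 1) * (1 / ↑N)) = T * r * b ^ (r - 1) * (1 / ↑N) := by ring
  linarith

set_option maxHeartbeats 2000000 in
/-- For the graded mesh and `0 < α < 1`, there is `C = C(r, α, T)` such that for every
`2 ≤ n ≤ N` both `Σ_{j=⌊n/2⌋}^{n-2} τ_{j+1}³ t_j^{α-2} ≤ C N^{-r(1+α)} n^{r(1+α)-2}`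
and `τ_n² t_{n-1}^{α-1} ≤ C N^{-r(1+α)} n^{r(1+α)-2}` hold. -/
theorem stmt15 (T r α : ℝ) (hT : 0 < T) (hr : 1 ≤ r) (hα0 : 0 < α) (hα1 : α < 1) :
    ∃ C : ℝ, 0 < C ∧ ∀ N : ℕ, 2 ≤ N → ∀ n : ℕ, 2 ≤ n → n ≤ N →
      (∑ j ∈ Finset.Icc (n / 2) (n - 2),
          (meshTau T r N (j + 1)) ^ 3 * (meshT T r N j) ^ (α - 2)) ≤
        C * (N : ℝ) ^ (-(r * (1 + α))) * (n : ℝ) ^ (r * (1 + α) - 2) ∧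
      (meshTau T r N n) ^ 2 * (meshT T r N (n - 1)) ^ (α - 1) ≤
        C * (N : ℝ) ^ (-(r * (1 + α))) * (n : ℝ) ^ (r * (1 + α) - 2) := by
  have hr0 : (0:ℝ) < r := by linarith
  set e : ℝ := r * (1 + α) with he_def
  have he1 : 1 ≤ e := by nlinarith
  set K1 : ℝ := T ^ (1 + α) * r ^ 3 * 2 ^ (3 * r) * 16 with hK1_def
  set K2 : ℝ := T ^ (1 + α) * r ^ 2 * 2 ^ r with hK2_def
  have hTpa : 0 < T ^ (1 + α) := Real.rpow_pos_of_pos hT _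
  have h23r : (0:ℝ) < 2 ^ (3 * r) := Real.rpow_pos_of_pos two_pos _
  have h2r : (0:ℝ) < 2 ^ r := Real.rpow_pos_of_pos two_pos _
  have hK1 : 0 < K1 := by positivity
  have hK2 : 0 < K2 := by positivity
  refine ⟨K1 + K2, by positivity, ?_⟩
  intro N hN n hn2 hnN
  have hN1 : 1 ≤ N := by omega
  have hN0 : (0:ℝ) < N := by exact_mod_cast hN1
  have hn0 : (0:ℝ) < n := by positivity
  have hn1 : (1:ℝ) ≤ (n:ℝ) := by exact_mod_cast (by omega : 1 ≤ n)
  have hn2' : (2:ℝ) ≤ (n:ℝ) := by exact_mod_cast hn2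
  have hNe : (0:ℝ) < (N:ℝ) ^ (-e) := Real.rpow_pos_of_pos hN0 _
  have hne2 : (0:ℝ) < (n:ℝ) ^ (e - 2) := Real.rpow_pos_of_pos hn0 _
  constructor
  · -- sum bound
    set B : ℝ := K1 * ((N:ℝ) ^ (-e) * (n:ℝ) ^ (e - 3)) with hB_def
    have hne3 : (0:ℝ) < (n:ℝ) ^ (e - 3) := Real.rpow_pos_of_pos hn0 _
    have hB0 : 0 ≤ B := by positivity
    have hterm : ∀ j ∈ Finset.Icc (n / 2) (n - 2),
        (meshTau T r N (j + 1)) ^ 3 * (meshT T r N j) ^ (α - 2) ≤ B := by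
      intro j hj
      rw [Finset.mem_Icc] at hj
      have hj1 : 1 ≤ j := by omega
      have hjn : j ≤ n := by omega
      have h4j : n ≤ 4 * j := by omega
      have hj1' : (1:ℝ) ≤ (j:ℝ) := by exact_mod_cast hj1
      have hj0 : (0:ℝ) < (j:ℝ) := by linarith
      have hjn' : (j:ℝ) ≤ (n:ℝ) := by exact_mod_cast hjn
      have h4j' : (n:ℝ) ≤ 4 * (j:ℝ) := by exact_mod_cast h4j
      set P : ℝ := (j:ℝ) / N with hP_def
      set Q : ℝ := ((j:ℝ) + 1) / N with hQ_def
      have hP0 : 0 < P := div_pos hj0 hN0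
      have hQ0 : 0 < Q := div_pos (by linarith) hN0
      -- tau bound
      have htau : meshTau T r N (j + 1) ≤ T * r * Q ^ (r - 1) * (1 / N) := by
        have h := meshTau_le hT hr hN1 (by omega : 1 ≤ j + 1) (N := N)
        have hc : ((j + 1 : ℕ) : ℝ) = (j:ℝ) + 1 := by push_cast; ring
        rwa [hc] at h
      set A : ℝ := T * r * Q ^ (r - 1) * (1 / N) with hA_def
      have hQr1 : 0 < Q ^ (r - 1) := Real.rpow_pos_of_pos hQ0 _
      have hA0 : 0 ≤ A := by positivity
      have htau3 : (meshTau T r N (j + 1)) ^ 3 ≤ A ^ 3 :=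
        pow_le_pow_left₀ (meshTau_nonneg hT hr N (j + 1)) htau 3
      have htj : meshT T r N j = T * P ^ r := rfl
      have htjpos : 0 < meshT T r N j := by rw [htj]; positivity
      have step1 : (meshTau T r N (j + 1)) ^ 3 * (meshT T r N j) ^ (α - 2) ≤
          A ^ 3 * (meshT T r N j) ^ (α - 2) :=
        mul_le_mul_of_nonneg_right htau3 (Real.rpow_nonneg htjpos.le _)
      -- expand A^3
      have e2 : (Q ^ (r - 1)) ^ (3:ℕ) = Q ^ ((r - 1) * 3) := by
        rw [← Real.rpow_natCast (Q ^ (r - 1)) 3, ← Real.rpow_mul hQ0.le]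
        norm_num
      have e1 : A ^ 3 = T ^ 3 * r ^ 3 * Q ^ ((r - 1) * 3) * (1 / (N:ℝ)) ^ 3 := by
        rw [hA_def, ← e2]; ring
      -- bound Q power by P power
      have hQP : Q ≤ 2 * P := by
        rw [hQ_def, hP_def]
        rw [div_le_iff₀ hN0]
        have : 2 * ((j:ℝ) / N) * N = 2 * (j:ℝ) := by field_simp
        rw [this]; linarith
      have bQ : Q ^ ((r - 1) * 3) ≤ 2 ^ (3 * r) * P ^ ((r - 1) * 3) := by
        calc Q ^ ((r - 1) * 3) ≤ (2 * P) ^ ((r - 1) * 3) :=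
              Real.rpow_le_rpow hQ0.le hQP (mul_nonneg (by linarith) (by norm_num))
          _ = 2 ^ ((r - 1) * 3) * P ^ ((r - 1) * 3) :=
              Real.mul_rpow (by norm_num) hP0.le
          _ ≤ 2 ^ (3 * r) * P ^ ((r - 1) * 3) := by
              apply mul_le_mul_of_nonneg_right
                (Real.rpow_le_rpow_of_exponent_le one_le_two (by linarith))
                (Real.rpow_nonneg hP0.le _)
      -- expand meshT power
      have eT : (meshT T r N j) ^ (α - 2) = T ^ (α - 2) * P ^ (r * (α - 2)) := by
        rw [htj, Real.mul_rpow hT.le (Real.rpow_nonneg hP0.le _), ← Real.rpow_mul hP0.le]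
      -- combine P powers
      have cP : P ^ ((r - 1) * 3) * P ^ (r * (α - 2)) = P ^ (e - 3) := by
        rw [← Real.rpow_add hP0]; congr 1; rw [he_def]; ring
      have cT : T ^ (3:ℕ) * T ^ (α - 2) = T ^ (1 + α) := by
        rw [← Real.rpow_natCast T 3, ← Real.rpow_add hT]
        congr 1; push_cast; ring
      have cP2 : P ^ (e - 3) = (j:ℝ) ^ (e - 3) * (N:ℝ) ^ (-(e - 3)) := by
        rw [Real.rpow_neg hN0.le, hP_def, Real.div_rpow (Nat.cast_nonneg j) hN0.le,
          div_eq_mul_inv]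
      have cN : ((1:ℝ) / (N:ℝ)) ^ (3:ℕ) = (N:ℝ) ^ (-(3:ℝ)) := by
        rw [one_div, inv_pow, ← Real.rpow_natCast (N:ℝ) 3, ← Real.rpow_neg hN0.le]
        norm_num
      have cN2 : (N:ℝ) ^ (-(e - 3)) * (N:ℝ) ^ (-(3:ℝ)) = (N:ℝ) ^ (-e) := by
        rw [← Real.rpow_add hN0]; congr 1; ring
      -- bound j power by n power
      have jn : (j:ℝ) ^ (e - 3) ≤ 16 * (n:ℝ) ^ (e - 3) := by
        rcases le_or_gt 0 (e - 3) with h | h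
        · have h1 : (j:ℝ) ^ (e - 3) ≤ (n:ℝ) ^ (e - 3) :=
            Real.rpow_le_rpow hj0.le hjn' h
          linarith
        · have h1 : (j:ℝ) ^ (e - 3) ≤ ((n:ℝ) / 4) ^ (e - 3) :=
            Real.rpow_le_rpow_of_nonpos (by positivity) (by linarith) h.le
          have h2 : ((n:ℝ) / 4) ^ (e - 3) = (n:ℝ) ^ (e - 3) * (4:ℝ) ^ (-(e - 3)) := by
            rw [Real.rpow_neg (by norm_num : (0:ℝ) ≤ 4),
              Real.div_rpow hn0.le (by norm_num : (0:ℝ) ≤ 4), div_eq_mul_inv]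
          have h3 : (4:ℝ) ^ (-(e - 3)) ≤ (4:ℝ) ^ (2:ℝ) :=
            Real.rpow_le_rpow_of_exponent_le (by norm_num) (by linarith)
          have h4 : (4:ℝ) ^ (2:ℝ) = 16 := by
            rw [show (2:ℝ) = ((2:ℕ):ℝ) by norm_num, Real.rpow_natCast]; norm_num
          calc (j:ℝ) ^ (e - 3) ≤ (n:ℝ) ^ (e - 3) * (4:ℝ) ^ (-(e - 3)) := by rw [← h2]; exact h1
            _ ≤ (n:ℝ) ^ (e - 3) * 16 := by
                apply mul_le_mul_of_nonneg_left _ hne3.le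
                rw [← h4]; exact h3
            _ = 16 * (n:ℝ) ^ (e - 3) := by ring
      -- put things together
      calc (meshTau T r N (j + 1)) ^ 3 * (meshT T r N j) ^ (α - 2)
          ≤ A ^ 3 * (meshT T r N j) ^ (α - 2) := step1
        _ = T ^ 3 * r ^ 3 * Q ^ ((r - 1) * 3) * (1 / (N:ℝ)) ^ 3 *
              (T ^ (α - 2) * P ^ (r * (α - 2))) := by rw [e1, eT]
        _ ≤ T ^ 3 * r ^ 3 * (2 ^ (3 * r) * P ^ ((r - 1) * 3)) * (1 / (N:ℝ)) ^ 3 *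
              (T ^ (α - 2) * P ^ (r * (α - 2))) := by
            have hnn : (0:ℝ) ≤ T ^ 3 * r ^ 3 := by positivity
            have hnn2 : (0:ℝ) ≤ (1 / (N:ℝ)) ^ 3 := by positivity
            have hnn3 : (0:ℝ) ≤ T ^ (α - 2) * P ^ (r * (α - 2)) :=
              mul_nonneg (Real.rpow_nonneg hT.le _) (Real.rpow_nonneg hP0.le _)
            exact mul_le_mul_of_nonneg_right
              (mul_le_mul_of_nonneg_right (mul_le_mul_of_nonneg_left bQ hnn) hnn2) hnn3
        _ = (T ^ (3:ℕ) * T ^ (α - 2)) * r ^ 3 * 2 ^ (3 * r) *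
              (P ^ ((r - 1) * 3) * P ^ (r * (α - 2))) * (1 / (N:ℝ)) ^ 3 := by ring
        _ = T ^ (1 + α) * r ^ 3 * 2 ^ (3 * r) *
              ((j:ℝ) ^ (e - 3) * (N:ℝ) ^ (-(e - 3))) * (N:ℝ) ^ (-(3:ℝ)) := by
            rw [cT, cP, cP2, cN]
        _ = T ^ (1 + α) * r ^ 3 * 2 ^ (3 * r) * (j:ℝ) ^ (e - 3) *
              ((N:ℝ) ^ (-(e - 3)) * (N:ℝ) ^ (-(3:ℝ))) := by ring
        _ = T ^ (1 + α) * r ^ 3 * 2 ^ (3 * r) * (j:ℝ) ^ (e - 3) * (N:ℝ) ^ (-e) := by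
            rw [cN2]
        _ ≤ T ^ (1 + α) * r ^ 3 * 2 ^ (3 * r) * (16 * (n:ℝ) ^ (e - 3)) * (N:ℝ) ^ (-e) := by
            have hnn : (0:ℝ) ≤ T ^ (1 + α) * r ^ 3 * 2 ^ (3 * r) := by positivity
            exact mul_le_mul_of_nonneg_right (mul_le_mul_of_nonneg_left jn hnn) hNe.le
        _ = B := by rw [hB_def, hK1_def]; ring
    have hsum := Finset.sum_le_card_nsmul _ _ _ hterm
    have hcard : (Finset.Icc (n / 2) (n - 2)).card ≤ n := by
      rw [Nat.card_Icc]; omega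
    have hcard' : ((Finset.Icc (n / 2) (n - 2)).card : ℝ) ≤ (n:ℝ) := by exact_mod_cast hcard
    have hnB : ((Finset.Icc (n / 2) (n - 2)).card : ℝ) * B ≤ (n:ℝ) * B :=
      mul_le_mul_of_nonneg_right hcard' hB0
    have hmul : (n:ℝ) * B = K1 * (N:ℝ) ^ (-e) * (n:ℝ) ^ (e - 2) := by
      have h1 : (n:ℝ) ^ (e - 2) = (n:ℝ) * (n:ℝ) ^ (e - 3) := by
        rw [show e - 2 = 1 + (e - 3) by ring, Real.rpow_add hn0, Real.rpow_one]
      rw [hB_def, h1]; ring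
    have : (∑ j ∈ Finset.Icc (n / 2) (n - 2),
        (meshTau T r N (j + 1)) ^ 3 * (meshT T r N j) ^ (α - 2)) ≤
        K1 * (N:ℝ) ^ (-e) * (n:ℝ) ^ (e - 2) := by
      calc (∑ j ∈ Finset.Icc (n / 2) (n - 2),
          (meshTau T r N (j + 1)) ^ 3 * (meshT T r N j) ^ (α - 2))
          ≤ (Finset.Icc (n / 2) (n - 2)).card • B := hsum
        _ = ((Finset.Icc (n / 2) (n - 2)).card : ℝ) * B := by rw [nsmul_eq_mul]
        _ ≤ (n:ℝ) * B := hnB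
        _ = K1 * (N:ℝ) ^ (-e) * (n:ℝ) ^ (e - 2) := hmul
    calc (∑ j ∈ Finset.Icc (n / 2) (n - 2),
        (meshTau T r N (j + 1)) ^ 3 * (meshT T r N j) ^ (α - 2))
        ≤ K1 * (N:ℝ) ^ (-e) * (n:ℝ) ^ (e - 2) := this
      _ ≤ (K1 + K2) * (N:ℝ) ^ (-e) * (n:ℝ) ^ (e - 2) :=
          mul_le_mul_of_nonneg_right
            (mul_le_mul_of_nonneg_right (by linarith) hNe.le) hne2.le
  · -- second bound
    set M : ℝ := (n:ℝ) / N with hM_def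
    have hM0 : 0 < M := div_pos hn0 hN0
    have htau : meshTau T r N n ≤ T * r * M ^ (r - 1) * (1 / N) :=
      meshTau_le hT hr hN1 (by omega)
    set A : ℝ := T * r * M ^ (r - 1) * (1 / N) with hA_def
    have hMr1 : 0 < M ^ (r - 1) := Real.rpow_pos_of_pos hM0 _
    have hA0 : 0 ≤ A := by positivity
    have htau2 : (meshTau T r N n) ^ 2 ≤ A ^ 2 :=
      pow_le_pow_left₀ (meshTau_nonneg hT hr N n) htau 2
    -- lower bound for meshT (n-1)
    have hc : ((n - 1 : ℕ) : ℝ) = (n : ℝ) - 1 := by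
      rw [Nat.cast_sub (by omega), Nat.cast_one]
    have htlow : T * (((n:ℝ) / 2) / N) ^ r ≤ meshT T r N (n - 1) := by
      unfold meshT
      rw [hc]
      apply mul_le_mul_of_nonneg_left _ hT.le
      apply Real.rpow_le_rpow (by positivity) _ (by linarith)
      rw [div_eq_mul_inv, div_eq_mul_inv]
      exact mul_le_mul_of_nonneg_right (by linarith) (inv_nonneg.mpr hN0.le)
    have htlowpos : 0 < T * (((n:ℝ) / 2) / N) ^ r := by positivity
    have ht1 : (meshT T r N (n - 1)) ^ (α - 1) ≤ (T * (((n:ℝ) / 2) / N) ^ r) ^ (α - 1) :=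
      Real.rpow_le_rpow_of_nonpos htlowpos htlow (by linarith)
    -- expand
    have hMdiv : ((n:ℝ) / 2) / N = M / 2 := by rw [hM_def]; ring
    have eT2 : (T * (((n:ℝ) / 2) / N) ^ r) ^ (α - 1) =
        T ^ (α - 1) * (M / 2) ^ (r * (α - 1)) := by
      rw [hMdiv, Real.mul_rpow hT.le (Real.rpow_nonneg (by positivity) _),
        ← Real.rpow_mul (by positivity)]
    have eM2 : (M / 2) ^ (r * (α - 1)) = M ^ (r * (α - 1)) * (2:ℝ) ^ (-(r * (α - 1))) := by
      rw [Real.rpow_neg (by norm_num : (0:ℝ) ≤ 2),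
        Real.div_rpow hM0.le (by norm_num : (0:ℝ) ≤ 2), div_eq_mul_inv]
    have b2 : (2:ℝ) ^ (-(r * (α - 1))) ≤ 2 ^ r :=
      Real.rpow_le_rpow_of_exponent_le one_le_two (by nlinarith)
    have eA2 : A ^ 2 = T ^ 2 * r ^ 2 * M ^ ((r - 1) * 2) * (1 / (N:ℝ)) ^ 2 := by
      have e2 : (M ^ (r - 1)) ^ (2:ℕ) = M ^ ((r - 1) * 2) := by
        rw [← Real.rpow_natCast (M ^ (r - 1)) 2, ← Real.rpow_mul hM0.le]
        norm_num
      rw [hA_def, ← e2]; ring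
    have cM : M ^ ((r - 1) * 2) * M ^ (r * (α - 1)) = M ^ (e - 2) := by
      rw [← Real.rpow_add hM0]; congr 1; rw [he_def]; ring
    have cT : T ^ (2:ℕ) * T ^ (α - 1) = T ^ (1 + α) := by
      rw [← Real.rpow_natCast T 2, ← Real.rpow_add hT]
      congr 1; push_cast; ring
    have cM2 : M ^ (e - 2) = (n:ℝ) ^ (e - 2) * (N:ℝ) ^ (-(e - 2)) := by
      rw [Real.rpow_neg hN0.le, hM_def, Real.div_rpow hn0.le hN0.le, div_eq_mul_inv]
    have cN : ((1:ℝ) / (N:ℝ)) ^ (2:ℕ) = (N:ℝ) ^ (-(2:ℝ)) := by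
      rw [one_div, inv_pow, ← Real.rpow_natCast (N:ℝ) 2, ← Real.rpow_neg hN0.le]
      norm_num
    have cN2 : (N:ℝ) ^ (-(e - 2)) * (N:ℝ) ^ (-(2:ℝ)) = (N:ℝ) ^ (-e) := by
      rw [← Real.rpow_add hN0]; congr 1; ring
    have hMe : 0 < M ^ (r * (α - 1)) := Real.rpow_pos_of_pos hM0 _
    have hTa1 : 0 < T ^ (α - 1) := Real.rpow_pos_of_pos hT _
    calc (meshTau T r N n) ^ 2 * (meshT T r N (n - 1)) ^ (α - 1)
        ≤ A ^ 2 * (meshT T r N (n - 1)) ^ (α - 1) := by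
          apply mul_le_mul_of_nonneg_right htau2
          exact Real.rpow_nonneg (by unfold meshT; positivity) _
      _ ≤ A ^ 2 * (T ^ (α - 1) * (M ^ (r * (α - 1)) * (2:ℝ) ^ (-(r * (α - 1))))) := by
          apply mul_le_mul_of_nonneg_left _ (by positivity)
          calc (meshT T r N (n - 1)) ^ (α - 1)
              ≤ (T * (((n:ℝ) / 2) / N) ^ r) ^ (α - 1) := ht1
            _ = T ^ (α - 1) * (M ^ (r * (α - 1)) * (2:ℝ) ^ (-(r * (α - 1)))) := by
                rw [eT2, eM2]
      _ ≤ A ^ 2 * (T ^ (α - 1) * (M ^ (r * (α - 1)) * 2 ^ r)) := by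
          apply mul_le_mul_of_nonneg_left _ (by positivity)
          apply mul_le_mul_of_nonneg_left _ hTa1.le
          exact mul_le_mul_of_nonneg_left b2 hMe.le
      _ = (T ^ (2:ℕ) * T ^ (α - 1)) * r ^ 2 * 2 ^ r *
            (M ^ ((r - 1) * 2) * M ^ (r * (α - 1))) * (1 / (N:ℝ)) ^ 2 := by
          rw [eA2]; ring
      _ = T ^ (1 + α) * r ^ 2 * 2 ^ r *
            ((n:ℝ) ^ (e - 2) * (N:ℝ) ^ (-(e - 2))) * (N:ℝ) ^ (-(2:ℝ)) := by
          rw [cT, cM, cM2, cN]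
      _ = T ^ (1 + α) * r ^ 2 * 2 ^ r * (n:ℝ) ^ (e - 2) *
            ((N:ℝ) ^ (-(e - 2)) * (N:ℝ) ^ (-(2:ℝ))) := by ring
      _ = K2 * (N:ℝ) ^ (-e) * (n:ℝ) ^ (e - 2) := by rw [cN2, hK2_def]; ring
      _ ≤ (K1 + K2) * (N:ℝ) ^ (-e) * (n:ℝ) ^ (e - 2) :=
          mul_le_mul_of_nonneg_right
            (mul_le_mul_of_nonneg_right (by linarith) hNe.le) hne2.le
end

section
/- For the graded mesh t_n = T(n/N)^r with steps τ_n = t_n − t_{n−1}, and for 0 < α < 1, one has τ_m^{α/2} Σ_{j=1}^{m} τ_j^{1−α/2} ≤ r T for every m with 1 ≤ m ≤ N. -/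
/-- Increments of a convex function (with equal step) are monotone. -/
lemma convex_incr_mono {f : ℝ → ℝ} (hf : ConvexOn ℝ (Set.Ici 0) f) {x y c : ℝ}
    (hx : 0 ≤ x) (hxy : x ≤ y) (hc : 0 < c) :
    f (x + c) - f x ≤ f (y + c) - f y := by
  rcases eq_or_lt_of_le hxy with rfl | hlt
  · exact le_rfl
  have hy : (0:ℝ) ≤ y := hx.trans hxy
  have hxm : x ∈ Set.Ici (0:ℝ) := hx
  have hym : y ∈ Set.Ici (0:ℝ) := hy
  have hxcm : x + c ∈ Set.Ici (0:ℝ) := by simp only [Set.mem_Ici]; linarith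
  have hycm : y + c ∈ Set.Ici (0:ℝ) := by simp only [Set.mem_Ici]; linarith
  have s1 : (f (x + c) - f x) / ((x + c) - x) ≤ (f (y + c) - f x) / ((y + c) - x) :=
    hf.secant_mono hxm hxcm hycm (by linarith) (by linarith) (by linarith)
  have s2 : (f x - f (y + c)) / (x - (y + c)) ≤ (f y - f (y + c)) / (y - (y + c)) :=
    hf.secant_mono hycm hxm hym (by intro h; linarith) (by intro h; linarith) hxy
  have e2 : (f x - f (y + c)) / (x - (y + c)) = (f (y + c) - f x) / ((y + c) - x) := by
    rw [← neg_div_neg_eq]; ring_nf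
  have e3 : (f y - f (y + c)) / (y - (y + c)) = (f (y + c) - f y) / c := by
    rw [← neg_div_neg_eq]; ring_nf
  rw [e2, e3] at s2
  have e1 : (x + c) - x = c := by ring
  rw [e1] at s1
  have := s1.trans s2
  calc f (x + c) - f x = (f (x + c) - f x) / c * c := by field_simp
    _ ≤ (f (y + c) - f y) / c * c := by
        apply mul_le_mul_of_nonneg_right this hc.le
    _ = f (y + c) - f y := by field_simp

/-- For the graded mesh and `0 < α < 1`,
`τ_m^{α/2} Σ_{j=1}^{m} τ_j^{1-α/2} ≤ r T` for every `1 ≤ m ≤ N`. -/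
theorem stmt16 (T r α : ℝ) (hT : 0 < T) (hr : 1 ≤ r) (hα0 : 0 < α) (hα1 : α < 1)
    (N : ℕ) (hN : 2 ≤ N) :
    ∀ m : ℕ, 1 ≤ m → m ≤ N →
      (meshTau T r N m) ^ (α / 2) *
        (∑ j ∈ Finset.Icc 1 m, (meshTau T r N j) ^ (1 - α / 2)) ≤ r * T := by
  intro m hm1 hmN
  have hNpos : (0:ℝ) < (N:ℝ) := by positivity
  have hr0 : (0:ℝ) < r := lt_of_lt_of_le one_pos hr
  have hconv : ConvexOn ℝ (Set.Ici 0) (fun x : ℝ => x ^ r) := convexOn_rpow hr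
  -- explicit formula for τ_n when 1 ≤ n
  have htau : ∀ n : ℕ, 1 ≤ n →
      meshTau T r N n = T * (((n:ℝ)/N) ^ r - (((n:ℝ)-1)/N) ^ r) := by
    intro n hn
    have : ((n - 1 : ℕ) : ℝ) = (n:ℝ) - 1 := by
      rw [Nat.cast_sub hn]; norm_num
    simp only [meshTau, meshT, this]; ring
  -- τ_n positive for 1 ≤ n
  have htaupos : ∀ n : ℕ, 1 ≤ n → 0 < meshTau T r N n := by
    intro n hn
    rw [htau n hn]
    have hb : (0:ℝ) ≤ ((n:ℝ)-1)/N := by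
      apply div_nonneg _ hNpos.le
      have : (1:ℝ) ≤ (n:ℝ) := by exact_mod_cast hn
      linarith
    have hab : ((n:ℝ)-1)/N < (n:ℝ)/N := by
      rw [div_lt_div_iff₀ hNpos hNpos]; nlinarith
    have := Real.rpow_lt_rpow hb hab hr0
    nlinarith
  -- τ_j ≤ τ_m for 1 ≤ j ≤ m
  have hmono : ∀ j : ℕ, 1 ≤ j → j ≤ m → meshTau T r N j ≤ meshTau T r N m := by
    intro j hj hjm
    rw [htau j hj, htau m hm1]
    have hj1 : (1:ℝ) ≤ (j:ℝ) := by exact_mod_cast hj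
    have hjm' : (j:ℝ) ≤ (m:ℝ) := by exact_mod_cast hjm
    have key := convex_incr_mono hconv (x := ((j:ℝ)-1)/N) (y := ((m:ℝ)-1)/N)
      (c := 1/N) (div_nonneg (by linarith) hNpos.le)
      (by rw [div_le_div_iff₀ hNpos hNpos]; nlinarith) (by positivity)
    have e1 : ((j:ℝ)-1)/N + 1/N = (j:ℝ)/N := by field_simp; ring
    have e2 : ((m:ℝ)-1)/N + 1/N = (m:ℝ)/N := by field_simp; ring
    rw [e1, e2] at key
    nlinarith
  set τ := meshTau T r N m with hτ
  have hτpos : 0 < τ := htaupos m hm1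
  -- sum bound
  have hsum : (∑ j ∈ Finset.Icc 1 m, (meshTau T r N j) ^ (1 - α / 2))
      ≤ (m:ℝ) * τ ^ (1 - α / 2) := by
    calc (∑ j ∈ Finset.Icc 1 m, (meshTau T r N j) ^ (1 - α / 2))
        ≤ ∑ _j ∈ Finset.Icc 1 m, τ ^ (1 - α / 2) := by
          apply Finset.sum_le_sum
          intro j hj
          simp only [Finset.mem_Icc] at hj
          exact Real.rpow_le_rpow (htaupos j hj.1).le (hmono j hj.1 hj.2) (by linarith)
      _ = (m:ℝ) * τ ^ (1 - α / 2) := by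
          rw [Finset.sum_const, Nat.card_Icc]
          simp [hm1, nsmul_eq_mul]
  have hττ : τ ^ (α / 2) * τ ^ (1 - α / 2) = τ := by
    rw [← Real.rpow_add hτpos]
    norm_num
  -- m * τ ≤ r * T
  have hmτ : (m:ℝ) * τ ≤ r * T := by
    have hm1' : (1:ℝ) ≤ (m:ℝ) := by exact_mod_cast hm1
    have hmpos : (0:ℝ) < (m:ℝ) := by linarith
    have hb : (0:ℝ) ≤ (m:ℝ)/N := by positivity
    -- Bernoulli: 1 - r/m ≤ (1 - 1/m)^r
    have hbern := one_add_mul_self_le_rpow_one_add (s := -(1/(m:ℝ))) (by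
      rw [neg_le, neg_neg]
      apply div_le_one_of_le₀ hm1' hmpos.le) hr
    have h1m : 1/(m:ℝ) ≤ 1 := by rw [div_le_one hmpos]; exact hm1'
    have hfac : ((m:ℝ)-1)/N = ((m:ℝ)/N) * (1 + -(1/(m:ℝ))) := by field_simp; ring
    have hmr : (((m:ℝ)-1)/N) ^ r = ((m:ℝ)/N) ^ r * (1 + -(1/(m:ℝ))) ^ r := by
      rw [hfac, Real.mul_rpow hb (by linarith)]
    have hble : ((m:ℝ)/N) ^ r ≤ 1 := by
      apply Real.rpow_le_one hb _ hr0.le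
      rw [div_le_one hNpos]
      exact_mod_cast hmN
    have hbr0 : (0:ℝ) ≤ ((m:ℝ)/N) ^ r := Real.rpow_nonneg hb r
    rw [hτ, htau m hm1, hmr]
    have step : ((m:ℝ)/N) ^ r - ((m:ℝ)/N) ^ r * (1 + -(1/(m:ℝ))) ^ r
        ≤ ((m:ℝ)/N) ^ r * (r / (m:ℝ)) := by
      have : 1 - (1 + -(1/(m:ℝ))) ^ r ≤ r / (m:ℝ) := by
        have : 1 + r * -(1/(m:ℝ)) = 1 - r / (m:ℝ) := by ring
        nlinarith [hbern]
      nlinarith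
    have : (m:ℝ) * (T * (((m:ℝ)/N) ^ r - ((m:ℝ)/N) ^ r * (1 + -(1/(m:ℝ))) ^ r))
        ≤ (m:ℝ) * (T * (((m:ℝ)/N) ^ r * (r / (m:ℝ)))) := by
      apply mul_le_mul_of_nonneg_left _ hmpos.le
      exact mul_le_mul_of_nonneg_left step hT.le
    refine this.trans ?_
    have : (m:ℝ) * (T * (((m:ℝ)/N) ^ r * (r / (m:ℝ)))) = r * T * (((m:ℝ)/N) ^ r) := by
      field_simp
    rw [this]
    nlinarith [mul_le_mul_of_nonneg_left hble (mul_pos hr0 hT).le]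
  calc τ ^ (α / 2) * (∑ j ∈ Finset.Icc 1 m, (meshTau T r N j) ^ (1 - α / 2))
      ≤ τ ^ (α / 2) * ((m:ℝ) * τ ^ (1 - α / 2)) := by
        apply mul_le_mul_of_nonneg_left hsum (Real.rpow_nonneg hτpos.le _)
    _ = (m:ℝ) * (τ ^ (α / 2) * τ ^ (1 - α / 2)) := by ring
    _ = (m:ℝ) * τ := by rw [hττ]
    _ ≤ r * T := hmτ
end
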